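/- arXiv:1401.1089 — 6 statements merged into one kernel-verified Lean document; each statement's English description precedes it below -/
import Mathlib

section
/- For every nonnegative integer n, the number of derangements of an n-element set equals ∫_0^∞ (t-1)^n e^{-t} dt. -/
open MeasureTheory Set

lemma integrableOn_pow_mul_exp_neg (j : ℕ) :
    IntegrableOn (fun t : ℝ => t ^ j * Real.exp (-t)) (Ioi 0) := by
  have h := Real.GammaIntegral_convergent (s := (j : ℝ) + 1) (by positivity)
  refine h.congr_fun (fun x hx => ?_) measurableSet_Ioi
  rw [add_sub_cancel_right]; dsimp only; rw [Real.rpow_natCast, mul_comm]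

lemma integral_pow_mul_exp_neg (j : ℕ) :
    ∫ t in Ioi (0 : ℝ), t ^ j * Real.exp (-t) = (j.factorial : ℝ) := by
  rw [← Real.Gamma_nat_eq_factorial, Real.Gamma_eq_integral (by positivity)]
  refine setIntegral_congr_fun measurableSet_Ioi (fun x hx => ?_)
  rw [add_sub_cancel_right, Real.rpow_natCast, mul_comm]

theorem numDerangements_eq_integral (n : ℕ) :
    (numDerangements n : ℝ) = ∫ t in Set.Ioi (0 : ℝ), (t - 1) ^ n * Real.exp (-t) := by
  -- expand the binomial
  have hexp : ∀ t : ℝ, (t - 1) ^ n * Real.exp (-t) =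
      ∑ k ∈ Finset.range (n + 1),
        ((-1 : ℝ) ^ (n - k) * (n.choose k : ℝ)) * (t ^ k * Real.exp (-t)) := by
    intro t
    rw [sub_eq_add_neg, add_pow, Finset.sum_mul]
    refine Finset.sum_congr rfl fun k _ => ?_
    ring
  simp_rw [hexp]
  rw [integral_finset_sum _ (fun k _ =>
    ((integrableOn_pow_mul_exp_neg k).const_mul _))]
  simp_rw [integral_const_mul, integral_pow_mul_exp_neg]
  -- now both sides are finite sums
  have hld : (numDerangements n : ℝ) =
      ∑ k ∈ Finset.range (n + 1), (-1 : ℝ) ^ k * ((k + 1).ascFactorial (n - k) : ℝ) := by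
    have := numDerangements_sum n
    have : ((numDerangements n : ℤ) : ℝ) =
        ((∑ k ∈ Finset.range (n + 1),
          (-1 : ℤ) ^ k * ((k + 1).ascFactorial (n - k) : ℤ) : ℤ) : ℝ) := by rw [this]
    push_cast at this
    exact_mod_cast this
  rw [hld, ← Finset.sum_range_reflect]
  simp only [Nat.add_sub_cancel]
  refine Finset.sum_congr rfl fun k hk => ?_
  have hkn : k ≤ n := Nat.lt_succ_iff.mp (Finset.mem_range.mp hk)
  rw [Nat.sub_sub_self hkn]
  have key : (n - k + 1).ascFactorial k = n.choose k * k.factorial := by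
    have h1 : (n - k).factorial * (n - k + 1).ascFactorial k = n.factorial := by
      rw [Nat.factorial_mul_ascFactorial, Nat.sub_add_cancel hkn]
    have h2 : n.choose k * k.factorial * (n - k).factorial = n.factorial :=
      Nat.choose_mul_factorial_mul_factorial hkn
    have hne : (n - k).factorial ≠ 0 := Nat.factorial_ne_zero _
    apply Nat.eq_of_mul_eq_mul_right (Nat.pos_of_ne_zero hne)
    rw [mul_comm ((n-k+1).ascFactorial k) _, h1, h2]
  rw [key]
  push_cast
  ring
end

section
/- Touchard's formula: the number of permutations π of Z/nZ with π(i) ≠ i and π(i) ≠ i+1 (indices mod n) equals Σ_{k=0}^{n} (-1)^k · (2n/(2n-k)) · (2n-k choose k) · (n-k)!, for n ≥ 2. -/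
open Finset


lemma path_count (L : ℕ) : ∀ k a : ℕ,
    (((Finset.Ico a (a + L)).powersetCard k).filter
      (fun S => ∀ x ∈ S, x + 1 ∉ S)).card = (L + 1 - k).choose k := by
  induction L using Nat.strong_induction_on with
  | _ L ih =>
  rcases L with _ | _ | L
  · intro k a
    simp only [Nat.add_zero, Finset.Ico_self]
    rcases k with _ | k
    · rw [Finset.powersetCard_zero, Finset.filter_singleton]
      simp
    · rw [Finset.powersetCard_eq_empty.2 (by simp)]
      simp [Nat.choose_eq_zero_of_lt]
  · intro k a
    have h1 : Finset.Ico a (a + 1) = {a} := by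
      ext x; simp only [Finset.mem_Ico, Finset.mem_singleton]; omega
    rw [h1]
    rcases k with _ | _ | k
    · rw [Finset.powersetCard_zero]
      rw [Finset.filter_singleton]
      simp
    · have : Finset.powersetCard 1 ({a} : Finset ℕ) = {{a}} := by
        simpa using Finset.powersetCard_self ({a} : Finset ℕ)
      rw [this, Finset.filter_singleton]
      simp
    · rw [Finset.powersetCard_eq_empty.2 (by simp)]
      simp [Nat.choose_eq_zero_of_lt]
  · intro k a
    rcases k with _ | k
    · rw [Finset.powersetCard_zero, Finset.filter_singleton]
      simp
    set X := ((Finset.Ico a (a + (L+2))).powersetCard (k+1)).filter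
      (fun S => ∀ x ∈ S, x + 1 ∉ S) with hX
    have hsplit : (X.filter (fun S => a + L + 1 ∉ S)).card
        + (X.filter (fun S => ¬ (a + L + 1 ∉ S))).card = X.card :=
      Finset.card_filter_add_card_filter_not _
    have h1 : X.filter (fun S => a + L + 1 ∉ S)
        = ((Finset.Ico a (a + (L+1))).powersetCard (k+1)).filter
          (fun S => ∀ x ∈ S, x + 1 ∉ S) := by
      ext S
      simp only [hX, Finset.mem_filter, Finset.mem_powersetCard]
      constructor
      · rintro ⟨⟨⟨hsub, hcard⟩, hP⟩, htop⟩
        refine ⟨⟨fun x hx => ?_, hcard⟩, hP⟩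
        have h2 := hsub hx
        have : x ≠ a + L + 1 := fun h => htop (h ▸ hx)
        simp only [Finset.mem_Ico] at h2 ⊢
        omega
      · rintro ⟨⟨hsub, hcard⟩, hP⟩
        have htop : a + L + 1 ∉ S := fun h => by
          have := hsub h; simp only [Finset.mem_Ico] at this; omega
        refine ⟨⟨⟨fun x hx => ?_, hcard⟩, hP⟩, htop⟩
        have := hsub hx; simp only [Finset.mem_Ico] at this ⊢; omega
    have h2 : (X.filter (fun S => ¬ (a + L + 1 ∉ S))).card
        = (((Finset.Ico a (a + L)).powersetCard k).filter
          (fun S => ∀ x ∈ S, x + 1 ∉ S)).card := by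
      refine Finset.card_bij' (fun S _ => S.erase (a + L + 1))
        (fun S _ => insert (a + L + 1) S) ?_ ?_ ?_ ?_
      · rintro S hS
        simp only [hX, Finset.mem_filter, Finset.mem_powersetCard, not_not] at hS
        obtain ⟨⟨⟨hsub, hcard⟩, hP⟩, htop⟩ := hS
        simp only [Finset.mem_filter, Finset.mem_powersetCard]
        refine ⟨⟨fun x hx => ?_, ?_⟩,
          fun x hx hx1 => hP x (Finset.mem_of_mem_erase hx) (Finset.mem_of_mem_erase hx1)⟩
        · have hxS := Finset.mem_of_mem_erase hx
          have hxne := Finset.ne_of_mem_erase hx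
          have hxI := hsub hxS
          simp only [Finset.mem_Ico] at hxI ⊢
          have : x ≠ a + L := by
            intro h
            exact hP x hxS (by rw [h]; exact htop)
          omega
        · rw [Finset.card_erase_of_mem htop, hcard]
          omega
      · rintro S hS
        simp only [Finset.mem_filter, Finset.mem_powersetCard] at hS
        obtain ⟨⟨hsub, hcard⟩, hP⟩ := hS
        have htop : a + L + 1 ∉ S := fun h => by
          have := hsub h; simp only [Finset.mem_Ico] at this; omega
        simp only [hX, Finset.mem_filter, Finset.mem_powersetCard, not_not]
        refine ⟨⟨⟨fun x hx => ?_, ?_⟩, fun x hx hx1 => ?_⟩, Finset.mem_insert_self _ _⟩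
        · rcases Finset.mem_insert.1 hx with h | h
          · simp only [Finset.mem_Ico]; omega
          · have := hsub h; simp only [Finset.mem_Ico] at this ⊢; omega
        · rw [Finset.card_insert_of_notMem htop, hcard]
        · rcases Finset.mem_insert.1 hx with h | h
          · rcases Finset.mem_insert.1 hx1 with h1 | h1
            · omega
            · have := hsub h1; simp only [Finset.mem_Ico] at this; omega
          · rcases Finset.mem_insert.1 hx1 with h1 | h1
            · have := hsub h; simp only [Finset.mem_Ico] at this; omega
            · exact hP x h h1
      · rintro S hS
        simp only [hX, Finset.mem_filter, not_not] at hS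
        exact Finset.insert_erase hS.2
      · rintro S hS
        simp only [Finset.mem_filter, Finset.mem_powersetCard] at hS
        have htop : a + L + 1 ∉ S := fun h => by
          have := hS.1.1 h; simp only [Finset.mem_Ico] at this; omega
        exact Finset.erase_insert htop
    rw [← hsplit, h1, h2, ih (L+1) (by omega) (k+1) a, ih L (by omega) k a]
    rcases le_or_gt k (L+1) with h | h
    · have e1 : L + 2 + 1 - (k+1) = (L + 1 + 1 - (k+1)) + 1 := by omega
      have e2 : L + 1 - k = L + 1 + 1 - (k + 1) := by omega
      rw [e1, e2, Nat.choose_succ_succ']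
      omega
    · rw [Nat.choose_eq_zero_of_lt (by omega), Nat.choose_eq_zero_of_lt (by omega),
        Nat.choose_eq_zero_of_lt (by omega)]

lemma cycle_count (m : ℕ) (hm : 4 ≤ m) (k : ℕ) (hk : 1 ≤ k) :
    (((Finset.range m).powersetCard k).filter
      (fun S => ∀ x ∈ S, (x + 1) % m ∉ S)).card
      = (m - k).choose k + (m - k - 1).choose (k - 1) := by
  obtain ⟨k, rfl⟩ : ∃ k', k = k' + 1 := ⟨k - 1, by omega⟩
  set X := ((Finset.range m).powersetCard (k+1)).filter
    (fun S => ∀ x ∈ S, (x + 1) % m ∉ S) with hX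
  have hsplit : (X.filter (fun S => (0:ℕ) ∉ S)).card
      + (X.filter (fun S => ¬ ((0:ℕ) ∉ S))).card = X.card :=
    Finset.card_filter_add_card_filter_not _
  have h1 : X.filter (fun S => (0:ℕ) ∉ S)
      = ((Finset.Ico 1 (1 + (m-1))).powersetCard (k+1)).filter
        (fun S => ∀ x ∈ S, x + 1 ∉ S) := by
    ext S
    simp only [hX, Finset.mem_filter, Finset.mem_powersetCard]
    constructor
    · rintro ⟨⟨⟨hsub, hcard⟩, hP⟩, h0⟩
      refine ⟨⟨fun x hx => ?_, hcard⟩, fun x hx hx1 => ?_⟩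
      · have := hsub hx
        simp only [Finset.mem_range] at this
        have : x ≠ 0 := fun h => h0 (h ▸ hx)
        have h2 := hsub hx; simp only [Finset.mem_range] at h2
        simp only [Finset.mem_Ico]; omega
      · have hx1m := hsub hx1
        simp only [Finset.mem_range] at hx1m
        exact hP x hx (by rwa [Nat.mod_eq_of_lt hx1m])
    · rintro ⟨⟨hsub, hcard⟩, hP⟩
      have h0 : (0:ℕ) ∉ S := fun h => by
        have := hsub h; simp only [Finset.mem_Ico] at this; omega
      refine ⟨⟨⟨fun x hx => ?_, hcard⟩, fun x hx => ?_⟩, h0⟩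
      · have := hsub hx; simp only [Finset.mem_Ico] at this
        simp only [Finset.mem_range]; omega
      · have hxm := hsub hx; simp only [Finset.mem_Ico] at hxm
        rcases Nat.lt_or_ge (x+1) m with h | h
        · rw [Nat.mod_eq_of_lt h]; exact hP x hx
        · have : (x+1) % m = 0 := by
            have : x + 1 = m := by omega
            simp [this]
          rw [this]; exact h0
  have h2 : (X.filter (fun S => ¬ ((0:ℕ) ∉ S))).card
      = (((Finset.Ico 2 (2 + (m-3))).powersetCard k).filter
        (fun S => ∀ x ∈ S, x + 1 ∉ S)).card := by
    refine Finset.card_bij' (fun S _ => S.erase 0) (fun S _ => insert 0 S) ?_ ?_ ?_ ?_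
    · rintro S hS
      simp only [hX, Finset.mem_filter, Finset.mem_powersetCard, not_not] at hS
      obtain ⟨⟨⟨hsub, hcard⟩, hP⟩, h0⟩ := hS
      have h1S : (1:ℕ) ∉ S := by
        have := hP 0 h0
        rwa [Nat.mod_eq_of_lt (by omega)] at this
      have hm1 : (m-1) ∉ S := fun h => by
        have := hP (m-1) h
        have e : (m - 1 + 1) % m = 0 := by
          have : m - 1 + 1 = m := by omega
          simp [this]
        rw [e] at this; exact this h0
      simp only [Finset.mem_filter, Finset.mem_powersetCard]
      refine ⟨⟨fun x hx => ?_, ?_⟩, fun x hx hx1 => ?_⟩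
      · have hxS := Finset.mem_of_mem_erase hx
        have hxne := Finset.ne_of_mem_erase hx
        have := hsub hxS; simp only [Finset.mem_range] at this
        have hx1 : x ≠ 1 := fun h => h1S (h ▸ hxS)
        have hxm1 : x ≠ m - 1 := fun h => hm1 (h ▸ hxS)
        simp only [Finset.mem_Ico]; omega
      · rw [Finset.card_erase_of_mem h0, hcard]
        omega
      · have hxS := Finset.mem_of_mem_erase hx
        have hx1S := Finset.mem_of_mem_erase hx1
        have := hsub hx1S; simp only [Finset.mem_range] at this
        exact hP x hxS (by rwa [Nat.mod_eq_of_lt this])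
    · rintro S hS
      simp only [Finset.mem_filter, Finset.mem_powersetCard] at hS
      obtain ⟨⟨hsub, hcard⟩, hP⟩ := hS
      have h0 : (0:ℕ) ∉ S := fun h => by
        have := hsub h; simp only [Finset.mem_Ico] at this; omega
      simp only [hX, Finset.mem_filter, Finset.mem_powersetCard, not_not]
      refine ⟨⟨⟨fun x hx => ?_, ?_⟩, fun x hx hx1 => ?_⟩, Finset.mem_insert_self _ _⟩
      · rcases Finset.mem_insert.1 hx with h | h
        · simp only [Finset.mem_range]; omega
        · have := hsub h; simp only [Finset.mem_Ico] at this
          simp only [Finset.mem_range]; omega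
      · rw [Finset.card_insert_of_notMem h0, hcard]
      · rcases Finset.mem_insert.1 hx with h | h
        · subst h
          rw [Nat.mod_eq_of_lt (by omega)] at hx1
          rcases Finset.mem_insert.1 hx1 with h1 | h1
          · omega
          · have := hsub h1; simp only [Finset.mem_Ico] at this; omega
        · have hxI := hsub h; simp only [Finset.mem_Ico] at hxI
          rw [Nat.mod_eq_of_lt (by omega)] at hx1
          rcases Finset.mem_insert.1 hx1 with h1 | h1
          · omega
          · exact hP x h h1
    · rintro S hS
      simp only [hX, Finset.mem_filter, not_not] at hS
      exact Finset.insert_erase hS.2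
    · rintro S hS
      simp only [Finset.mem_filter, Finset.mem_powersetCard] at hS
      have h0 : (0:ℕ) ∉ S := fun h => by
        have := hS.1.1 h; simp only [Finset.mem_Ico] at this; omega
      exact Finset.erase_insert h0
  rw [← hsplit, h1, h2, path_count (m-1) (k+1) 1, path_count (m-3) k 2]
  have e1 : m - 1 + 1 - (k + 1) = m - (k+1) := by omega
  have e2 : m - 3 + 1 - k = m - (k+1) - 1 := by omega
  rw [e1, e2]
  simp


lemma card_perm_extend {α : Type*} [Fintype α] [DecidableEq α] {ι : Type*}
    (T : Finset ι) (a b : ι → α) (ha : Set.InjOn a T) (hb : Set.InjOn b T) :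
    Nat.card {π : Equiv.Perm α // ∀ t ∈ T, π (a t) = b t}
      = (Fintype.card α - T.card).factorial := by
  classical
  set s : Set α := ↑(T.image a) with hs
  set t : Set α := ↑(T.image b) with ht
  have hmem : ∀ x : s, ∃ i, i ∈ T ∧ a i = x := by
    rintro ⟨x, hx⟩
    simpa using Finset.mem_image.1 (Finset.mem_coe.1 hx)
  choose c hcT hca using hmem
  have key : ∀ (i : ι) (hi : i ∈ T) (h : a i ∈ s), c ⟨a i, h⟩ = i := by
    intro i hi h
    exact ha (hcT ⟨a i, h⟩) hi (hca ⟨a i, h⟩)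
  have hmema : ∀ i ∈ T, a i ∈ s := fun i hi =>
    Finset.mem_coe.2 (Finset.mem_image_of_mem a hi)
  let f : s → t := fun x => ⟨b (c x), Finset.mem_coe.2 (Finset.mem_image_of_mem b (hcT x))⟩
  have hf : Function.Bijective f := by
    constructor
    · rintro x y hxy
      have : b (c x) = b (c y) := congrArg Subtype.val hxy
      have hcc : c x = c y := hb (hcT x) (hcT y) this
      have : (x : α) = y := by rw [← hca x, ← hca y, hcc]
      exact Subtype.ext this
    · rintro ⟨y, hy⟩
      obtain ⟨i, hi, rfl⟩ := by simpa using Finset.mem_image.1 (Finset.mem_coe.1 hy)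
      refine ⟨⟨a i, hmema i hi⟩, ?_⟩
      apply Subtype.ext
      show b (c ⟨a i, _⟩) = b i
      rw [key i hi]
  let e : s ≃ t := Equiv.ofBijective f hf
  have hcongr : Nat.card {π : Equiv.Perm α // ∀ t ∈ T, π (a t) = b t}
      = Nat.card {π : Equiv.Perm α // ∀ x : s, π x = e x} := by
    apply Nat.card_congr
    apply Equiv.subtypeEquivRight
    intro π
    constructor
    · intro h x
      have : (x : α) = a (c x) := (hca x).symm
      rw [this, h (c x) (hcT x)]
      rfl
    · intro h i hi
      have hx := h ⟨a i, hmema i hi⟩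
      have he : (e ⟨a i, hmema i hi⟩ : α) = b (c ⟨a i, hmema i hi⟩) := rfl
      rw [hx, he, key i hi]
  rw [hcongr]
  have h2 : Nat.card {π : Equiv.Perm α // ∀ x : s, π x = e x}
      = Nat.card ((↥sᶜ) ≃ (↥tᶜ)) := Nat.card_congr (Equiv.Set.compl e)
  rw [h2, Nat.card_eq_fintype_card]
  have hcards : Fintype.card ↥s = T.card := by
    simp only [hs, Finset.coe_sort_coe, Fintype.card_coe]
    exact Finset.card_image_of_injOn ha
  have hcardt : Fintype.card ↥t = T.card := by
    simp only [ht, Finset.coe_sort_coe, Fintype.card_coe]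
    exact Finset.card_image_of_injOn hb
  have hcs : Fintype.card ↥sᶜ = Fintype.card α - T.card := by
    rw [Fintype.card_compl_set, hcards]
  have hct : Fintype.card ↥tᶜ = Fintype.card α - T.card := by
    rw [Fintype.card_compl_set, hcardt]
  rw [Fintype.card_equiv (Fintype.equivOfCardEq (hcs.trans hct.symm)), hcs]

section helpers
variable (n : ℕ) [NeZero n]

lemma hinj_cast {u v : ℕ} (hu : u < n) (hv : v < n) (h : (u : ZMod n) = v) : u = v := by
  have := congrArg ZMod.val h
  rwa [ZMod.val_cast_of_lt hu, ZMod.val_cast_of_lt hv] at this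

lemma hsemi_cast {u v : ℕ} (hu : u ≤ n) (hv : v ≤ n) (h : (u : ZMod n) = v) :
    u = v ∨ (u = 0 ∧ v = n) ∨ (v = 0 ∧ u = n) := by
  have hn : 0 < n := Nat.pos_of_ne_zero (NeZero.ne n)
  rcases Nat.lt_or_ge u n with hu' | hu'
  · rcases Nat.lt_or_ge v n with hv' | hv'
    · exact Or.inl (hinj_cast n hu' hv' h)
    · have hv'' : v = n := by omega
      rw [hv'', ZMod.natCast_self] at h
      have : u = 0 := hinj_cast n hu' hn (by rw [h]; simp)
      exact Or.inr (Or.inl ⟨this, hv''⟩)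
  · have hu'' : u = n := by omega
    rw [hu'', ZMod.natCast_self] at h
    rcases Nat.lt_or_ge v n with hv' | hv'
    · have : v = 0 := hinj_cast n hv' hn (by rw [← h]; simp)
      exact Or.inr (Or.inr ⟨this, hu''⟩)
    · have : v = n := by omega
      exact Or.inl (by omega)
end helpers

lemma N_indep (n : ℕ) (hn : 2 ≤ n) (S : Finset ℕ) (hS : S ⊆ Finset.range (2*n))
    (hind : ∀ x ∈ S, (x + 1) % (2*n) ∉ S) :
    Nat.card {π : Equiv.Perm (ZMod n) //
        ∀ t ∈ S, π ((t / 2 : ℕ) : ZMod n) = (((t+1) / 2 : ℕ) : ZMod n)}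
      = (n - S.card).factorial := by
  haveI : NeZero n := ⟨by omega⟩
  have hconsec : ∀ x ∈ S, ∀ y ∈ S, y = x + 1 → False := by
    intro x hx y hy hxy
    have hym := hS hy
    simp only [Finset.mem_range] at hym
    have := hind x hx
    rw [hxy] at hym
    rw [Nat.mod_eq_of_lt hym] at this
    exact this (hxy ▸ hy)
  have ha : Set.InjOn (fun t : ℕ => ((t / 2 : ℕ) : ZMod n)) S := by
    intro x hx y hy hxy
    have hxm := hS hx; have hym := hS hy
    simp only [Finset.mem_range] at hxm hym
    have hxy' : ((x / 2 : ℕ) : ZMod n) = ((y / 2 : ℕ) : ZMod n) := hxy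
    have hdiv : x / 2 = y / 2 := hinj_cast n (by omega) (by omega) hxy'
    by_contra hne
    have : y = x + 1 ∨ x = y + 1 := by omega
    rcases this with h | h
    · exact hconsec x hx y hy h
    · exact hconsec y hy x hx h
  have hb : Set.InjOn (fun t : ℕ => (((t + 1) / 2 : ℕ) : ZMod n)) S := by
    intro x hx y hy hxy
    have hxm := hS hx; have hym := hS hy
    simp only [Finset.mem_range] at hxm hym
    have hxy' : (((x + 1) / 2 : ℕ) : ZMod n) = (((y + 1) / 2 : ℕ) : ZMod n) := hxy
    rcases hsemi_cast n (by omega) (by omega) hxy' with h | ⟨h1, h2⟩ | ⟨h1, h2⟩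
    · by_contra hne
      have : y = x + 1 ∨ x = y + 1 := by omega
      rcases this with h' | h'
      · exact hconsec x hx y hy h'
      · exact hconsec y hy x hx h'
    · exfalso
      have hx0 : x = 0 := by omega
      have hy0 : y = 2*n - 1 := by omega
      have := hind y hy
      have e : (y + 1) % (2*n) = 0 := by
        have : y + 1 = 2*n := by omega
        simp [this]
      rw [e] at this
      exact this (hx0 ▸ hx)
    · exfalso
      have hy0 : y = 0 := by omega
      have hx0 : x = 2*n - 1 := by omega
      have := hind x hx
      have e : (x + 1) % (2*n) = 0 := by
        have : x + 1 = 2*n := by omega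
        simp [this]
      rw [e] at this
      exact this (hy0 ▸ hy)
  have := card_perm_extend S (fun t : ℕ => ((t / 2 : ℕ) : ZMod n))
    (fun t : ℕ => (((t + 1) / 2 : ℕ) : ZMod n)) ha hb
  rw [this, ZMod.card]

lemma N_dep (n : ℕ) (hn : 2 ≤ n) (S : Finset ℕ) (hS : S ⊆ Finset.range (2*n))
    (hdep : ¬ ∀ x ∈ S, (x + 1) % (2*n) ∉ S) :
    Nat.card {π : Equiv.Perm (ZMod n) //
        ∀ t ∈ S, π ((t / 2 : ℕ) : ZMod n) = (((t+1) / 2 : ℕ) : ZMod n)} = 0 := by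
  haveI : NeZero n := ⟨by omega⟩
  rw [Nat.card_eq_zero]
  left
  rw [isEmpty_subtype]
  intro π hπ
  push_neg at hdep
  obtain ⟨x, hx, hy⟩ := hdep
  have hxm := hS hx
  simp only [Finset.mem_range] at hxm
  by_cases hxe : x = 2*n - 1
  · have hy0 : (x + 1) % (2*n) = 0 := by
      have : x + 1 = 2*n := by omega
      simp [this]
    rw [hy0] at hy
    have h1 := hπ x hx
    have h2 := hπ 0 hy
    have e1 : x / 2 = n - 1 := by omega
    have e2 : (x + 1) / 2 = n := by omega
    rw [e1, e2] at h1
    norm_num at h2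
    have e3 : ((n : ℕ) : ZMod n) = ((0 : ℕ) : ZMod n) := by simp [ZMod.natCast_self]
    rw [e3] at h1
    have h2' : π ((0 : ℕ) : ZMod n) = ((0 : ℕ) : ZMod n) := by simpa using h2
    have := π.injective (h1.trans h2'.symm)
    have := hinj_cast n (u := n - 1) (v := 0) (by omega) (by omega) this
    omega
  · have hy1 : (x + 1) % (2*n) = x + 1 := Nat.mod_eq_of_lt (by omega)
    rw [hy1] at hy
    have h1 := hπ x hx
    have h2 := hπ (x+1) hy
    rcases Nat.even_or_odd x with he | ho
    · rw [Nat.even_iff] at he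
      have e1 : (x + 1) / 2 = x / 2 := by omega
      have e2 : (x + 1 + 1) / 2 = x / 2 + 1 := by omega
      rw [e1] at h1
      rw [e1, e2] at h2
      have heq := h1.symm.trans h2
      rcases hsemi_cast n (u := x/2) (v := x/2+1) (by omega) (by omega) heq with h | h | h <;> omega
    · rw [Nat.odd_iff] at ho
      have e1 : (x + 1) / 2 = x / 2 + 1 := by omega
      have e2 : (x + 1 + 1) / 2 = x / 2 + 1 := by omega
      rw [e1] at h1
      rw [e1, e2] at h2
      have heq := π.injective (h1.trans h2.symm)
      have := hinj_cast n (u := x/2) (v := x/2+1) (by omega) (by omega) heq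
      omega

def CY (m k : ℕ) : ℕ :=
  (((Finset.range m).powersetCard k).filter (fun S => ∀ x ∈ S, (x + 1) % m ∉ S)).card

lemma CY_eq (m : ℕ) (hm : 4 ≤ m) (k : ℕ) (hk : 1 ≤ k) :
    CY m k = (m - k).choose k + (m - k - 1).choose (k - 1) := by
  unfold CY
  exact cycle_count m hm k hk

lemma CY_zero (m : ℕ) : CY m 0 = 1 := by
  unfold CY
  rw [Finset.powersetCard_zero, Finset.filter_singleton, if_pos (by intro x hx; simp at hx)]
  simp

theorem touchard_menage (n : ℕ) (hn : 2 ≤ n) :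
    (Nat.card {π : Equiv.Perm (ZMod n) // ∀ i, π i ≠ i ∧ π i ≠ i + 1} : ℚ) =
      ∑ k ∈ Finset.range (n + 1),
        (-1 : ℚ) ^ k * ((2 * n : ℚ) / (2 * n - k)) * ((2 * n - k).choose k) *
          (n - k).factorial := by
  classical
  haveI : NeZero n := ⟨by omega⟩
  -- Step 1 : LHS as filtered card
  have step1 : Nat.card {π : Equiv.Perm (ZMod n) // ∀ i, π i ≠ i ∧ π i ≠ i + 1}
      = (Finset.univ.filter (fun π : Equiv.Perm (ZMod n) =>
          ((Finset.range (2*n)).filter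
            (fun t => π ((t / 2 : ℕ) : ZMod n) = (((t+1) / 2 : ℕ) : ZMod n))) = ∅)).card := by
    rw [Nat.card_eq_fintype_card, Fintype.card_subtype]
    congr 1
    apply Finset.filter_congr
    intro π _
    rw [Finset.filter_eq_empty_iff]
    constructor
    · intro h t ht hbad
      simp only [Finset.mem_range] at ht
      rcases Nat.even_or_odd t with he | ho
      · rw [Nat.even_iff] at he
        rw [show (t+1)/2 = t/2 by omega] at hbad
        exact (h ((t / 2 : ℕ) : ZMod n)).1 hbad
      · rw [Nat.odd_iff] at ho
        rw [show (t+1)/2 = t/2 + 1 by omega] at hbad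
        push_cast at hbad
        exact (h ((t / 2 : ℕ) : ZMod n)).2 hbad
    · intro h i
      have hv : ((i.val : ℕ) : ZMod n) = i := ZMod.natCast_rightInverse i
      have hvl : i.val < n := ZMod.val_lt i
      constructor
      · intro hbad
        have ht : 2 * i.val ∈ Finset.range (2*n) := Finset.mem_range.2 (by omega)
        apply h ht
        rw [show 2 * i.val / 2 = i.val by omega, show (2 * i.val + 1) / 2 = i.val by omega,
          hv]
        exact hbad
      · intro hbad
        have ht : 2 * i.val + 1 ∈ Finset.range (2*n) := Finset.mem_range.2 (by omega)
        apply h ht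
        rw [show (2 * i.val + 1) / 2 = i.val by omega,
          show (2 * i.val + 1 + 1) / 2 = i.val + 1 by omega]
        push_cast [hv]
        exact hbad
  rw [step1]
  -- Step 2 : inclusion-exclusion
  have hpow : ∀ (A : Finset ℕ), (∑ S ∈ A.powerset, (-1:ℚ)^S.card) = if A = ∅ then 1 else 0 := by
    intro A
    split_ifs with h
    · subst h; simp
    · have := Finset.sum_powerset_neg_one_pow_card_of_nonempty
        (Finset.nonempty_iff_ne_empty.2 h) (α := ℕ)
      exact_mod_cast this
  have step2 : (((Finset.univ.filter (fun π : Equiv.Perm (ZMod n) =>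
          ((Finset.range (2*n)).filter
            (fun t => π ((t / 2 : ℕ) : ZMod n) = (((t+1) / 2 : ℕ) : ZMod n))) = ∅)).card : ℚ))
      = ∑ S ∈ (Finset.range (2*n)).powerset, (-1:ℚ)^S.card *
          (Nat.card {π : Equiv.Perm (ZMod n) //
            ∀ t ∈ S, π ((t / 2 : ℕ) : ZMod n) = (((t+1) / 2 : ℕ) : ZMod n)} : ℚ) := by
    rw [← Finset.sum_boole]
    have h1 : ∀ π : Equiv.Perm (ZMod n),
        (if ((Finset.range (2*n)).filter
            (fun t => π ((t / 2 : ℕ) : ZMod n) = (((t+1) / 2 : ℕ) : ZMod n))) = ∅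
          then (1:ℚ) else 0)
        = ∑ S ∈ (Finset.range (2*n)).powerset,
            (if S ⊆ (Finset.range (2*n)).filter
              (fun t => π ((t / 2 : ℕ) : ZMod n) = (((t+1) / 2 : ℕ) : ZMod n))
             then (-1:ℚ)^S.card else 0) := by
      intro π
      rw [← Finset.sum_filter, ← hpow]
      congr 1
      ext S
      simp only [Finset.mem_powerset, Finset.mem_filter]
      constructor
      · intro hsub
        exact ⟨hsub.trans (Finset.filter_subset _ _), hsub⟩
      · exact fun h => h.2
    rw [Finset.sum_congr rfl (fun π _ => h1 π), Finset.sum_comm]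
    apply Finset.sum_congr rfl
    intro S hS
    have hSsub : S ⊆ Finset.range (2*n) := Finset.mem_powerset.1 hS
    have h2 : ∀ π : Equiv.Perm (ZMod n),
        (S ⊆ (Finset.range (2*n)).filter
          (fun t => π ((t / 2 : ℕ) : ZMod n) = (((t+1) / 2 : ℕ) : ZMod n)))
        ↔ (∀ t ∈ S, π ((t / 2 : ℕ) : ZMod n) = (((t+1) / 2 : ℕ) : ZMod n)) := by
      intro π
      constructor
      · intro h t ht
        exact (Finset.mem_filter.1 (h ht)).2
      · intro h t ht
        exact Finset.mem_filter.2 ⟨hSsub ht, h t ht⟩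
    calc ∑ π : Equiv.Perm (ZMod n),
          (if S ⊆ (Finset.range (2*n)).filter
            (fun t => π ((t / 2 : ℕ) : ZMod n) = (((t+1) / 2 : ℕ) : ZMod n))
           then (-1:ℚ)^S.card else 0)
        = ∑ π : Equiv.Perm (ZMod n),
            (-1:ℚ)^S.card * (if (∀ t ∈ S, π ((t / 2 : ℕ) : ZMod n) = (((t+1) / 2 : ℕ) : ZMod n))
              then (1:ℚ) else 0) := by
          apply Finset.sum_congr rfl
          intro π _
          rw [mul_ite, mul_one, mul_zero, if_congr (h2 π) rfl rfl]
      _ = (-1:ℚ)^S.card * (Nat.card {π : Equiv.Perm (ZMod n) //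
            ∀ t ∈ S, π ((t / 2 : ℕ) : ZMod n) = (((t+1) / 2 : ℕ) : ZMod n)} : ℚ) := by
          rw [← Finset.mul_sum, Finset.sum_boole]
          congr 2
          rw [Nat.card_eq_fintype_card, Fintype.card_subtype]
  rw [step2]
  -- Step 3 : regroup by cardinality
  rw [Finset.powerset_card_disjiUnion]
  erw [Finset.sum_disjiUnion]
  rw [Finset.card_range]
  have step3 : ∀ k ∈ Finset.range (2*n+1),
      (∑ S ∈ (Finset.range (2*n)).powersetCard k, (-1:ℚ)^S.card *
        (Nat.card {π : Equiv.Perm (ZMod n) //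
          ∀ t ∈ S, π ((t / 2 : ℕ) : ZMod n) = (((t+1) / 2 : ℕ) : ZMod n)} : ℚ))
      = (CY (2*n) k : ℚ) * ((-1:ℚ)^k * ((n-k).factorial : ℚ)) := by
    intro k hk
    have hterm : ∀ S ∈ (Finset.range (2*n)).powersetCard k,
        (-1:ℚ)^S.card * (Nat.card {π : Equiv.Perm (ZMod n) //
          ∀ t ∈ S, π ((t / 2 : ℕ) : ZMod n) = (((t+1) / 2 : ℕ) : ZMod n)} : ℚ)
        = (if (∀ x ∈ S, (x+1) % (2*n) ∉ S) then (-1:ℚ)^k * ((n-k).factorial : ℚ) else 0) := by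
      intro S hS
      simp only [Finset.mem_powersetCard] at hS
      by_cases hp : ∀ x ∈ S, (x+1) % (2*n) ∉ S
      · rw [if_pos hp, N_indep n hn S hS.1 hp, hS.2]
      · rw [if_neg hp, N_dep n hn S hS.1 hp]
        simp
    rw [Finset.sum_congr rfl hterm, ← Finset.sum_filter, Finset.sum_const, nsmul_eq_mul]
    congr 2
  rw [Finset.sum_congr rfl step3]
  -- Step 4 : truncate and identify terms
  rw [← Finset.sum_subset (Finset.range_subset_range.2 (by omega : n+1 ≤ 2*n+1)) ?hvanish]
  case hvanish =>
    intro k hk hk'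
    simp only [Finset.mem_range] at hk hk'
    have hk1 : 1 ≤ k := by omega
    rw [CY_eq (2*n) (by omega) k hk1]
    rw [Nat.choose_eq_zero_of_lt (by omega), Nat.choose_eq_zero_of_lt (by omega)]
    simp
  apply Finset.sum_congr rfl
  intro k hk
  simp only [Finset.mem_range] at hk
  rcases Nat.eq_zero_or_pos k with rfl | hk1
  · rw [CY_zero]
    have hnq : (0:ℚ) < (n:ℚ) := by exact_mod_cast (by omega : 0 < n)
    simp only [Nat.cast_one, pow_zero, Nat.sub_zero, one_mul,
      Nat.choose_zero_right, Nat.cast_zero, sub_zero, mul_one]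
    rw [div_self (by positivity : (2 * (n:ℚ)) ≠ 0)]
    ring
  · rw [CY_eq (2*n) (by omega) k hk1]
    have hk2n : k ≤ 2*n := by omega
    have key := Nat.add_one_mul_choose_eq (2*n-k-1) (k-1)
    rw [show (2*n-k-1)+1 = 2*n-k by omega,
      show (k-1)+1 = k by omega] at key
    have keyQ : ((2*n-k : ℕ) : ℚ) * ((2*n-k-1).choose (k-1) : ℚ)
        = ((2*n-k).choose k : ℚ) * (k : ℚ) := by exact_mod_cast key
    have hden : ((2*n : ℚ) - (k:ℚ)) = ((2*n - k : ℕ) : ℚ) := by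
      push_cast [Nat.cast_sub hk2n]
      ring
    have hne : ((2*n - k : ℕ) : ℚ) ≠ 0 := Nat.cast_ne_zero.2 (by omega)
    have hr : (((2*n-k).choose k + (2*n-k-1).choose (k-1) : ℕ) : ℚ)
        = ((2*n:ℚ) / ((2*n:ℚ) - (k:ℚ))) * ((2*n-k).choose k : ℚ) := by
      rw [hden, div_mul_eq_mul_div, eq_div_iff hne]
      push_cast [Nat.cast_sub hk2n] at keyQ ⊢
      linear_combination keyQ
    rw [hr]
    push_cast
    ring
end

section
/- The ménage numbers satisfy the recurrence A(n) = n·A(n-1) + 2·A(n-2) - (n-4)·A(n-3) - A(n-4) for all n ≥ 6. -/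
/-- The round-table ménage numbers: permutations `π` of `ℤ/nℤ` with
`π i ≠ i` and `π i ≠ i + 1` for all `i`. -/
noncomputable def menage (n : ℕ) : ℕ :=
  Nat.card {π : Equiv.Perm (ZMod n) // ∀ i, π i ≠ i ∧ π i ≠ i + 1}

open Finset

/-- summand of the straight-ménage alternating sum, subtraction-free form -/
private def tt (n j : ℕ) : ℤ := (-1)^(n+j) * ((n+j).choose (2*j)) * (Nat.factorial j)

private def Vseq (m : ℕ) : ℤ := ∑ j ∈ Finset.range (m+1), tt m j

private def GG (n j : ℕ) : ℤ := (-1)^(n+j) * (Nat.factorial j) *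
  (((n+j).choose (2*j) : ℤ) - ((n+j+1).choose (2*j) : ℤ)
    - ((n+j+2).choose (2*j) : ℤ) + ((n+j+3).choose (2*j) : ℤ))

private lemma cert (n j : ℕ) :
    tt (n+3) j - (n+2) * tt (n+2) j - (n+2) * tt (n+1) j - tt n j
      = GG n (j+1) - GG n j := by
  have hP10 : (n+j+2).choose (2*j+1) = (n+j+1).choose (2*j) + (n+j+1).choose (2*j+1) :=
    Nat.choose_succ_succ _ _
  have hP11 : (n+j+2).choose (2*j+2) = (n+j+1).choose (2*j+1) + (n+j+1).choose (2*j+2) :=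
    Nat.choose_succ_succ _ _
  have hP20 : (n+j+3).choose (2*j+1) = (n+j+2).choose (2*j) + (n+j+2).choose (2*j+1) :=
    Nat.choose_succ_succ _ _
  have hP31 : (n+j+4).choose (2*j+2) = (n+j+3).choose (2*j+1) + (n+j+3).choose (2*j+2) :=
    Nat.choose_succ_succ _ _
  have hA10 : (n+j+2) * ((n+j+1).choose (2*j)) = (n+j+2).choose (2*j+1) * (2*j+1) :=
    Nat.add_one_mul_choose_eq _ _
  have hA20 : (n+j+3) * ((n+j+2).choose (2*j)) = (n+j+3).choose (2*j+1) * (2*j+1) :=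
    Nat.add_one_mul_choose_eq _ _
  zify at hP10 hP11 hP20 hP31 hA10 hA20
  simp only [tt, GG, Nat.factorial_succ]
  rw [show n+3+j = n+j+3 from by omega, show n+2+j = n+j+2 from by omega,
      show n+1+j = n+j+1 from by omega, show n+(j+1) = n+j+1 from by omega,
      show n+j+1+1 = n+j+2 from rfl, show n+j+1+2 = n+j+3 from rfl,
      show n+j+1+3 = n+j+4 from rfl, show 2*(j+1) = 2*j+2 from by omega]
  push_cast
  linear_combination ((-1:ℤ)^(n+j) * (Nat.factorial j) : ℤ) * hA10 - ((-1:ℤ)^(n+j) * (Nat.factorial j) : ℤ) * hA20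
    + ((j+1) * (-1:ℤ)^(n+j) * (Nat.factorial j) : ℤ) * hP10 - ((j+1) * (-1:ℤ)^(n+j) * (Nat.factorial j) : ℤ) * hP11
    - ((j:ℤ) * (-1:ℤ)^(n+j) * (Nat.factorial j) : ℤ) * hP20 + ((j+1) * (-1:ℤ)^(n+j) * (Nat.factorial j) : ℤ) * hP31

private lemma V_rec (n : ℕ) :
    Vseq (n+3) = (n+2) * (Vseq (n+2) + Vseq (n+1)) + Vseq n := by
  have key : ∑ j ∈ range (n+4),
      (tt (n+3) j - (n+2) * tt (n+2) j - (n+2) * tt (n+1) j - tt n j) = 0 := by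
    rw [Finset.sum_congr rfl fun j _ => cert n j, Finset.sum_range_sub (GG n)]
    have e1 : (n+(n+4)).choose (2*(n+4)) = 0 := Nat.choose_eq_zero_of_lt (by omega)
    have e2 : (n+(n+4)+1).choose (2*(n+4)) = 0 := Nat.choose_eq_zero_of_lt (by omega)
    have e3 : (n+(n+4)+2).choose (2*(n+4)) = 0 := Nat.choose_eq_zero_of_lt (by omega)
    have e4 : (n+(n+4)+3).choose (2*(n+4)) = 0 := Nat.choose_eq_zero_of_lt (by omega)
    have hTop : GG n (n+4) = 0 := by rw [GG, e1, e2, e3, e4]; push_cast; ring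
    have hBot : GG n 0 = 0 := by
      rw [GG]
      simp
    rw [hTop, hBot]; ring
  have z2 : tt (n+2) (n+3) = 0 := by
    simp [tt, Nat.choose_eq_zero_of_lt (show n+2+(n+3) < 2*(n+3) by omega)]
  have z1a : tt (n+1) (n+2) = 0 := by
    simp [tt, Nat.choose_eq_zero_of_lt (show n+1+(n+2) < 2*(n+2) by omega)]
  have z1b : tt (n+1) (n+3) = 0 := by
    simp [tt, Nat.choose_eq_zero_of_lt (show n+1+(n+3) < 2*(n+3) by omega)]
  have z0a : tt n (n+1) = 0 := by
    simp [tt, Nat.choose_eq_zero_of_lt (show n+(n+1) < 2*(n+1) by omega)]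
  have z0b : tt n (n+2) = 0 := by
    simp [tt, Nat.choose_eq_zero_of_lt (show n+(n+2) < 2*(n+2) by omega)]
  have z0c : tt n (n+3) = 0 := by
    simp [tt, Nat.choose_eq_zero_of_lt (show n+(n+3) < 2*(n+3) by omega)]
  have hsplit : ∑ j ∈ range (n+4),
      (tt (n+3) j - (n+2) * tt (n+2) j - (n+2) * tt (n+1) j - tt n j)
      = (∑ j ∈ range (n+4), tt (n+3) j) - (n+2) * (∑ j ∈ range (n+4), tt (n+2) j)
        - (n+2) * (∑ j ∈ range (n+4), tt (n+1) j) - ∑ j ∈ range (n+4), tt n j := by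
    rw [Finset.mul_sum, Finset.mul_sum]
    rw [← Finset.sum_sub_distrib, ← Finset.sum_sub_distrib, ← Finset.sum_sub_distrib]
  have s3 : ∑ j ∈ range (n+4), tt (n+3) j = Vseq (n+3) := rfl
  have s2 : ∑ j ∈ range (n+4), tt (n+2) j = Vseq (n+2) := by
    rw [show n+4 = (n+3)+1 from rfl, Finset.sum_range_succ, z2, add_zero]; rfl
  have s1 : ∑ j ∈ range (n+4), tt (n+1) j = Vseq (n+1) := by
    rw [show n+4 = (n+3)+1 from rfl, Finset.sum_range_succ, z1b, add_zero,
        show n+3 = (n+2)+1 from rfl, Finset.sum_range_succ, z1a, add_zero]; rfl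
  have s0 : ∑ j ∈ range (n+4), tt n j = Vseq n := by
    rw [show n+4 = (n+3)+1 from rfl, Finset.sum_range_succ, z0c, add_zero,
        show n+3 = (n+2)+1 from rfl, Finset.sum_range_succ, z0b, add_zero,
        show n+2 = (n+1)+1 from rfl, Finset.sum_range_succ, z0a, add_zero]; rfl
  rw [hsplit, s3, s2, s1, s0] at key
  linarith

private lemma V_target (N : ℕ) :
    (Vseq (N+6) - Vseq (N+5))
      = (N+6) * (Vseq (N+5) - Vseq (N+4)) + 2*(Vseq (N+4) - Vseq (N+3))
        - (N+2) * (Vseq (N+3) - Vseq (N+2)) - (Vseq (N+2) - Vseq (N+1)) := by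
  have e1 := V_rec (N+3)
  have e2 := V_rec (N+2)
  have e3 := V_rec (N+1)
  rw [show N+3+3 = N+6 from by omega, show N+3+2 = N+5 from by omega,
      show N+3+1 = N+4 from by omega] at e1
  rw [show N+2+3 = N+5 from by omega, show N+2+2 = N+4 from by omega,
      show N+2+1 = N+3 from by omega] at e2
  rw [show N+1+3 = N+4 from by omega, show N+1+2 = N+3 from by omega,
      show N+1+1 = N+2 from by omega] at e3
  push_cast at e1 e2 e3 ⊢
  linear_combination e1 - 2*e2 + e3

private def pset (a m k : ℕ) : Finset (Finset ℕ) :=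
  ((Finset.Ico a m).powersetCard k).filter (fun s => ∀ x ∈ s, x+1 ∉ s)

private lemma pset_zero (a m : ℕ) : (pset a m 0).card = 1 := by
  simp [pset, Finset.powersetCard_zero, Finset.filter_singleton]

private lemma pset_card (a : ℕ) : ∀ t k : ℕ, (pset a (a+t) k).card = (t+1-k).choose k := by
  intro t
  induction t using Nat.strong_induction_on with
  | _ t ih =>
    intro k
    match t, k with
    | t, 0 => simpa using pset_zero a (a+t)
    | 0, (k+1) =>
      rw [pset, show a+0 = a from rfl, Finset.Ico_self, Finset.powersetCard_eq_empty.2 (by simp)]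
      simp [Nat.choose_eq_zero_of_lt]
    | 1, (k+1) =>
      have hsing : Finset.Ico a (a+1) = {a} := by
        rw [Finset.Ico_add_one_right_eq_Icc, Finset.Icc_self]
      match k with
      | 0 =>
        have h1 : (({a} : Finset ℕ)).powersetCard 1 = {({a} : Finset ℕ)} := by
          rw [Finset.powersetCard_one]; simp
        simp only [pset, hsing, zero_add, h1, Finset.filter_singleton]
        have : ∀ x ∈ ({a} : Finset ℕ), x+1 ∉ ({a} : Finset ℕ) := by
          intro x hx; simp only [Finset.mem_singleton] at hx ⊢; omega
        rw [if_pos this]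
        simp
      | (k+1) =>
        have h0 : ((({a} : Finset ℕ)).powersetCard (k+2)) = ∅ := by
          rw [Finset.powersetCard_eq_empty]; simp
        simp [pset, hsing, h0, Nat.choose_eq_zero_of_lt]
    | (t+2), (k+1) =>
      classical
      set top := a + t + 1 with htopdef
      have hsplit := Finset.card_filter_add_card_filter_not
        (s := pset a (a+(t+2)) (k+1)) (p := fun s => top ∈ s)
      have hnot : (pset a (a+(t+2)) (k+1)).filter (fun s => ¬ top ∈ s)
          = pset a (a+(t+1)) (k+1) := by
        ext s
        simp only [pset, Finset.mem_filter, Finset.mem_powersetCard]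
        constructor
        · rintro ⟨⟨⟨hsub, hcard⟩, hadj⟩, htop⟩
          refine ⟨⟨fun x hx => ?_, hcard⟩, hadj⟩
          have hb := hsub hx
          simp only [Finset.mem_Ico] at hb ⊢
          refine ⟨hb.1, ?_⟩
          rcases Nat.lt_or_ge x (a+t+1) with h | h
          · omega
          · exfalso
            have hxeq : x = top := by omega
            exact htop (hxeq ▸ hx)
        · rintro ⟨⟨hsub, hcard⟩, hadj⟩
          have hsub' : s ⊆ Finset.Ico a (a+(t+2)) := by
            intro x hx; have := hsub hx; simp only [Finset.mem_Ico] at this ⊢; omega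
          refine ⟨⟨⟨hsub', hcard⟩, hadj⟩, fun htop => ?_⟩
          have := hsub htop; simp only [Finset.mem_Ico] at this; omega
      have hyes : ((pset a (a+(t+2)) (k+1)).filter (fun s => top ∈ s)).card
          = (pset a (a+t) k).card := by
        refine Finset.card_bij' (fun s _ => s.erase top) (fun s _ => insert top s)
          ?_ ?_ ?_ ?_
        · intro s hs
          simp only [Finset.mem_filter, pset, Finset.mem_powersetCard] at hs ⊢
          obtain ⟨⟨⟨hsub, hcard⟩, hadj⟩, htop⟩ := hs
          refine ⟨⟨fun x hx => ?_, ?_⟩, fun x hx => ?_⟩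
          · have hxs := Finset.mem_of_mem_erase hx
            have hxne := Finset.ne_of_mem_erase hx
            have hb := hsub hxs
            simp only [Finset.mem_Ico] at hb ⊢
            refine ⟨hb.1, ?_⟩
            rcases Nat.lt_or_ge x (a+t) with h | h
            · exact h
            · exfalso
              have hx1 : x = a + t := by omega
              exact hadj x hxs (by rw [hx1]; exact htop)
          · rw [Finset.card_erase_of_mem htop, hcard]
            omega
          · intro hmem
            exact hadj x (Finset.mem_of_mem_erase hx) (Finset.mem_of_mem_erase hmem)
        · intro s hs
          simp only [Finset.mem_filter, pset, Finset.mem_powersetCard] at hs ⊢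
          obtain ⟨⟨hsub, hcard⟩, hadj⟩ := hs
          have htopnot : top ∉ s := by
            intro h; have := hsub h; simp only [Finset.mem_Ico] at this; omega
          refine ⟨⟨⟨fun x hx => ?_, ?_⟩, fun x hx hmem => ?_⟩, Finset.mem_insert_self _ _⟩
          · rcases Finset.mem_insert.1 hx with rfl | hx
            · simp only [Finset.mem_Ico]; omega
            · have := hsub hx; simp only [Finset.mem_Ico] at this ⊢; omega
          · rw [Finset.card_insert_of_notMem htopnot, hcard]
          · rcases Finset.mem_insert.1 hx with rfl | hx
            · rcases Finset.mem_insert.1 hmem with h | h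
              · omega
              · have := hsub h; simp only [Finset.mem_Ico] at this; omega
            · rcases Finset.mem_insert.1 hmem with h | h
              · have := hsub hx; simp only [Finset.mem_Ico] at this; omega
              · exact hadj x hx h
        · intro s hs
          simp only [Finset.mem_filter] at hs
          exact Finset.insert_erase hs.2
        · intro s hs
          simp only [pset, Finset.mem_filter, Finset.mem_powersetCard] at hs
          apply Finset.erase_insert
          intro h; have := hs.1.1 h; simp only [Finset.mem_Ico] at this; omega
      have e1 : (pset a (a+(t+1)) (k+1)).card = (t+1-k).choose (k+1) := by
        have h := ih (t+1) (by omega) (k+1)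
        rwa [show t+1+1-(k+1) = t+1-k from by omega] at h
      have e2 : (pset a (a+t) k).card = (t+1-k).choose k := ih t (by omega) k
      rw [hnot] at hsplit
      have hsum : (pset a (a+(t+2)) (k+1)).card = (t+1-k).choose k + (t+1-k).choose (k+1) := by
        omega
      rw [hsum]
      rcases Nat.lt_or_ge t k with h | h
      · have h1 : (t+1-k).choose k = 0 := by
          rw [show t+1-k = 0 from by omega]
          exact Nat.choose_eq_zero_of_lt (by omega)
        have h2 : (t+1-k).choose (k+1) = 0 := by
          rw [show t+1-k = 0 from by omega]
          exact Nat.choose_eq_zero_of_lt (by omega)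
        have h3 : (t+2+1-(k+1)).choose (k+1) = 0 := Nat.choose_eq_zero_of_lt (by omega)
        omega
      · rw [show t+2+1-(k+1) = (t+1-k)+1 from by omega]
        rw [Nat.choose_succ_succ]

private def cset (M k : ℕ) : Finset (Finset ℕ) :=
  ((Finset.range M).powersetCard k).filter (fun s => ∀ x ∈ s, (x+1) % M ∉ s)

private lemma cset_zero (M : ℕ) : (cset M 0).card = 1 := by
  simp [cset, Finset.powersetCard_zero, Finset.filter_singleton]

private lemma cset_card (M k : ℕ) (hM : 3 ≤ M) :
    (cset M (k+1)).card = (M-(k+1)).choose (k+1) + (M-1-(k+1)).choose k := by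
  classical
  have hsplit := Finset.card_filter_add_card_filter_not
    (s := cset M (k+1)) (p := fun s => (0:ℕ) ∈ s)
  have hnot : (cset M (k+1)).filter (fun s => ¬ (0:ℕ) ∈ s) = pset 1 M (k+1) := by
    ext s
    simp only [cset, pset, Finset.mem_filter, Finset.mem_powersetCard]
    constructor
    · rintro ⟨⟨⟨hsub, hcard⟩, hcyc⟩, h0⟩
      refine ⟨⟨fun x hx => ?_, hcard⟩, fun x hx hmem => ?_⟩
      · have := Finset.mem_range.1 (hsub hx)
        simp only [Finset.mem_Ico]
        have : x ≠ 0 := fun h => h0 (h ▸ hx)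
        omega
      · have hlt := Finset.mem_range.1 (hsub hmem)
        have := hcyc x hx
        rw [Nat.mod_eq_of_lt hlt] at this
        exact this hmem
    · rintro ⟨⟨hsub, hcard⟩, hadj⟩
      have hsub' : ∀ x ∈ s, 1 ≤ x ∧ x < M := by
        intro x hx; have := hsub hx; simp only [Finset.mem_Ico] at this; omega
      refine ⟨⟨⟨fun x hx => Finset.mem_range.2 (hsub' x hx).2, hcard⟩, fun x hx => ?_⟩,
        fun h0 => by have := (hsub' 0 h0).1; omega⟩
      by_cases hxM : x + 1 < M
      · rw [Nat.mod_eq_of_lt hxM]; exact hadj x hx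
      · have hxe : x + 1 = M := by have := (hsub' x hx).2; omega
        rw [hxe, Nat.mod_self]
        intro h0; have := (hsub' 0 h0).1; omega
  have hyes : ((cset M (k+1)).filter (fun s => (0:ℕ) ∈ s)).card = (pset 2 (M-1) k).card := by
    refine Finset.card_bij' (fun s _ => s.erase 0) (fun s _ => insert 0 s) ?_ ?_ ?_ ?_
    · intro s hs
      simp only [cset, pset, Finset.mem_filter, Finset.mem_powersetCard] at hs ⊢
      obtain ⟨⟨⟨hsub, hcard⟩, hcyc⟩, h0⟩ := hs
      have h1 : (1:ℕ) ∉ s := by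
        have := hcyc 0 h0
        rwa [Nat.mod_eq_of_lt (by omega)] at this
      refine ⟨⟨fun x hx => ?_, ?_⟩, fun x hx hmem => ?_⟩
      · have hxs := Finset.mem_of_mem_erase hx
        have hxne := Finset.ne_of_mem_erase hx
        have hxlt := Finset.mem_range.1 (hsub hxs)
        simp only [Finset.mem_Ico]
        have hx1 : x ≠ 1 := fun h => h1 (h ▸ hxs)
        have hxM : x ≠ M - 1 := by
          intro h
          have := hcyc x hxs
          rw [show x + 1 = M from by omega, Nat.mod_self] at this
          exact this h0
        omega
      · rw [Finset.card_erase_of_mem h0, hcard]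
        omega
      · have hxs := Finset.mem_of_mem_erase hx
        have hxlt := Finset.mem_range.1 (hsub hxs)
        have hmem' := Finset.mem_of_mem_erase hmem
        have hx1lt := Finset.mem_range.1 (hsub hmem')
        have := hcyc x hxs
        rw [Nat.mod_eq_of_lt hx1lt] at this
        exact this hmem'
    · intro s hs
      simp only [cset, pset, Finset.mem_filter, Finset.mem_powersetCard] at hs ⊢
      obtain ⟨⟨hsub, hcard⟩, hadj⟩ := hs
      have hsub' : ∀ x ∈ s, 2 ≤ x ∧ x < M - 1 := by
        intro x hx; have := hsub hx; simp only [Finset.mem_Ico] at this; omega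
      have h0s : (0:ℕ) ∉ s := fun h => by have := (hsub' 0 h).1; omega
      refine ⟨⟨⟨fun x hx => ?_, ?_⟩, fun x hx => ?_⟩, Finset.mem_insert_self _ _⟩
      · rcases Finset.mem_insert.1 hx with rfl | hx
        · exact Finset.mem_range.2 (by omega)
        · exact Finset.mem_range.2 (by have := (hsub' x hx).2; omega)
      · rw [Finset.card_insert_of_notMem h0s, hcard]
      · rcases Finset.mem_insert.1 hx with rfl | hx
        · rw [Nat.mod_eq_of_lt (by omega)]
          intro hmem
          rcases Finset.mem_insert.1 hmem with h | h
          · omega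
          · have := (hsub' 1 h).1; omega
        · have hxb := hsub' x hx
          rw [Nat.mod_eq_of_lt (by omega)]
          intro hmem
          rcases Finset.mem_insert.1 hmem with h | h
          · omega
          · exact hadj x hx h
    · intro s hs
      simp only [Finset.mem_filter] at hs
      exact Finset.insert_erase hs.2
    · intro s hs
      simp only [pset, Finset.mem_filter, Finset.mem_powersetCard] at hs
      apply Finset.erase_insert
      intro h; have := hs.1.1 h; simp only [Finset.mem_Ico] at this; omega
  rw [hnot] at hsplit
  have c1 : (pset 1 M (k+1)).card = (M-(k+1)).choose (k+1) := by
    have h := pset_card 1 (M-1) (k+1)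
    rw [show 1 + (M-1) = M from by omega] at h
    rwa [show M-1+1-(k+1) = M-(k+1) from by omega] at h
  have c2 : (pset 2 (M-1) k).card = (M-1-(k+1)).choose k := by
    have h := pset_card 2 (M-3) k
    rw [show 2 + (M-3) = M-1 from by omega] at h
    rwa [show M-3+1-k = M-1-(k+1) from by omega] at h
  omega

private lemma card_fix {α : Type*} [Fintype α] [DecidableEq α] (A : Finset α) :
    (Finset.univ.filter (fun π : Equiv.Perm α => ∀ a ∈ A, π a = a)).card
      = Nat.factorial (Fintype.card α - A.card) := by
  classical
  rw [← Fintype.card_subtype]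
  have e : {π : Equiv.Perm α // ∀ a ∈ A, π a = a} ≃ Equiv.Perm {x : α // x ∉ A} := by
    refine Equiv.trans ?_ (Equiv.Perm.subtypeEquivSubtypePerm (fun x => x ∉ A)).symm
    exact Equiv.subtypeEquivRight (fun π => by
      constructor
      · intro hp a ha
        exact hp a (not_not.1 ha)
      · intro hp a ha
        exact hp a (not_not.2 ha))
  rw [Fintype.card_congr e, Fintype.card_perm]
  congr 1
  rw [Fintype.card_subtype_compl, Fintype.card_coe]

private lemma card_extend {α : Type*} [Fintype α] [DecidableEq α] (t : Finset (α × α))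
    (h : ∀ c ∈ t, ∀ c' ∈ t, c ≠ c' → c.1 ≠ c'.1 ∧ c.2 ≠ c'.2) :
    (Finset.univ.filter (fun π : Equiv.Perm α => ∀ c ∈ t, π c.1 = c.2)).card
      = Nat.factorial (Fintype.card α - t.card) := by
  classical
  set A := t.image Prod.fst with hA
  set B := t.image Prod.snd with hB
  have hAcard : A.card = t.card := Finset.card_image_of_injOn (fun c hc c' hc' hfst => by
    by_contra hne; exact (h c hc c' hc' hne).1 hfst)
  have hBcard : B.card = t.card := Finset.card_image_of_injOn (fun c hc c' hc' hsnd => by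
    by_contra hne; exact (h c hc c' hc' hne).2 hsnd)
  have huniq : ∀ x, x ∈ A → ∃! c, c ∈ t ∧ c.1 = x := by
    intro x hx
    obtain ⟨c, hc, hcx⟩ := Finset.mem_image.1 hx
    refine ⟨c, ⟨hc, hcx⟩, ?_⟩
    rintro d ⟨hd, hdx⟩
    by_contra hne
    exact (h d hd c hc hne).1 (hdx.trans hcx.symm)
  set tgtF : α → α := fun x => if hx : x ∈ A
    then (Finset.choose (fun c => c.1 = x) t (huniq x hx)).2 else x with htgtF
  have hkey : ∀ c ∈ t, tgtF c.1 = c.2 := by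
    intro c hc
    have hx : c.1 ∈ A := Finset.mem_image_of_mem _ hc
    have hd := Finset.choose_mem (fun c' => c'.1 = c.1) t (huniq c.1 hx)
    have hdp := Finset.choose_property (fun c' => c'.1 = c.1) t (huniq c.1 hx)
    have hde : Finset.choose (fun c' => c'.1 = c.1) t (huniq c.1 hx) = c := by
      by_contra hne
      exact (h _ hd c hc hne).1 hdp
    rw [htgtF]
    simp only [dif_pos hx, hde]
  have htgtB : ∀ x (hx : x ∈ A), tgtF x ∈ B := by
    intro x hx
    rw [htgtF]
    simp only [dif_pos hx]
    exact Finset.mem_image_of_mem _ (Finset.choose_mem _ t (huniq x hx))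
  have hcompl : Fintype.card (Aᶜ : Finset α) = Fintype.card (Bᶜ : Finset α) := by
    rw [Fintype.card_coe, Fintype.card_coe, Finset.card_compl, Finset.card_compl, hAcard, hBcard]
  set e : (Aᶜ : Finset α) ≃ (Bᶜ : Finset α) := Fintype.equivOfCardEq hcompl with he
  set f : α → α := fun x => if hx : x ∈ A then tgtF x
    else (e ⟨x, Finset.mem_compl.2 hx⟩ : α) with hf
  have hfB : ∀ x, x ∈ A → f x ∈ B := by
    intro x hx; rw [hf]; simp only [dif_pos hx]; exact htgtB x hx
  have hfBc : ∀ x (hx : x ∉ A), f x ∈ Bᶜ := by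
    intro x hx; rw [hf]; simp only [dif_neg hx]; exact Finset.coe_mem _
  have hcell : ∀ x (hx : x ∈ A), ∃ c, c ∈ t ∧ c.1 = x ∧ f x = c.2 := by
    intro x hx
    refine ⟨Finset.choose (fun c => c.1 = x) t (huniq x hx),
      Finset.choose_mem _ t (huniq x hx), Finset.choose_property _ t (huniq x hx), ?_⟩
    rw [hf]; simp only [dif_pos hx]; rw [htgtF]; simp only [dif_pos hx]
  have hfinj : Function.Injective f := by
    intro x y hxy
    by_cases hx : x ∈ A <;> by_cases hy : y ∈ A
    · obtain ⟨c, hc, hcx, hcf⟩ := hcell x hx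
      obtain ⟨d, hd, hdx, hdf⟩ := hcell y hy
      have hcd : c = d := by
        by_contra hne
        exact (h c hc d hd hne).2 (by rw [← hcf, ← hdf, hxy])
      rw [← hcx, ← hdx, hcd]
    · exact absurd (hxy ▸ hfB x hx) (Finset.mem_compl.1 (hfBc y hy))
    · exact absurd (hxy.symm ▸ hfB y hy) (Finset.mem_compl.1 (hfBc x hx))
    · have : (e ⟨x, Finset.mem_compl.2 hx⟩ : α) = (e ⟨y, Finset.mem_compl.2 hy⟩ : α) := by
        rw [hf] at hxy; simpa only [dif_neg hx, dif_neg hy] using hxy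
      have := e.injective (Subtype.coe_injective this)
      exact congrArg Subtype.val this
  have hfbij : Function.Bijective f := (Finite.injective_iff_bijective).1 hfinj
  set π₀ : Equiv.Perm α := Equiv.ofBijective f hfbij with hπ₀
  have hπ₀app : ∀ x, π₀ x = f x := fun _ => rfl
  have hπ₀t : ∀ c ∈ t, π₀ c.1 = c.2 := by
    intro c hc
    rw [hπ₀app]
    obtain ⟨d, hd, hdx, hdf⟩ := hcell c.1 (Finset.mem_image_of_mem _ hc)
    have : d = c := by
      by_contra hne
      exact (h d hd c hc hne).1 hdx
    rw [hdf, this]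
  have := card_fix A
  rw [← hAcard, ← this]
  refine Finset.card_bij' (fun π _ => π₀⁻¹ * π) (fun σ _ => π₀ * σ) ?_ ?_ ?_ ?_
  · intro π hπ
    simp only [Finset.mem_filter, Finset.mem_univ, true_and] at hπ ⊢
    intro a ha
    obtain ⟨c, hc, hcx⟩ := Finset.mem_image.1 ha
    have h1 : π a = c.2 := by rw [← hcx]; exact hπ c hc
    have h2 : π₀ a = c.2 := by rw [← hcx]; exact hπ₀t c hc
    rw [Equiv.Perm.mul_apply, h1, ← h2]
    exact Equiv.symm_apply_apply π₀ a
  · intro σ hσ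
    simp only [Finset.mem_filter, Finset.mem_univ, true_and] at hσ ⊢
    intro c hc
    rw [Equiv.Perm.mul_apply, hσ c.1 (Finset.mem_image_of_mem _ hc)]
    exact hπ₀t c hc
  · intro π _; exact mul_inv_cancel_left π₀ π
  · intro σ _; exact inv_mul_cancel_left π₀ σ

private def tgtC {m : ℕ} (c : ZMod m × Bool) : ZMod m := if c.2 then c.1 + 1 else c.1

private def GoodC {m : ℕ} (t : Finset (ZMod m × Bool)) : Prop :=
  ∀ c ∈ t, ∀ c' ∈ t, c ≠ c' → c.1 ≠ c'.1 ∧ tgtC c ≠ tgtC c'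

private instance {m : ℕ} : DecidablePred (@GoodC m) := fun t =>
  decidable_of_iff (∀ c ∈ t, ∀ c' ∈ t, c ≠ c' → c.1 ≠ c'.1 ∧ tgtC c ≠ tgtC c') Iff.rfl

private lemma good_count (m k : ℕ) [NeZero m] (hm : 2 ≤ m) :
    ((Finset.powersetCard k (Finset.univ : Finset (ZMod m × Bool))).filter
        (fun t => GoodC t)).card = (cset (2*m) k).card := by
  classical
  haveI : Fact (1 < m) := ⟨by omega⟩
  set ψ : ZMod m × Bool → ℕ := fun c => 2 * c.1.val + c.2.toNat with hψ
  have hψlt : ∀ c, ψ c < 2*m := by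
    intro c
    have := ZMod.val_lt c.1
    cases hb : c.2 <;> simp [hψ, hb] <;> omega
  have hψinj : Function.Injective ψ := by
    rintro ⟨i, b⟩ ⟨j, b'⟩ hcd
    simp only [hψ] at hcd
    have hvb : i.val = j.val ∧ b = b' := by
      cases b <;> cases b' <;> simp at hcd <;>
        first | exact ⟨by omega, rfl⟩ | exact absurd hcd (by omega) | omega
    obtain ⟨h1, rfl⟩ := hvb
    rw [ZMod.val_injective m h1]
  have hval1 : ∀ i : ZMod m, (i + 1).val = (i.val + 1) % m := by
    intro i; rw [ZMod.val_add, ZMod.val_one]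
  have hmod : ∀ i : ZMod m, (2 * i.val + 1 + 1) % (2*m) = 2 * (i+1).val := by
    intro i
    rw [hval1, show 2*i.val+1+1 = 2*(i.val+1) from by ring]
    exact Nat.mul_mod_mul_left 2 (i.val+1) m
  refine Finset.card_bij (fun (t : Finset (ZMod m × Bool)) _ => t.image ψ) ?_ ?_ ?_
  · -- maps into cset
    intro t ht
    simp only [Finset.mem_filter, Finset.mem_powersetCard] at ht
    obtain ⟨⟨-, hcard⟩, hgood⟩ := ht
    simp only [cset, Finset.mem_filter, Finset.mem_powersetCard]
    refine ⟨⟨fun x hx => ?_, ?_⟩, fun x hx hmem => ?_⟩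
    · obtain ⟨c, _, rfl⟩ := Finset.mem_image.1 hx
      exact Finset.mem_range.2 (hψlt c)
    · rw [Finset.card_image_of_injective _ hψinj, hcard]
    · obtain ⟨c, hc, rfl⟩ := Finset.mem_image.1 hx
      obtain ⟨d, hd, hdx⟩ := Finset.mem_image.1 hmem
      rcases c with ⟨i, b⟩
      cases b
      · have hx1 : (ψ (i, false) + 1) % (2*m) = 2 * i.val + 1 := by
          have := ZMod.val_lt i
          rw [Nat.mod_eq_of_lt (by simp [hψ]; omega)]
          simp [hψ]
        rw [hx1] at hdx
        rcases d with ⟨j, b'⟩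
        cases b'
        · simp [hψ] at hdx; omega
        · simp [hψ] at hdx
          have hij : j = i := ZMod.val_injective m (by omega)
          subst hij
          exact absurd rfl ((hgood (j, false) hc (j, true) hd (by simp)).1)
      · have hx1 : (ψ (i, true) + 1) % (2*m) = 2 * (i+1).val := by
          simp only [hψ]
          simpa using hmod i
        rw [hx1] at hdx
        rcases d with ⟨j, b'⟩
        cases b'
        · simp [hψ] at hdx
          have hij : j = i + 1 := ZMod.val_injective m (by omega)
          subst hij
          have := (hgood (i, true) hc (i+1, false) hd (by simp)).2
          exact absurd (by simp [tgtC]) this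
        · simp [hψ] at hdx; omega
  · intro t1 h1 t2 h2 heq
    exact Finset.image_injective hψinj heq
  · intro s hs
    simp only [cset, Finset.mem_filter, Finset.mem_powersetCard] at hs
    obtain ⟨⟨hsub, hcard⟩, hcyc⟩ := hs
    set φ : ℕ → ZMod m × Bool := fun x => (((x/2 : ℕ) : ZMod m), decide (x % 2 = 1)) with hφ
    have hψφ : ∀ x ∈ s, ψ (φ x) = x := by
      intro x hx
      have hxlt := Finset.mem_range.1 (hsub hx)
      simp only [hψ, hφ]
      rcases Nat.even_or_odd x with he | ho
      · have h2 : x % 2 = 0 := Nat.even_iff.1 he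
        rw [ZMod.val_natCast_of_lt (by omega)]
        simp [h2]
        omega
      · have h2 : x % 2 = 1 := Nat.odd_iff.1 ho
        rw [ZMod.val_natCast_of_lt (by omega)]
        simp [h2]
        omega
    have himg : (s.image φ).image ψ = s := by
      rw [Finset.image_image]
      exact (Finset.image_congr (fun x hx => hψφ x hx)).trans Finset.image_id
    refine ⟨s.image φ, ?_, himg⟩
    simp only [Finset.mem_filter, Finset.mem_powersetCard]
    have hinjOn : Set.InjOn φ s := by
      intro x hx y hy hxy
      rw [← hψφ x hx, ← hψφ y hy, hxy]
    refine ⟨⟨Finset.subset_univ _, by rw [Finset.card_image_of_injOn hinjOn, hcard]⟩, ?_⟩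
    have hx2m : ∀ x ∈ s, x < 2*m := fun x hx => Finset.mem_range.1 (hsub hx)
    have hfstval : ∀ x, x < 2*m → (φ x).1.val = x / 2 := fun x h =>
      show ((x/2 : ℕ) : ZMod m).val = x/2 from ZMod.val_natCast_of_lt (by omega)
    have hsndeq : ∀ x : ℕ, (φ x).2 = decide (x % 2 = 1) := fun x => rfl
    have htC : ∀ c : ZMod m × Bool, tgtC c = if c.2 then c.1 + 1 else c.1 := fun c => rfl
    intro c hc c' hc' hne
    obtain ⟨x, hx, rfl⟩ := Finset.mem_image.1 hc
    obtain ⟨y, hy, rfl⟩ := Finset.mem_image.1 hc'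
    have hxlt := hx2m x hx
    have hylt := hx2m y hy
    have hvx := hfstval x hxlt
    have hvy := hfstval y hylt
    constructor
    · intro hrow
      have hb : (φ x).2 ≠ (φ y).2 := fun hb => hne (Prod.ext hrow hb)
      have hmod2 : x % 2 ≠ y % 2 := by
        intro h
        exact hb (by rw [hsndeq, hsndeq, h])
      have hv : x / 2 = y / 2 := by
        have hval := congrArg ZMod.val hrow
        rw [hvx, hvy] at hval
        exact hval
      rcases (show y = x + 1 ∨ x = y + 1 by omega) with hxy | hxy
      · have hc0 := hcyc x hx
        rw [Nat.mod_eq_of_lt (by omega)] at hc0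
        exact hc0 (hxy ▸ hy)
      · have hc0 := hcyc y hy
        rw [Nat.mod_eq_of_lt (by omega)] at hc0
        exact hc0 (hxy ▸ hx)
    · intro htgt
      by_cases hx2 : x % 2 = 1 <;> by_cases hy2 : y % 2 = 1
      · have hbx : (φ x).2 = true := by rw [hsndeq]; simp [hx2]
        have hby : (φ y).2 = true := by rw [hsndeq]; simp [hy2]
        have e1 : tgtC (φ x) = (φ x).1 + 1 := by rw [htC (φ x), hbx]; exact if_pos rfl
        have e2 : tgtC (φ y) = (φ y).1 + 1 := by rw [htC (φ y), hby]; exact if_pos rfl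
        rw [e1, e2] at htgt
        exact hne (Prod.ext (add_right_cancel htgt) (hbx.trans hby.symm))
      · have hbx : (φ x).2 = true := by rw [hsndeq]; simp [hx2]
        have hby : (φ y).2 = false := by rw [hsndeq]; simp [hy2]
        have e1 : tgtC (φ x) = (φ x).1 + 1 := by rw [htC (φ x), hbx]; exact if_pos rfl
        have e2 : tgtC (φ y) = (φ y).1 := by rw [htC (φ y), hby]; exact if_neg Bool.false_ne_true
        rw [e1, e2] at htgt
        have hstep : (x+1) % (2*m) = y := by
          rw [show x + 1 = 2 * (φ x).1.val + 1 + 1 from by omega, hmod ((φ x).1), htgt, hvy]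
          omega
        exact (hcyc x hx) (by rw [hstep]; exact hy)
      · have hbx : (φ x).2 = false := by rw [hsndeq]; simp [hx2]
        have hby : (φ y).2 = true := by rw [hsndeq]; simp [hy2]
        have e1 : tgtC (φ x) = (φ x).1 := by rw [htC (φ x), hbx]; exact if_neg Bool.false_ne_true
        have e2 : tgtC (φ y) = (φ y).1 + 1 := by rw [htC (φ y), hby]; exact if_pos rfl
        rw [e1, e2] at htgt
        have hstep : (y+1) % (2*m) = x := by
          rw [show y + 1 = 2 * (φ y).1.val + 1 + 1 from by omega, hmod ((φ y).1), ← htgt, hvx]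
          omega
        exact (hcyc y hy) (by rw [hstep]; exact hx)
      · have hbx : (φ x).2 = false := by rw [hsndeq]; simp [hx2]
        have hby : (φ y).2 = false := by rw [hsndeq]; simp [hy2]
        have e1 : tgtC (φ x) = (φ x).1 := by rw [htC (φ x), hbx]; exact if_neg Bool.false_ne_true
        have e2 : tgtC (φ y) = (φ y).1 := by rw [htC (φ y), hby]; exact if_neg Bool.false_ne_true
        rw [e1, e2] at htgt
        exact hne (Prod.ext htgt (hbx.trans hby.symm))

private lemma menage_eq_sum (m : ℕ) (hm : 2 ≤ m) :
    (menage m : ℤ) = ∑ k ∈ Finset.range (2*m+1),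
      (-1)^k * ((cset (2*m) k).card : ℤ) * (Nat.factorial (m-k)) := by
  classical
  haveI : NeZero m := ⟨by omega⟩
  haveI : Fact (1 < m) := ⟨by omega⟩
  have hinj : ∀ c c' : ZMod m × Bool, c.1 = c'.1 → tgtC c = tgtC c' → c = c' := by
    rintro ⟨i, b⟩ ⟨j, b'⟩ h1 h2
    simp only at h1
    subst h1
    cases b <;> cases b'
    · rfl
    · exact absurd (left_eq_add.1 (h2 : i = i + 1)) one_ne_zero
    · exact absurd (left_eq_add.1 ((h2 : i + 1 = i).symm)) one_ne_zero
    · rfl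
  -- Step 1: menage as a sum of products of indicators
  have h1 : (menage m : ℤ) = ∑ π : Equiv.Perm (ZMod m), ∏ c : ZMod m × Bool,
      (1 - (if π c.1 = tgtC c then (1:ℤ) else 0)) := by
    rw [menage, Nat.card_eq_fintype_card, Fintype.card_subtype, Finset.card_filter]
    push_cast
    refine Finset.sum_congr rfl fun π _ => ?_
    by_cases hπ : ∀ i : ZMod m, π i ≠ i ∧ π i ≠ i + 1
    · rw [if_pos hπ, Finset.prod_eq_one]
      rintro ⟨i, b⟩ _
      cases b
      · simp [tgtC, (hπ i).1]
      · simp [tgtC, (hπ i).2]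
    · rw [if_neg hπ]
      push_neg at hπ
      obtain ⟨i, hi⟩ := hπ
      by_cases hfix : π i = i
      · refine (Finset.prod_eq_zero (Finset.mem_univ ((i, false) : ZMod m × Bool)) ?_).symm
        simp [tgtC, hfix]
      · have hsucc : π i = i + 1 := by tauto
        refine (Finset.prod_eq_zero (Finset.mem_univ ((i, true) : ZMod m × Bool)) ?_).symm
        simp [tgtC, hsucc]
  -- Step 2: expand the product over subsets
  have h2 : (menage m : ℤ) = ∑ t ∈ (Finset.univ : Finset (ZMod m × Bool)).powerset,
      (-1)^t.card * ((Finset.univ.filter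
        (fun π : Equiv.Perm (ZMod m) => ∀ c ∈ t, π c.1 = tgtC c)).card : ℤ) := by
    rw [h1]
    have hexp : ∀ π : Equiv.Perm (ZMod m),
        (∏ c : ZMod m × Bool, (1 - (if π c.1 = tgtC c then (1:ℤ) else 0)))
        = ∑ t ∈ (Finset.univ : Finset (ZMod m × Bool)).powerset,
            (-1)^t.card * ∏ c ∈ t, (if π c.1 = tgtC c then (1:ℤ) else 0) := by
      intro π
      have : (∏ c : ZMod m × Bool, (1 - (if π c.1 = tgtC c then (1:ℤ) else 0)))
          = ∏ c : ZMod m × Bool, ((-(if π c.1 = tgtC c then (1:ℤ) else 0)) + 1) := by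
        refine Finset.prod_congr rfl fun c _ => by ring
      rw [this, Finset.prod_add]
      refine Finset.sum_congr rfl fun t _ => ?_
      rw [Finset.prod_const_one, mul_one]
      have : (∏ c ∈ t, (-(if π c.1 = tgtC c then (1:ℤ) else 0)))
          = ∏ c ∈ t, ((-1) * (if π c.1 = tgtC c then (1:ℤ) else 0)) := by
        refine Finset.prod_congr rfl fun c _ => by ring
      rw [this, Finset.prod_mul_distrib, Finset.prod_const]
    rw [Finset.sum_congr rfl fun π _ => hexp π, Finset.sum_comm]
    refine Finset.sum_congr rfl fun t _ => ?_
    rw [← Finset.mul_sum, Finset.card_filter]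
    push_cast
    congr 1
    refine Finset.sum_congr rfl fun π _ => ?_
    by_cases hall : ∀ c ∈ t, π c.1 = tgtC c
    · rw [if_pos hall, Finset.prod_eq_one]
      intro c hc
      rw [if_pos (hall c hc)]
    · rw [if_neg hall]
      push_neg at hall
      obtain ⟨c, hc, hne⟩ := hall
      exact Finset.prod_eq_zero hc (if_neg hne)
  -- Step 3: evaluate the permanent-style counts
  have h3 : ∀ t : Finset (ZMod m × Bool),
      ((Finset.univ.filter
        (fun π : Equiv.Perm (ZMod m) => ∀ c ∈ t, π c.1 = tgtC c)).card : ℤ)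
      = if GoodC t then ((Nat.factorial (m - t.card) : ℕ) : ℤ) else 0 := by
    intro t
    by_cases hg : GoodC t
    · rw [if_pos hg]
      have himg : ∀ π : Equiv.Perm (ZMod m),
          (∀ c ∈ t.image (fun c => (c.1, tgtC c)), π c.1 = c.2) ↔ (∀ c ∈ t, π c.1 = tgtC c) := by
        intro π
        constructor
        · intro h c hc
          exact h (c.1, tgtC c) (Finset.mem_image_of_mem _ hc)
        · intro h e he
          obtain ⟨c, hc, rfl⟩ := Finset.mem_image.1 he
          exact h c hc
      have hmapinj : Function.Injective (fun c : ZMod m × Bool => (c.1, tgtC c)) := by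
        intro c c' hcc
        have h1 := congrArg Prod.fst hcc
        have h2 := congrArg Prod.snd hcc
        exact hinj c c' h1 h2
      have := card_extend (t.image (fun c => (c.1, tgtC c))) ?_
      · rw [Finset.filter_congr (fun π _ => himg π)] at this
        rw [this, Finset.card_image_of_injective _ hmapinj]
        norm_num [ZMod.card]
      · intro e he e' he' hnee
        obtain ⟨c, hc, rfl⟩ := Finset.mem_image.1 he
        obtain ⟨c', hc', rfl⟩ := Finset.mem_image.1 he'
        have hne : c ≠ c' := fun h => hnee (by rw [h])
        exact ⟨(hg c hc c' hc' hne).1, (hg c hc c' hc' hne).2⟩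
    · rw [if_neg hg]
      have hemp : (Finset.univ.filter
          (fun π : Equiv.Perm (ZMod m) => ∀ c ∈ t, π c.1 = tgtC c)) = ∅ := by
        rw [Finset.filter_eq_empty_iff]
        intro π _
        intro hall
        apply hg
        intro c hc c' hc' hne
        constructor
        · intro hrow
          apply hne
          apply hinj c c' hrow
          rw [← hall c hc, ← hall c' hc', hrow]
        · intro htgt
          apply hne
          apply hinj c c' _ htgt
          apply π.injective
          rw [hall c hc, hall c' hc', htgt]
      rw [hemp, Finset.card_empty]
      simp
  -- Step 4: group by cardinality
  rw [h2, Finset.sum_congr rfl (fun t _ => by rw [h3 t])]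
  rw [Finset.powerset_card_disjiUnion]; refine (Finset.sum_disjiUnion _ _ _).trans ?_
  have hcard_univ : (Finset.univ : Finset (ZMod m × Bool)).card = 2*m := by
    rw [Finset.card_univ, Fintype.card_prod, ZMod.card, Fintype.card_bool]
    ring
  rw [hcard_univ]
  refine Finset.sum_congr rfl fun k hk => ?_
  have : ∀ t ∈ Finset.powersetCard k (Finset.univ : Finset (ZMod m × Bool)),
      (-1:ℤ)^t.card * (if GoodC t then ((Nat.factorial (m - t.card) : ℕ) : ℤ) else 0)
      = if GoodC t then (-1:ℤ)^k * (Nat.factorial (m - k) : ℤ) else 0 := by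
    intro t ht
    have := (Finset.mem_powersetCard.1 ht).2
    rw [this]
    by_cases hg : GoodC t
    · rw [if_pos hg, if_pos hg]
    · rw [if_neg hg, if_neg hg, mul_zero]
  rw [Finset.sum_congr rfl this, Finset.sum_ite, Finset.sum_const, Finset.sum_const_zero,
    add_zero, good_count m k hm]
  push_cast
  ring

private lemma reflect_sum (M : ℕ) :
    ∑ k ∈ Finset.range (2*M+1), (-1:ℤ)^k * ((2*M-k).choose k : ℤ) * (Nat.factorial (M-k))
      = Vseq M := by
  have htrunc : ∑ k ∈ Finset.range (2*M+1), (-1:ℤ)^k * ((2*M-k).choose k : ℤ)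
        * (Nat.factorial (M-k))
      = ∑ k ∈ Finset.range (M+1), (-1:ℤ)^k * ((2*M-k).choose k : ℤ)
        * (Nat.factorial (M-k)) := by
    symm
    refine Finset.sum_subset (Finset.range_subset_range.2 (by omega)) ?_
    intro k hk hk'
    simp only [Finset.mem_range] at hk hk'
    have : (2*M-k).choose k = 0 := Nat.choose_eq_zero_of_lt (by omega)
    rw [this]
    push_cast
    ring
  rw [htrunc, ← Finset.sum_range_reflect]
  refine Finset.sum_congr rfl fun j hj => ?_
  simp only [Finset.mem_range] at hj
  have hj' : j ≤ M := by omega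
  rw [show M + 1 - 1 - j = M - j from by omega]
  have hc : (2*M - (M-j)).choose (M-j) = (M+j).choose (2*j) := by
    rw [show 2*M - (M-j) = M+j from by omega, show M - j = (M+j) - 2*j from by omega,
      Nat.choose_symm (by omega)]
  have hs : (-1:ℤ)^(M-j) = (-1)^(M+j) := by
    rw [show M+j = (M-j)+2*j from by omega, pow_add, pow_mul]
    simp
  rw [hc, hs, show M - (M-j) = j from by omega, tt]

private lemma menage_eq_V (M : ℕ) (hM : 1 ≤ M) :
    (menage (M+1) : ℤ) = Vseq (M+1) - Vseq M := by
  rw [menage_eq_sum (M+1) (by omega)]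
  have hsplit : ∀ k ∈ Finset.range (2*(M+1)+1),
      (-1:ℤ)^k * ((cset (2*(M+1)) k).card : ℤ) * (Nat.factorial (M+1-k))
      = ((-1:ℤ)^k * ((2*(M+1)-k).choose k : ℤ) * (Nat.factorial (M+1-k)))
        + (if k = 0 then 0 else (-1:ℤ)^k * ((2*(M+1)-1-k).choose (k-1) : ℤ)
            * (Nat.factorial (M+1-k))) := by
    intro k _
    match k with
    | 0 =>
      rw [cset_zero]
      simp
    | (j+1) =>
      rw [cset_card (2*(M+1)) j (by omega), if_neg (by omega)]
      push_cast
      ring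
  rw [Finset.sum_congr rfl hsplit, Finset.sum_add_distrib]
  have h1 : ∑ k ∈ Finset.range (2*(M+1)+1),
      (-1:ℤ)^k * ((2*(M+1)-k).choose k : ℤ) * (Nat.factorial (M+1-k)) = Vseq (M+1) :=
    reflect_sum (M+1)
  have h2 : ∑ k ∈ Finset.range (2*(M+1)+1),
      (if k = 0 then 0 else (-1:ℤ)^k * ((2*(M+1)-1-k).choose (k-1) : ℤ)
        * (Nat.factorial (M+1-k))) = - Vseq M := by
    rw [show 2*(M+1)+1 = (2*M+2)+1 from by omega, Finset.sum_range_succ']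
    simp only [if_neg (Nat.succ_ne_zero _), if_pos rfl, add_zero]
    have : ∀ i ∈ Finset.range (2*M+2),
        (-1:ℤ)^(i+1) * ((2*(M+1)-1-(i+1)).choose (i+1-1) : ℤ) * (Nat.factorial (M+1-(i+1)))
        = -((-1:ℤ)^i * ((2*M-i).choose i : ℤ) * (Nat.factorial (M-i))) := by
      intro i _
      rw [show 2*(M+1)-1-(i+1) = 2*M-i from by omega, show i+1-1 = i from by omega,
        show M+1-(i+1) = M-i from by omega, pow_succ]
      ring
    rw [Finset.sum_congr rfl this, Finset.sum_neg_distrib]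
    congr 1
    have htr : ∑ i ∈ Finset.range (2*M+2),
        (-1:ℤ)^i * ((2*M-i).choose i : ℤ) * (Nat.factorial (M-i))
        = ∑ i ∈ Finset.range (2*M+1),
        (-1:ℤ)^i * ((2*M-i).choose i : ℤ) * (Nat.factorial (M-i)) := by
      rw [Finset.sum_range_succ]
      have : (2*M-(2*M+1)).choose (2*M+1) = 0 := Nat.choose_eq_zero_of_lt (by omega)
      rw [this]
      push_cast
      ring
    rw [htr, reflect_sum M]
    simp
  rw [h1, h2]
  ring

theorem menage_recurrence (n : ℕ) (hn : 6 ≤ n) :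
    (menage n : ℤ) = n * menage (n - 1) + 2 * menage (n - 2)
      - (n - 4) * menage (n - 3) - menage (n - 4) := by
  obtain ⟨N, rfl⟩ : ∃ N, n = N + 6 := ⟨n - 6, by omega⟩
  have e6 : (menage (N+6) : ℤ) = Vseq (N+6) - Vseq (N+5) := menage_eq_V (N+5) (by omega)
  have e5 : (menage (N+5) : ℤ) = Vseq (N+5) - Vseq (N+4) := menage_eq_V (N+4) (by omega)
  have e4 : (menage (N+4) : ℤ) = Vseq (N+4) - Vseq (N+3) := menage_eq_V (N+3) (by omega)
  have e3 : (menage (N+3) : ℤ) = Vseq (N+3) - Vseq (N+2) := menage_eq_V (N+2) (by omega)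
  have e2 : (menage (N+2) : ℤ) = Vseq (N+2) - Vseq (N+1) := menage_eq_V (N+1) (by omega)
  rw [show N+6-1 = N+5 from by omega, show N+6-2 = N+4 from by omega,
    show N+6-3 = N+3 from by omega, show N+6-4 = N+2 from by omega,
    e6, e5, e4, e3, e2]
  have hV := V_target N
  push_cast
  linear_combination hV
end

section
/- For the 'straight-table ménage' board on {1,…,n} with forbidden cells (i,i) for 1 ≤ i ≤ n and (i,i+1) for 1 ≤ i ≤ n-1, the number of k-rook non-attacking placements equals (2n-k choose k). -/
/-- No two cells of `T` share a row or a column. -/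
def NonAttacking (T : Finset (ℕ × ℕ)) : Prop :=
  ∀ c ∈ T, ∀ d ∈ T, c ≠ d → c.1 ≠ d.1 ∧ c.2 ≠ d.2

/-- The number of non-attacking placements of `k` rooks on the board `B`. -/
noncomputable def rookCount (B : Finset (ℕ × ℕ)) (k : ℕ) : ℕ :=
  Nat.card {T : Finset (ℕ × ℕ) // T ⊆ B ∧ T.card = k ∧ NonAttacking T}

/-- The straight-table ménage board: cells (i,i) for 1 ≤ i ≤ n and (i,i+1) for 1 ≤ i ≤ n-1. -/
def straightBoard (n : ℕ) : Finset (ℕ × ℕ) :=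
  ((Finset.Icc 1 n).image fun i => (i, i)) ∪
    ((Finset.Icc 1 (n - 1)).image fun i => (i, i + 1))

/-! ### Auxiliary machinery -/

def cell0 (t : ℕ) : ℕ × ℕ := ((t + 2) / 2, (t + 3) / 2)

def dec0 (p : ℕ × ℕ) : ℕ := if p.1 = p.2 then 2 * p.1 - 2 else 2 * p.1 - 1

lemma dec0_cell0 (t : ℕ) : dec0 (cell0 t) = t := by
  unfold dec0
  split_ifs with h <;> simp only [cell0] at h ⊢ <;> omega

lemma cell0_injective : Function.Injective cell0 := by
  intro a b h
  have := congrArg dec0 h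
  rwa [dec0_cell0, dec0_cell0] at this

def Sparse (S : Finset ℕ) : Prop := ∀ a ∈ S, a + 1 ∉ S

instance : DecidablePred Sparse := fun S => by unfold Sparse; infer_instance
instance : DecidablePred NonAttacking := fun T => by unfold NonAttacking; infer_instance

lemma nonAttacking_image_cell0 (S : Finset ℕ) :
    NonAttacking (S.image cell0) ↔ Sparse S := by
  constructor
  · intro h a ha hb
    have h1 : cell0 a ∈ S.image cell0 := Finset.mem_image_of_mem _ ha
    have h2 : cell0 (a + 1) ∈ S.image cell0 := Finset.mem_image_of_mem _ hb
    have hne : cell0 a ≠ cell0 (a + 1) := fun e => by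
      have := congrArg dec0 e; rw [dec0_cell0, dec0_cell0] at this; omega
    have := h _ h1 _ h2 hne
    simp only [cell0, ne_eq] at this
    omega
  · intro h c hc d hd hne
    obtain ⟨a, ha, rfl⟩ := Finset.mem_image.mp hc
    obtain ⟨b, hb, rfl⟩ := Finset.mem_image.mp hd
    have hab : a ≠ b := fun e => hne (by rw [e])
    have h1 : b ≠ a + 1 := fun e => h a ha (e ▸ hb)
    have h2 : a ≠ b + 1 := fun e => h b hb (e ▸ ha)
    simp only [cell0, ne_eq]
    omega

lemma straightBoard_eq (n : ℕ) :
    straightBoard n = (Finset.range (2 * n - 1)).image cell0 := by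
  ext ⟨i, j⟩
  simp only [straightBoard, Finset.mem_union, Finset.mem_image, Finset.mem_Icc,
    Finset.mem_range, cell0, Prod.mk.injEq]
  constructor
  · rintro (⟨a, ⟨h1, h2⟩, h3, h4⟩ | ⟨a, ⟨h1, h2⟩, h3, h4⟩)
    · exact ⟨2 * a - 2, by omega, by omega, by omega⟩
    · exact ⟨2 * a - 1, by omega, by omega, by omega⟩
  · rintro ⟨t, ht, h1, h2⟩
    rcases Nat.even_or_odd t with ⟨u, hu⟩ | ⟨u, hu⟩
    · left; exact ⟨u + 1, ⟨by omega, by omega⟩, by omega, by omega⟩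
    · right; exact ⟨u + 1, ⟨by omega, by omega⟩, by omega, by omega⟩

/-- The number of sparse `k`-subsets of `range m`. -/
def F (m k : ℕ) : ℕ :=
  ((Finset.range m).powerset.filter fun S => S.card = k ∧ Sparse S).card

lemma F_zero (m : ℕ) : F m 0 = 1 := by
  unfold F
  have h : ((Finset.range m).powerset.filter fun S => S.card = 0 ∧ Sparse S) = {∅} := by
    ext S
    simp only [Finset.mem_filter, Finset.mem_powerset, Finset.mem_singleton,
      Finset.card_eq_zero]
    constructor
    · rintro ⟨-, rfl, -⟩; rfl
    · rintro rfl
      exact ⟨Finset.empty_subset _, rfl, fun a ha => absurd ha (Finset.notMem_empty a)⟩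
  rw [h, Finset.card_singleton]

lemma F_vanish (m k : ℕ) (h : m < k) : F m k = 0 := by
  unfold F
  rw [Finset.card_eq_zero, Finset.filter_eq_empty_iff]
  rintro S hS ⟨hcard, -⟩
  have := Finset.card_le_card (Finset.mem_powerset.mp hS)
  rw [Finset.card_range] at this
  omega

lemma F_one_one : F 1 1 = 1 := by
  unfold F
  have h : ((Finset.range 1).powerset.filter fun S => S.card = 1 ∧ Sparse S) = {{0}} := by
    ext S
    simp only [Finset.mem_filter, Finset.mem_powerset, Finset.mem_singleton, Finset.range_one]
    constructor
    · rintro ⟨hsub, hcard, -⟩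
      rcases Finset.subset_singleton_iff.mp hsub with rfl | rfl
      · simp at hcard
      · rfl
    · rintro rfl
      refine ⟨Finset.Subset.refl _, rfl, fun a ha hb => ?_⟩
      simp only [Finset.mem_singleton] at ha hb
      omega
  rw [h, Finset.card_singleton]

lemma F_rec (m k : ℕ) : F (m + 2) (k + 1) = F (m + 1) (k + 1) + F m k := by
  classical
  have key := Finset.card_filter_add_card_filter_not
    (s := (Finset.range (m + 2)).powerset.filter fun S => S.card = k + 1 ∧ Sparse S)
    (p := fun S => m + 1 ∈ S)
  have h1 : ((((Finset.range (m + 2)).powerset.filter fun S => S.card = k + 1 ∧ Sparse S)).filter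
        fun S => ¬ (m + 1 ∈ S))
      = (Finset.range (m + 1)).powerset.filter fun S => S.card = k + 1 ∧ Sparse S := by
    ext S
    simp only [Finset.mem_filter, Finset.mem_powerset]
    constructor
    · rintro ⟨⟨hsub, hq⟩, hnot⟩
      refine ⟨fun x hx => ?_, hq⟩
      have hx1 := Finset.mem_range.mp (hsub hx)
      have hx2 : x ≠ m + 1 := fun e => hnot (e ▸ hx)
      exact Finset.mem_range.mpr (by omega)
    · rintro ⟨hsub, hq⟩
      refine ⟨⟨fun x hx => ?_, hq⟩, fun hmem => ?_⟩
      · have := Finset.mem_range.mp (hsub hx); exact Finset.mem_range.mpr (by omega)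
      · have := Finset.mem_range.mp (hsub hmem); omega
  have h2 : ((((Finset.range (m + 2)).powerset.filter fun S => S.card = k + 1 ∧ Sparse S)).filter
        fun S => m + 1 ∈ S).card
      = F m k := by
    unfold F
    refine Finset.card_bij' (fun S _ => S.erase (m + 1)) (fun S _ => insert (m + 1) S)
      ?_ ?_ ?_ ?_
    · rintro S hS
      simp only [Finset.mem_filter, Finset.mem_powerset] at hS ⊢
      obtain ⟨⟨hsub, hcard, hsp⟩, hmem⟩ := hS
      refine ⟨fun x hx => ?_, ?_, fun a ha hb => ?_⟩
      · obtain ⟨hne, hxS⟩ := Finset.mem_erase.mp hx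
        have hx2 := Finset.mem_range.mp (hsub hxS)
        have hx3 : x ≠ m := fun e => hsp m (e ▸ hxS) hmem
        exact Finset.mem_range.mpr (by omega)
      · rw [Finset.card_erase_of_mem hmem, hcard]; omega
      · exact hsp a (Finset.mem_of_mem_erase ha) (Finset.mem_of_mem_erase hb)
    · rintro S hS
      simp only [Finset.mem_filter, Finset.mem_powerset] at hS ⊢
      obtain ⟨hsub, hcard, hsp⟩ := hS
      have hnotmem : m + 1 ∉ S := fun h => by
        have := Finset.mem_range.mp (hsub h); omega
      refine ⟨⟨fun x hx => ?_, ?_, fun a ha hb => ?_⟩, Finset.mem_insert_self _ _⟩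
      · rcases Finset.mem_insert.mp hx with rfl | hx
        · exact Finset.mem_range.mpr (by omega)
        · have := Finset.mem_range.mp (hsub hx)
          exact Finset.mem_range.mpr (by omega)
      · rw [Finset.card_insert_of_notMem hnotmem, hcard]
      · rcases Finset.mem_insert.mp ha with rfl | ha
        · rcases Finset.mem_insert.mp hb with he | hb
          · omega
          · exact absurd (Finset.mem_range.mp (hsub hb)) (by omega)
        · have hlt := Finset.mem_range.mp (hsub ha)
          rcases Finset.mem_insert.mp hb with he | hb
          · omega
          · exact hsp a ha hb
    · rintro S hS
      simp only [Finset.mem_filter] at hS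
      exact Finset.insert_erase hS.2
    · rintro S hS
      simp only [Finset.mem_filter, Finset.mem_powerset] at hS
      have hnotmem : m + 1 ∉ S := fun h => by
        have := Finset.mem_range.mp (hS.1 h); omega
      exact Finset.erase_insert hnotmem
  rw [h1, h2] at key
  have h3 : (((Finset.range (m + 2)).powerset.filter
      fun S => S.card = k + 1 ∧ Sparse S)).card = F (m + 2) (k + 1) := rfl
  have h4 : (((Finset.range (m + 1)).powerset.filter
      fun S => S.card = k + 1 ∧ Sparse S)).card = F (m + 1) (k + 1) := rfl
  rw [h3, h4] at key
  omega

lemma F_eq (m : ℕ) : ∀ k, F m k = (m + 1 - k).choose k := by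
  induction m using Nat.strong_induction_on with
  | _ m ih =>
    match m with
    | 0 =>
      rintro (_ | k)
      · simpa using F_zero 0
      · rw [F_vanish 0 (k + 1) (by omega)]
        have h : 0 + 1 - (k + 1) = 0 := by omega
        rw [h, Nat.choose_zero_succ]
    | 1 =>
      rintro (_ | _ | k)
      · simpa using F_zero 1
      · simpa using F_one_one
      · rw [F_vanish 1 (k + 2) (by omega)]
        have h : 1 + 1 - (k + 2) = 0 := by omega
        rw [h, Nat.choose_zero_succ]
    | (m + 2) =>
      rintro (_ | k)
      · simpa using F_zero (m + 2)
      · rw [F_rec, ih (m + 1) (by omega), ih m (by omega)]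
        rcases le_or_gt k (m + 1) with h | h
        · have e1 : m + 2 + 1 - (k + 1) = (m + 1 - k) + 1 := by omega
          have e2 : m + 1 + 1 - (k + 1) = m + 1 - k := by omega
          rw [e1, e2, Nat.choose_succ_succ']
          omega
        · have e1 : m + 2 + 1 - (k + 1) = 0 := by omega
          have e2 : m + 1 + 1 - (k + 1) = 0 := by omega
          have e3 : m + 1 - k = 0 := by omega
          obtain ⟨k', rfl⟩ : ∃ k', k = k' + 1 := ⟨k - 1, by omega⟩
          rw [e1, e2, e3, Nat.choose_zero_succ, Nat.choose_zero_succ]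

lemma rookCount_eq (B : Finset (ℕ × ℕ)) (k : ℕ) :
    rookCount B k = (B.powerset.filter fun T => T.card = k ∧ NonAttacking T).card := by
  rw [rookCount, ← Nat.card_eq_finsetCard]
  exact Nat.card_congr (Equiv.subtypeEquivRight fun T => by
    simp [Finset.mem_filter, Finset.mem_powerset, and_assoc])

lemma card_board (n k : ℕ) :
    ((straightBoard n).powerset.filter fun T => T.card = k ∧ NonAttacking T).card
      = F (2 * n - 1) k := by
  rw [straightBoard_eq]
  unfold F
  set M := 2 * n - 1
  refine Finset.card_bij' (fun T _ => T.image dec0) (fun S _ => S.image cell0) ?_ ?_ ?_ ?_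
  · rintro T hT
    simp only [Finset.mem_filter, Finset.mem_powerset] at hT ⊢
    obtain ⟨hsub, hcard, hna⟩ := hT
    have key : ∀ x ∈ T, cell0 (dec0 x) = x := by
      intro x hx
      obtain ⟨t0, _, rfl⟩ := Finset.mem_image.mp (hsub hx)
      rw [dec0_cell0]
    have hinj : Set.InjOn dec0 T := by
      intro x hx y hy he
      rw [← key x hx, ← key y hy, he]
    have himg : (T.image dec0).image cell0 = T := by
      rw [Finset.image_image]
      calc T.image (cell0 ∘ dec0) = T.image id := Finset.image_congr fun x hx => key x hx
        _ = T := Finset.image_id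
    refine ⟨fun x hx => ?_, ?_, ?_⟩
    · obtain ⟨y, hy, rfl⟩ := Finset.mem_image.mp hx
      obtain ⟨t0, ht0, rfl⟩ := Finset.mem_image.mp (hsub hy)
      rw [dec0_cell0]; exact ht0
    · rw [Finset.card_image_of_injOn hinj, hcard]
    · rw [← nonAttacking_image_cell0, himg]; exact hna
  · rintro S hS
    simp only [Finset.mem_filter, Finset.mem_powerset] at hS ⊢
    obtain ⟨hsub, hcard, hsp⟩ := hS
    exact ⟨Finset.image_subset_image hsub,
      by rw [Finset.card_image_of_injective _ cell0_injective, hcard],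
      (nonAttacking_image_cell0 S).mpr hsp⟩
  · rintro T hT
    simp only [Finset.mem_filter, Finset.mem_powerset] at hT
    have key : ∀ x ∈ T, cell0 (dec0 x) = x := by
      intro x hx
      obtain ⟨t0, _, rfl⟩ := Finset.mem_image.mp (hT.1 hx)
      rw [dec0_cell0]
    rw [Finset.image_image]
    calc T.image (cell0 ∘ dec0) = T.image id := Finset.image_congr fun x hx => key x hx
      _ = T := Finset.image_id
  · rintro S hS
    rw [Finset.image_image]
    calc S.image (dec0 ∘ cell0) = S.image id := Finset.image_congr fun x _ => dec0_cell0 x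
      _ = S := Finset.image_id

theorem rookCount_straightBoard (n k : ℕ) :
    rookCount (straightBoard n) k = (2 * n - k).choose k := by
  rw [rookCount_eq, card_board, F_eq]
  rcases Nat.eq_zero_or_pos n with rfl | hn
  · rcases k with _ | k
    · rfl
    · have e1 : 2 * 0 - 1 + 1 - (k + 1) = 0 := by omega
      have e2 : 2 * 0 - (k + 1) = 0 := by omega
      rw [e1, e2]
  · have h : 2 * n - 1 + 1 - k = 2 * n - k := by omega
    rw [h]
end

section
/- The number of permutations π of {1,…,n} with π(i) ≠ i and π(i) ≠ i+1 for all i (no wrap-around) equals Σ_{k=0}^{n} (-1)^k (2n-k choose k) (n-k)!. -/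
open Finset

namespace StraightMenage

def noCons (J : Finset ℕ) : Prop := ∀ a ∈ J, a + 1 ∉ J

instance : DecidablePred noCons := fun J => by unfold noCons; infer_instance

def A (m k : ℕ) : Finset (Finset ℕ) :=
  ((range m).powersetCard k).filter noCons

lemma A_zero_right (m : ℕ) : A m 0 = {∅} := by
  rw [A, powersetCard_zero, filter_singleton, if_pos]
  intro a ha
  simp at ha

lemma A_zero_left (k : ℕ) : A 0 (k + 1) = ∅ := by
  apply Finset.eq_empty_of_forall_notMem
  intro J hJ
  simp only [A, mem_filter, mem_powersetCard, range_zero, subset_empty] at hJ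
  obtain ⟨⟨h1, h2⟩, _⟩ := hJ
  subst h1; simp at h2

lemma g_one (k : ℕ) : (A 1 (k + 1)).card = Nat.choose (1 - k) (k + 1) := by
  cases k with
  | zero =>
      have : A 1 1 = {{0}} := by decide
      simp [this]
  | succ k =>
      have : A 1 (k + 2) = ∅ := by
        apply Finset.eq_empty_of_forall_notMem
        intro J hJ
        simp only [A, mem_filter, mem_powersetCard] at hJ
        have := hJ.1.2
        have hle := Finset.card_le_card hJ.1.1
        simp at hle
        omega
      simp [this, Nat.choose_eq_zero_of_lt]

lemma card_A_rec (m k : ℕ) :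
    (A (m + 2) (k + 1)).card = (A (m + 1) (k + 1)).card + (A m k).card := by
  classical
  rw [← Finset.card_filter_add_card_filter_not
    (p := fun J => (m + 1) ∉ J) (s := A (m + 2) (k + 1))]
  congr 1
  · -- those avoiding m+1
    congr 1
    ext J
    simp only [A, mem_filter, mem_powersetCard]
    constructor
    · rintro ⟨⟨⟨hsub, hcard⟩, hnc⟩, hnm⟩
      refine ⟨⟨?_, hcard⟩, hnc⟩
      intro x hx
      have := hsub hx
      simp only [mem_range] at this ⊢
      have : x ≠ m + 1 := fun h => hnm (h ▸ hx)
      omega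
    · rintro ⟨⟨hsub, hcard⟩, hnc⟩
      have hnm : (m + 1) ∉ J := fun h => by have := hsub h; simp at this
      refine ⟨⟨⟨?_, hcard⟩, hnc⟩, hnm⟩
      intro x hx
      have := hsub hx
      simp only [mem_range] at this ⊢
      omega
  · -- those containing m+1 : bijection with A m k via erase
    refine Finset.card_bij' (fun J _ => J.erase (m + 1)) (fun K _ => insert (m + 1) K) ?_ ?_ ?_ ?_
    · -- maps into A m k
      intro J hJ
      simp only [mem_filter, A, mem_powersetCard, not_not] at hJ
      obtain ⟨⟨⟨hsub, hcard⟩, hnc⟩, hmem⟩ := hJ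
      have hmnot : m ∉ J := fun hm => hnc m hm hmem
      simp only [mem_filter, A, mem_powersetCard]
      refine ⟨⟨?_, ?_⟩, ?_⟩
      · intro x hx
        rw [mem_erase] at hx
        obtain ⟨hne, hxJ⟩ := hx
        have := hsub hxJ
        simp only [mem_range] at this ⊢
        have : x ≠ m := fun h => hmnot (h ▸ hxJ)
        omega
      · rw [Finset.card_erase_of_mem hmem, hcard]
        omega
      · intro a ha
        exact fun hb => hnc a (Finset.mem_of_mem_erase ha) (Finset.mem_of_mem_erase hb)
    · -- inverse maps into source
      intro K hK
      simp only [mem_filter, A, mem_powersetCard] at hK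
      obtain ⟨⟨hsub, hcard⟩, hnc⟩ := hK
      have hnotin : (m + 1) ∉ K := fun h => by have := hsub h; simp at this
      simp only [mem_filter, A, mem_powersetCard, not_not]
      refine ⟨⟨⟨?_, ?_⟩, ?_⟩, ?_⟩
      · intro x hx
        rcases Finset.mem_insert.1 hx with h | h
        · simp [h]
        · have := hsub h; simp at this ⊢; omega
      · rw [Finset.card_insert_of_notMem hnotin, hcard]
      · intro a ha hb
        rcases Finset.mem_insert.1 ha with h | h
        · subst h
          rcases Finset.mem_insert.1 hb with h' | h'
          · omega
          · have := hsub h'; simp at this; omega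
        · rcases Finset.mem_insert.1 hb with h' | h'
          · have := hsub h; simp at this; omega
          · exact hnc a h h'
      · exact Finset.mem_insert_self _ _
    · intro J hJ
      simp only [mem_filter, not_not] at hJ
      exact Finset.insert_erase hJ.2
    · intro K hK
      simp only [mem_filter, A, mem_powersetCard] at hK
      have hnotin : (m + 1) ∉ K := fun h => by have := hK.1.1 h; simp at this
      exact Finset.erase_insert hnotin

theorem card_A : ∀ m k, (A m k).card = Nat.choose (m + 1 - k) k
  | m, 0 => by simp [A_zero_right]
  | 0, (k + 1) => by simp [A_zero_left, Nat.choose_eq_zero_of_lt]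
  | 1, (k + 1) => by simpa using g_one k
  | (m + 2), (k + 1) => by
      rw [card_A_rec, card_A (m + 1) (k + 1), card_A m k]
      rcases le_or_gt (k + 1) (m + 2) with h | h
      · have h1 : m + 2 + 1 - (k + 1) = (m + 1 - k) + 1 := by omega
        have h2 : m + 1 + 1 - (k + 1) = m + 1 - k := by omega
        rw [h1, h2, Nat.choose_succ_succ']
        omega
      · have h1 : m + 2 + 1 - (k + 1) ≤ 1 := by omega
        rw [Nat.choose_eq_zero_of_lt (by omega), Nat.choose_eq_zero_of_lt (by omega),
          Nat.choose_eq_zero_of_lt (by omega)]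



def board (n : ℕ) : Finset (Fin n × Fin n) :=
  univ.filter fun c => (c.2 : ℕ) = (c.1 : ℕ) ∨ (c.2 : ℕ) = (c.1 : ℕ) + 1

abbrev Nonatt {n : ℕ} (t : Finset (Fin n × Fin n)) : Prop :=
  Set.InjOn Prod.fst (t : Set (Fin n × Fin n)) ∧ Set.InjOn Prod.snd (t : Set (Fin n × Fin n))

lemma mem_board {n : ℕ} {c : Fin n × Fin n} :
    c ∈ board n ↔ (c.2 : ℕ) = (c.1 : ℕ) ∨ (c.2 : ℕ) = (c.1 : ℕ) + 1 := by
  simp [board]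

open scoped Classical Fin.NatCast in
lemma card_nonatt (n k : ℕ) :
    (((board n).powersetCard k).filter Nonatt).card = (2 * n - k).choose k := by
  rcases Nat.eq_zero_or_pos n with rfl | hn
  · have hb : board 0 = ∅ := by
      apply Finset.eq_empty_of_forall_notMem; intro c _; exact c.1.elim0
    rcases Nat.eq_zero_or_pos k with rfl | hk
    · rw [hb]
      rw [powersetCard_zero]
      have : Nonatt (∅ : Finset (Fin 0 × Fin 0)) := by
        refine ⟨?_, ?_⟩ <;> intro x hx <;> simp at hx
      rw [filter_singleton, if_pos this]
      simp
    · rw [hb]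
      have : powersetCard k (∅ : Finset (Fin 0 × Fin 0)) = ∅ := by
        apply Finset.eq_empty_of_forall_notMem
        intro J hJ
        rw [mem_powersetCard] at hJ
        have := hJ.1
        rw [subset_empty] at this
        subst this
        simp at hJ
        omega
      rw [this]
      simp only [filter_empty, card_empty]
      exact (Nat.choose_eq_zero_of_lt (by omega)).symm
  · haveI : NeZero n := ⟨by omega⟩
    have key : (((board n).powersetCard k).filter Nonatt).card = (A (2*n-1) k).card := by
      refine Finset.card_bij'
        (fun t _ => t.image (fun c => (c.1 : ℕ) + (c.2 : ℕ)))
        (fun J _ => J.image (fun a => (((a/2 : ℕ) : Fin n), (((a+1)/2 : ℕ) : Fin n))))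
        ?_ ?_ ?_ ?_
      · -- hi : image ∈ A (2n-1) k
        intro t ht
        rw [mem_filter, mem_powersetCard] at ht
        obtain ⟨⟨hsub, hcard⟩, hna⟩ := ht
        have hbd : ∀ c ∈ t, (c.2 : ℕ) = (c.1 : ℕ) ∨ (c.2 : ℕ) = (c.1 : ℕ) + 1 :=
          fun c hc => mem_board.1 (hsub hc)
        have hidx_inj : Set.InjOn (fun c : Fin n × Fin n => (c.1 : ℕ) + (c.2 : ℕ)) ↑t := by
          intro c hc c' hc' h
          have h1 := hbd c hc; have h2 := hbd c' hc'
          simp only at h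
          have e1 : (c.1 : ℕ) = (c'.1 : ℕ) := by omega
          have e2 : (c.2 : ℕ) = (c'.2 : ℕ) := by omega
          exact Prod.ext (Fin.ext e1) (Fin.ext e2)
        simp only [A, mem_filter, mem_powersetCard]
        refine ⟨⟨?_, ?_⟩, ?_⟩
        · intro x hx
          rw [mem_image] at hx
          obtain ⟨c, hc, rfl⟩ := hx
          have := hbd c hc
          have hc1 : (c.1 : ℕ) < n := c.1.isLt
          have hc2 : (c.2 : ℕ) < n := c.2.isLt
          rw [mem_range]; omega
        · rw [Finset.card_image_of_injOn hidx_inj, hcard]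
        · intro a ha ha1
          rw [mem_image] at ha ha1
          obtain ⟨c, hc, hc0⟩ := ha
          obtain ⟨c', hc', hc1⟩ := ha1
          have h1 := hbd c hc; have h2 := hbd c' hc'
          have hshare : (c.1 : ℕ) = (c'.1 : ℕ) ∨ (c.2 : ℕ) = (c'.2 : ℕ) := by omega
          rcases hshare with h | h
          · have : c = c' := hna.1 hc hc' (Fin.ext h)
            subst this; omega
          · have : c = c' := hna.2 hc hc' (Fin.ext h)
            subst this; omega
      · -- hj : image cell ∈ filter Nonatt (powersetCard k (board n))
        intro J hJ
        simp only [A, mem_filter, mem_powersetCard] at hJ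
        obtain ⟨⟨hsub, hcard⟩, hnc⟩ := hJ
        have hlt : ∀ a ∈ J, a < 2 * n - 1 := fun a ha => mem_range.1 (hsub ha)
        have hv1 : ∀ a ∈ J, (((a/2 : ℕ) : Fin n) : ℕ) = a / 2 := by
          intro a ha
          exact Fin.val_cast_of_lt (by have := hlt a ha; omega)
        have hv2 : ∀ a ∈ J, ((((a+1)/2 : ℕ) : Fin n) : ℕ) = (a+1) / 2 := by
          intro a ha
          exact Fin.val_cast_of_lt (by have := hlt a ha; omega)
        have hcell_inj : Set.InjOn
            (fun a : ℕ => (((a/2 : ℕ) : Fin n), (((a+1)/2 : ℕ) : Fin n))) ↑J := by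
          intro a ha b hb h
          simp only [Prod.mk.injEq] at h
          have e1 : (((a/2 : ℕ) : Fin n) : ℕ) = (((b/2 : ℕ) : Fin n) : ℕ) := by rw [h.1]
          have e2 : ((((a+1)/2 : ℕ) : Fin n) : ℕ) = ((((b+1)/2 : ℕ) : Fin n) : ℕ) := by rw [h.2]
          rw [hv1 a ha, hv1 b hb] at e1
          rw [hv2 a ha, hv2 b hb] at e2
          omega
        rw [mem_filter, mem_powersetCard]
        unfold Nonatt
        refine ⟨⟨?_, ?_⟩, ?_, ?_⟩
        · intro c hc
          rw [mem_image] at hc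
          obtain ⟨a, ha, rfl⟩ := hc
          rw [mem_board]
          simp only
          rw [hv1 a ha, hv2 a ha]
          have := hlt a ha
          omega
        · rw [Finset.card_image_of_injOn hcell_inj, hcard]
        · -- InjOn fst
          intro x hx y hy h
          simp only [coe_image, Set.mem_image] at hx hy
          obtain ⟨a, ha, rfl⟩ := hx
          obtain ⟨b, hb, rfl⟩ := hy
          simp only at h
          have ha' : a ∈ J := ha
          have hb' : b ∈ J := hb
          have e1 : a / 2 = b / 2 := by
            have := congrArg Fin.val h
            rwa [hv1 a ha', hv1 b hb'] at this
          have hab : a = b := by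
            rcases (by omega : a = b ∨ a + 1 = b ∨ b + 1 = a) with h' | h' | h'
            · exact h'
            · exact absurd (h' ▸ hb') (hnc a ha')
            · exact absurd (h' ▸ ha') (hnc b hb')
          subst hab; rfl
        · -- InjOn snd
          intro x hx y hy h
          simp only [coe_image, Set.mem_image] at hx hy
          obtain ⟨a, ha, rfl⟩ := hx
          obtain ⟨b, hb, rfl⟩ := hy
          simp only at h
          have ha' : a ∈ J := ha
          have hb' : b ∈ J := hb
          have e1 : (a+1) / 2 = (b+1) / 2 := by
            have := congrArg Fin.val h
            rwa [hv2 a ha', hv2 b hb'] at this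
          have hab : a = b := by
            rcases (by omega : a = b ∨ a + 1 = b ∨ b + 1 = a) with h' | h' | h'
            · exact h'
            · exact absurd (h' ▸ hb') (hnc a ha')
            · exact absurd (h' ▸ ha') (hnc b hb')
          subst hab; rfl
      · -- left inverse
        intro t ht
        rw [mem_filter, mem_powersetCard] at ht
        obtain ⟨⟨hsub, hcard⟩, hna⟩ := ht
        rw [Finset.image_image]
        refine Eq.trans (Finset.image_congr (g := id) ?_) Finset.image_id
        intro c hc
        have hc' : c ∈ t := Finset.mem_coe.1 hc
        simp only [Function.comp_apply, id_eq]
        have hb := mem_board.1 (hsub hc')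
        have hc1 : (c.1 : ℕ) < n := c.1.isLt
        have hc2 : (c.2 : ℕ) < n := c.2.isLt
        have e1 : ((c.1:ℕ)+(c.2:ℕ))/2 = (c.1 : ℕ) := by omega
        have e2 : ((c.1:ℕ)+(c.2:ℕ)+1)/2 = (c.2 : ℕ) := by omega
        rw [e1, e2]
        exact Prod.ext (Fin.ext (Fin.val_cast_of_lt hc1)) (Fin.ext (Fin.val_cast_of_lt hc2))
      · -- right inverse
        intro J hJ
        simp only [A, mem_filter, mem_powersetCard] at hJ
        obtain ⟨⟨hsub, hcard⟩, hnc⟩ := hJ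
        rw [Finset.image_image]
        have : ∀ a ∈ J,
            (((((a/2 : ℕ) : Fin n) : ℕ)) + (((((a+1)/2 : ℕ) : Fin n)) : ℕ)) = a := by
          intro a ha
          have hlt := mem_range.1 (hsub ha)
          rw [Fin.val_cast_of_lt (by omega), Fin.val_cast_of_lt (by omega)]
          omega
        calc J.image _ = J.image id :=
              Finset.image_congr (fun a ha => this a (Finset.mem_coe.1 ha))
          _ = J := Finset.image_id
    rw [key, card_A]
    congr 1
    omega



open scoped Classical in
lemma card_ext {n : ℕ} (t : Finset (Fin n × Fin n))
    (h1 : Set.InjOn Prod.fst (t : Set (Fin n × Fin n)))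
    (h2 : Set.InjOn Prod.snd (t : Set (Fin n × Fin n))) :
    ((univ : Finset (Equiv.Perm (Fin n))).filter
      fun π => ∀ c ∈ t, π c.1 = c.2).card = (n - t.card).factorial := by
  set S : Finset (Fin n) := t.image Prod.fst with hS
  set T : Finset (Fin n) := t.image Prod.snd with hT
  have hSc : S.card = t.card := Finset.card_image_of_injOn h1
  have hTc : T.card = t.card := Finset.card_image_of_injOn h2
  -- unique pair with given first coordinate
  have hex : ∀ a : Fin n, a ∈ S → ∃! c, c ∈ t ∧ c.1 = a := by
    intro a ha
    rw [hS, mem_image] at ha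
    obtain ⟨c, hc, rfl⟩ := ha
    exact ⟨c, ⟨hc, rfl⟩, fun c' ⟨hc', he⟩ => h1 hc' hc he⟩
  -- the induced bijection S → T
  have hmemT : ∀ (a : Fin n) (ha : a ∈ S),
      (t.choose _ (hex a ha)).2 ∈ T := by
    intro a ha
    rw [hT, mem_image]
    exact ⟨_, Finset.choose_mem _ _ _, rfl⟩
  let F : {x // x ∈ S} → {y // y ∈ T} :=
    fun a => ⟨(t.choose _ (hex a.1 a.2)).2, hmemT a.1 a.2⟩
  have hFspec : ∀ (a : Fin n) (ha : a ∈ S),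
      (t.choose _ (hex a ha)) ∈ t ∧ (t.choose _ (hex a ha)).1 = a :=
    fun a ha => ⟨Finset.choose_mem _ _ _,
      Finset.choose_property (fun c : Fin n × Fin n => c.1 = a) t (hex a ha)⟩
  have hFinj : Function.Injective F := by
    intro a b h
    have h' : (t.choose _ (hex a.1 a.2)).2 = (t.choose _ (hex b.1 b.2)).2 :=
      congrArg Subtype.val h
    have := h2 (Finset.mem_coe.2 (hFspec a.1 a.2).1) (Finset.mem_coe.2 (hFspec b.1 b.2).1) h'
    have : (t.choose _ (hex a.1 a.2)).1 = (t.choose _ (hex b.1 b.2)).1 := by rw [this]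
    rw [(hFspec a.1 a.2).2, (hFspec b.1 b.2).2] at this
    exact Subtype.ext this
  have hcardST : Fintype.card {x // x ∈ S} = Fintype.card {y // y ∈ T} := by
    simp [Fintype.card_coe, hSc, hTc]
  have hFbij : Function.Bijective F :=
    (Fintype.bijective_iff_injective_and_card F).2 ⟨hFinj, hcardST⟩
  -- key: value of F is the unique partner
  have hFval : ∀ (c : Fin n × Fin n) (hc : c ∈ t),
      ((F ⟨c.1, Finset.mem_image_of_mem _ hc⟩ : {y // y ∈ T}) : Fin n) = c.2 := by
    intro c hc
    have hch := hFspec c.1 (Finset.mem_image_of_mem _ hc)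
    have : t.choose _ (hex c.1 (Finset.mem_image_of_mem _ hc)) = c :=
      h1 (Finset.mem_coe.2 hch.1) (Finset.mem_coe.2 hc) hch.2
    simp only [F]
    rw [this]
  -- the iff for subtypeEquiv
  have hiff : ∀ (π : Equiv.Perm (Fin n)), (∀ c ∈ t, π c.1 = c.2) →
      ∀ x : Fin n, (x ∉ S ↔ π x ∉ T) := by
    intro π hπ x
    constructor
    · intro hx hT'
      rw [hT, mem_image] at hT'
      obtain ⟨c, hc, hc2⟩ := hT'
      have : π c.1 = π x := by rw [hπ c hc, hc2]
      have : c.1 = x := π.injective this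
      exact hx (this ▸ Finset.mem_image_of_mem _ hc)
    · intro hx hS'
      apply hx
      rw [hS, mem_image] at hS'
      obtain ⟨c, hc, hc1⟩ := hS'
      rw [← hc1, hπ c hc, hT]
      exact Finset.mem_image_of_mem _ hc
  -- count via bijection with equivs of complements
  have hmain : ((univ : Finset (Equiv.Perm (Fin n))).filter
      fun π => ∀ c ∈ t, π c.1 = c.2).card
      = Fintype.card ({x : Fin n // x ∉ S} ≃ {y : Fin n // y ∉ T}) := by
    rw [← Finset.card_univ]
    refine Finset.card_bij
      (fun π hπ => Equiv.subtypeEquiv π (hiff π (by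
        rw [mem_filter] at hπ; exact hπ.2)))
      (fun _ _ => mem_univ _) ?_ ?_
    · -- injective
      intro π1 hπ1 π2 hπ2 h
      rw [mem_filter] at hπ1 hπ2
      ext x
      by_cases hx : x ∈ S
      · rw [hS, mem_image] at hx
        obtain ⟨c, hc, rfl⟩ := hx
        rw [hπ1.2 c hc, hπ2.2 c hc]
      · have h' := congrArg
          (fun e : {x : Fin n // x ∉ S} ≃ {y : Fin n // y ∉ T} => (e ⟨x, hx⟩ : Fin n)) h
        exact congrArg Fin.val (by simpa using h')
    · -- surjective
      intro ρ _
      set g : Fin n → Fin n := fun x =>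
        if h : x ∈ S then (F ⟨x, h⟩ : Fin n) else (ρ ⟨x, h⟩ : Fin n) with hg
      have hginj : Function.Injective g := by
        intro x y h
        by_cases hx : x ∈ S <;> by_cases hy : y ∈ S
        · have e1 : g x = (F ⟨x, hx⟩ : Fin n) := dif_pos hx
          have e2 : g y = (F ⟨y, hy⟩ : Fin n) := dif_pos hy
          have : F ⟨x, hx⟩ = F ⟨y, hy⟩ := Subtype.ext (by rw [← e1, ← e2, h])
          exact congrArg Subtype.val (hFinj this)
        · have e1 : g x = (F ⟨x, hx⟩ : Fin n) := dif_pos hx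
          have e2 : g y = (ρ ⟨y, hy⟩ : Fin n) := dif_neg hy
          have hmem : ((ρ ⟨y, hy⟩ : {y : Fin n // y ∉ T}) : Fin n) ∈ T := by
            rw [← e2, ← h, e1]; exact (F ⟨x, hx⟩).2
          exact absurd hmem (ρ ⟨y, hy⟩).2
        · have e1 : g x = (ρ ⟨x, hx⟩ : Fin n) := dif_neg hx
          have e2 : g y = (F ⟨y, hy⟩ : Fin n) := dif_pos hy
          have hmem : ((ρ ⟨x, hx⟩ : {y : Fin n // y ∉ T}) : Fin n) ∈ T := by
            rw [← e1, h, e2]; exact (F ⟨y, hy⟩).2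
          exact absurd hmem (ρ ⟨x, hx⟩).2
        · have e1 : g x = (ρ ⟨x, hx⟩ : Fin n) := dif_neg hx
          have e2 : g y = (ρ ⟨y, hy⟩ : Fin n) := dif_neg hy
          have : (ρ ⟨x, hx⟩ : {y : Fin n // y ∉ T}) = ρ ⟨y, hy⟩ :=
            Subtype.ext (by rw [← e1, ← e2, h])
          exact congrArg Subtype.val (ρ.injective this)
      let π : Equiv.Perm (Fin n) := Equiv.ofBijective g
        ((Finite.injective_iff_bijective).1 hginj)
      have hπt : ∀ c ∈ t, π c.1 = c.2 := by
        intro c hc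
        have hc1 : c.1 ∈ S := Finset.mem_image_of_mem _ hc
        show g c.1 = c.2
        have e1 : g c.1 = (F ⟨c.1, hc1⟩ : Fin n) := dif_pos hc1
        rw [e1]
        exact hFval c hc
      refine ⟨π, mem_filter.2 ⟨mem_univ _, hπt⟩, ?_⟩
      refine Equiv.ext fun x => Subtype.ext ?_
      show π x.1 = (ρ x : Fin n)
      show g x.1 = (ρ x : Fin n)
      have e1 : g x.1 = (ρ ⟨x.1, x.2⟩ : Fin n) := dif_neg x.2
      rw [e1]
  rw [hmain]
  have hcS : Fintype.card {x : Fin n // x ∉ S} = n - t.card := by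
    rw [Fintype.card_subtype_compl]
    simp [Fintype.card_coe, hSc]
  have hcT : Fintype.card {y : Fin n // y ∉ T} = n - t.card := by
    rw [Fintype.card_subtype_compl]
    simp [Fintype.card_coe, hTc]
  rw [Fintype.card_equiv (Fintype.equivOfCardEq (by rw [hcS, hcT])), hcS]







open scoped Classical in
lemma N_eq {n : ℕ} (t : Finset (Fin n × Fin n)) :
    (((univ : Finset (Equiv.Perm (Fin n))).filter
      fun π => ∀ c ∈ t, π c.1 = c.2).card : ℤ)
      = if Nonatt t then ((n - t.card).factorial : ℤ) else 0 := by
  by_cases h : Nonatt t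
  · rw [if_pos h, card_ext t h.1 h.2]
  · rw [if_neg h]
    norm_cast
    rw [Finset.card_eq_zero]
    apply Finset.eq_empty_of_forall_notMem
    intro π hπ
    rw [mem_filter] at hπ
    apply h
    constructor
    · intro c hc c' hc' he
      have : π c.1 = π c'.1 := by rw [he]
      rw [hπ.2 c hc, hπ.2 c' hc'] at this
      exact Prod.ext he this
    · intro c hc c' hc' he
      have : π c.1 = π c'.1 := by rw [hπ.2 c hc, hπ.2 c' hc', he]
      exact Prod.ext (π.injective this) he



end StraightMenage

open Finset StraightMenage in
theorem straight_menage_formula (n : ℕ) :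
    (Nat.card {π : Equiv.Perm (Fin n) //
        ∀ i, π i ≠ i ∧ ((π i : ℕ) ≠ (i : ℕ) + 1)} : ℤ) =
      ∑ k ∈ Finset.range (n + 1),
        (-1 : ℤ) ^ k * (2 * n - k).choose k * (n - k).factorial := by
  -- Step 1: express as a filtered card
  rw [Nat.card_eq_fintype_card, Fintype.card_subtype]
  -- Step 2: predicate in board form
  have hP : ∀ π : Equiv.Perm (Fin n),
      (∀ i, π i ≠ i ∧ ((π i : ℕ) ≠ (i : ℕ) + 1)) ↔ ∀ c ∈ board n, ¬ (π c.1 = c.2) := by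
    intro π
    constructor
    · intro h c hc he
      rcases mem_board.1 hc with hb | hb
      · exact (h c.1).1 (by rw [he]; exact Fin.ext hb)
      · exact (h c.1).2 (by rw [he]; exact hb)
    · intro h i
      constructor
      · intro he
        exact h (i, π i) (mem_board.2 (Or.inl (by simp [he]))) rfl
      · intro he
        exact h (i, π i) (mem_board.2 (Or.inr (by simp [he]))) rfl
  -- Step 3: inclusion-exclusion
  have step3 : ((filter (fun π : Equiv.Perm (Fin n) =>
      ∀ i, π i ≠ i ∧ ((π i : ℕ) ≠ (i : ℕ) + 1)) univ).card : ℤ)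
      = ∑ t ∈ (board n).powerset, (-1 : ℤ) ^ t.card *
          ((univ : Finset (Equiv.Perm (Fin n))).filter
            fun π => ∀ c ∈ t, π c.1 = c.2).card := by
    rw [← Finset.sum_boole]
    have expand : ∀ π : Equiv.Perm (Fin n),
        (if (∀ i, π i ≠ i ∧ ((π i : ℕ) ≠ (i : ℕ) + 1)) then (1 : ℤ) else 0)
        = ∑ t ∈ (board n).powerset, (-1 : ℤ) ^ t.card *
            ∏ c ∈ t, (if π c.1 = c.2 then (1 : ℤ) else 0) := by
      intro π
      have e1 : (if (∀ i, π i ≠ i ∧ ((π i : ℕ) ≠ (i : ℕ) + 1)) then (1 : ℤ) else 0)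
          = ∏ c ∈ board n, (if π c.1 = c.2 then (0 : ℤ) else 1) := by
        have := Finset.prod_boole (s := board n)
          (p := fun c : Fin n × Fin n => ¬ (π c.1 = c.2)) (M₀ := ℤ)
        rw [show (∏ c ∈ board n, (if π c.1 = c.2 then (0:ℤ) else 1))
            = ∏ c ∈ board n, (if ¬ (π c.1 = c.2) then (1:ℤ) else 0) from
          Finset.prod_congr rfl (fun c _ => by by_cases h : π c.1 = c.2 <;> simp [h])]
        rw [this]
        by_cases hq : (∀ i, π i ≠ i ∧ ((π i : ℕ) ≠ (i : ℕ) + 1))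
        · rw [if_pos hq, if_pos ((hP π).1 hq)]
        · rw [if_neg hq, if_neg (fun h => hq ((hP π).2 h))]
      rw [e1]
      have e2 : ∀ c ∈ board n, (if π c.1 = c.2 then (0 : ℤ) else 1)
          = (-1) * (if π c.1 = c.2 then (1 : ℤ) else 0) + 1 := by
        intro c _
        by_cases h : π c.1 = c.2 <;> simp [h]
      rw [Finset.prod_congr rfl e2, Finset.prod_add]
      refine Finset.sum_congr rfl fun t ht => ?_
      rw [Finset.prod_const_one, mul_one, Finset.prod_mul_distrib, Finset.prod_const]
    rw [Finset.sum_congr rfl (fun π _ => expand π), Finset.sum_comm]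
    refine Finset.sum_congr rfl fun t _ => ?_
    rw [← Finset.mul_sum]
    congr 1
    rw [Finset.sum_congr rfl (fun π _ => Finset.prod_boole)]
    refine Eq.trans (Finset.sum_congr rfl (fun π _ => ?_)) (Finset.sum_boole _ _)
    by_cases h : ∀ c ∈ t, π c.1 = c.2
    · rw [if_pos h, if_pos h]
    · rw [if_neg h, if_neg h]
  rw [step3]
  -- Step 4: evaluate N and group by size
  have step4 : (∑ t ∈ (board n).powerset, (-1 : ℤ) ^ t.card *
          ((univ : Finset (Equiv.Perm (Fin n))).filter
            fun π => ∀ c ∈ t, π c.1 = c.2).card)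
      = ∑ k ∈ Finset.range ((board n).card + 1),
          (-1 : ℤ) ^ k * (2 * n - k).choose k * (n - k).factorial := by
    rw [Finset.powerset_card_disjiUnion]
    refine (Finset.sum_disjiUnion _ _ _).trans ?_
    refine Finset.sum_congr rfl fun k hk => ?_
    have inner : ∀ t ∈ (board n).powersetCard k,
        (-1 : ℤ) ^ t.card * ((univ : Finset (Equiv.Perm (Fin n))).filter
            fun π => ∀ c ∈ t, π c.1 = c.2).card
        = (-1 : ℤ) ^ k * (if Nonatt t then ((n - k).factorial : ℤ) else 0) := by
      intro t ht
      have hc : t.card = k := (Finset.mem_powersetCard.1 ht).2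
      rw [N_eq, hc]
    classical
    rw [Finset.sum_congr rfl inner, ← Finset.mul_sum, Finset.sum_ite, Finset.sum_const,
      Finset.sum_const_zero, add_zero, nsmul_eq_mul]
    have hcn : ((((board n).powersetCard k).filter (fun x => Nonatt x)).card : ℤ)
        = ((2 * n - k).choose k : ℤ) := by exact_mod_cast card_nonatt n k
    rw [hcn]
    ring
  rw [step4]
  -- Step 5: adjust the range
  have hle : n ≤ (board n).card := by
    have : (univ : Finset (Fin n)).card ≤ (board n).card := by
      apply Finset.card_le_card_of_injOn (fun i => (i, i))
      · intro i _
        exact mem_board.2 (Or.inl rfl)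
      · intro a _ b _ h
        exact (Prod.ext_iff.1 h).1
    simpa using this
  refine (Finset.sum_subset ?_ ?_).symm
  · intro k hk
    rw [mem_range] at hk ⊢
    omega
  · intro k hk hnk
    rw [mem_range] at hk hnk
    have : (2 * n - k).choose k = 0 := Nat.choose_eq_zero_of_lt (by omega)
    rw [this]
    push_cast
    ring
end

section
/- Let f(n) be the number of permutations π of {1,…,n} with |π(i) - i| ∈ {1,2} for all i. Then Σ_{n≥0} f(n) x^n = (1-x)/(1 - x - x² - x³ - x⁴ + x⁵). -/
namespace GFD
open Equiv

abbrev Pz := Equiv.Perm ℤ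

def Disp (g : Pz) (i : ℤ) : Prop := g i - i = 1 ∨ g i - i = 2 ∨ g i - i = -1 ∨ g i - i = -2
def Fix (a b : ℤ) (g : Pz) : Prop := ∀ i, i < a ∨ b ≤ i → g i = i
def FV (a b : ℤ) (g : Pz) : Prop := Fix a b g ∧ ∀ i, a ≤ i → i < b → Disp g i
def DV (a b : ℤ) (g : Pz) : Prop := g a = a + 1 ∧ Fix a b g ∧ ∀ i, a < i → i < b → Disp g i
def EV (a b : ℤ) (g : Pz) : Prop := g (a+1) = a ∧ Fix a b g ∧ ∀ i, a ≤ i → i < b → i ≠ a + 1 → Disp g i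

noncomputable def fA (n : ℕ) : ℕ := Nat.card {g : Pz // FV 0 (n:ℤ) g}
noncomputable def dA (m : ℕ) : ℕ := Nat.card {g : Pz // DV 0 ((m:ℤ)+1) g}
noncomputable def eA (m : ℕ) : ℕ := Nat.card {g : Pz // EV 0 ((m:ℤ)+1) g}

lemma Disp.ne {g : Pz} {i : ℤ} (h : Disp g i) : g i ≠ i := by
  rcases h with h|h|h|h <;> omega

lemma Fix.range {a b : ℤ} {g : Pz} (h : Fix a b g) {i : ℤ}
    (hne : g i ≠ i) : a ≤ g i ∧ g i < b := by
  by_contra hc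
  have h2 : g (g i) = g i := h _ (by omega)
  exact hne (g.injective h2)

lemma Fix.symm {a b : ℤ} {g : Pz} (h : Fix a b g) : Fix a b g.symm := by
  intro i hi
  rw [Equiv.symm_apply_eq]
  exact (h i hi).symm

lemma card_split' {α : Type*} (P Q : α → Prop) (hfin : Finite {x : α // P x}) :
    Nat.card {x : α // P x} =
      Nat.card {x : α // P x ∧ Q x} + Nat.card {x : α // P x ∧ ¬ Q x} := by
  classical
  haveI := hfin
  have e1 : {x : α // P x ∧ Q x} ≃ {y : {x : α // P x} // Q y.1} :=
    (Equiv.subtypeSubtypeEquivSubtypeInter P Q).symm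
  have e2 : {x : α // P x ∧ ¬ Q x} ≃ {y : {x : α // P x} // ¬ Q y.1} :=
    (Equiv.subtypeSubtypeEquivSubtypeInter P _).symm
  have e3 : {y : {x : α // P x} // Q y.1} ⊕ {y : {x : α // P x} // ¬ Q y.1} ≃ {x : α // P x} :=
    Equiv.sumCompl _
  rw [← Nat.card_congr e3, Nat.card_sum, Nat.card_congr e1, Nat.card_congr e2]

lemma card_iff {α : Type*} {P Q : α → Prop} (h : ∀ x, P x ↔ Q x) :
    Nat.card {x : α // P x} = Nat.card {x : α // Q x} :=
  Nat.card_congr (Equiv.subtypeEquivRight h)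

lemma card_mul (c : Pz) {P Q : Pz → Prop} (h : ∀ g, P g ↔ Q (g * c)) :
    Nat.card {g : Pz // P g} = Nat.card {g : Pz // Q g} :=
  Nat.card_congr ((Equiv.mulRight c).subtypeEquiv (by intro g; simpa using h g))

def shiftE (a : ℤ) : Pz ≃ Pz := Equiv.permCongr (Equiv.subRight a)

lemma shiftE_apply (a : ℤ) (g : Pz) (x : ℤ) : shiftE a g x = g (x + a) - a := rfl

lemma fix_shift {a b : ℤ} {g : Pz} (c : ℤ) :
    Fix a b g ↔ Fix (a - c) (b - c) (shiftE c g) := by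
  constructor
  · intro h i hi
    rw [shiftE_apply]
    have := h (i + c) (by omega)
    omega
  · intro h i hi
    have := h (i - c) (by omega)
    rw [shiftE_apply] at this
    simp at this
    omega

lemma disp_shift {g : Pz} (c i : ℤ) :
    Disp g (i + c) ↔ Disp (shiftE c g) i := by
  unfold Disp
  rw [shiftE_apply]
  constructor <;> (intro h; omega)

lemma FV_shift {a b : ℤ} {g : Pz} (c : ℤ) : FV a b g ↔ FV (a-c) (b-c) (shiftE c g) := by
  constructor
  · rintro ⟨h1, h2⟩
    exact ⟨(fix_shift c).1 h1, fun i hi1 hi2 => (disp_shift c i).1 (h2 (i+c) (by omega) (by omega))⟩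
  · rintro ⟨h1, h2⟩
    refine ⟨(fix_shift c).2 h1, fun i hi1 hi2 => ?_⟩
    have h3 := (disp_shift c (i-c)).2 (h2 (i - c) (by omega) (by omega))
    simpa using h3

lemma DV_shift {a b : ℤ} {g : Pz} (c : ℤ) : DV a b g ↔ DV (a-c) (b-c) (shiftE c g) := by
  have hpt : g a = a + 1 ↔ shiftE c g (a - c) = (a - c) + 1 := by
    rw [shiftE_apply, show a - c + c = a by ring]
    constructor <;> (intro h; omega)
  constructor
  · rintro ⟨h0, h1, h2⟩
    exact ⟨hpt.1 h0, (fix_shift c).1 h1,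
      fun i hi1 hi2 => (disp_shift c i).1 (h2 (i+c) (by omega) (by omega))⟩
  · rintro ⟨h0, h1, h2⟩
    refine ⟨hpt.2 h0, (fix_shift c).2 h1, fun i hi1 hi2 => ?_⟩
    have h3 := (disp_shift c (i-c)).2 (h2 (i - c) (by omega) (by omega))
    simpa using h3

lemma EV_shift {a b : ℤ} {g : Pz} (c : ℤ) : EV a b g ↔ EV (a-c) (b-c) (shiftE c g) := by
  have hpt : g (a+1) = a ↔ shiftE c g ((a - c) + 1) = a - c := by
    rw [shiftE_apply, show a - c + 1 + c = a + 1 by ring]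
    constructor <;> (intro h; omega)
  constructor
  · rintro ⟨h0, h1, h2⟩
    exact ⟨hpt.1 h0, (fix_shift c).1 h1,
      fun i hi1 hi2 hne => (disp_shift c i).1 (h2 (i+c) (by omega) (by omega) (by omega))⟩
  · rintro ⟨h0, h1, h2⟩
    refine ⟨hpt.2 h0, (fix_shift c).2 h1, fun i hi1 hi2 hne => ?_⟩
    have h3 := (disp_shift c (i-c)).2 (h2 (i - c) (by omega) (by omega) (by omega))
    simpa using h3

lemma card_FV (a : ℤ) (n : ℕ) : Nat.card {g : Pz // FV a (a + (n:ℤ)) g} = fA n :=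
  Nat.card_congr ((shiftE a).subtypeEquiv fun g => by
    have := FV_shift (a := a) (b := a + (n:ℤ)) (g := g) a
    simpa using this)

lemma card_DV (a : ℤ) (m : ℕ) : Nat.card {g : Pz // DV a (a + ((m:ℤ)+1)) g} = dA m :=
  Nat.card_congr ((shiftE a).subtypeEquiv fun g => by
    have := DV_shift (a := a) (b := a + ((m:ℤ)+1)) (g := g) a
    have h2 : (a + ((m:ℤ)+1)) - a = (m:ℤ) + 1 := by ring
    simpa [h2] using this)

lemma card_EV (a : ℤ) (m : ℕ) : Nat.card {g : Pz // EV a (a + ((m:ℤ)+1)) g} = eA m :=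
  Nat.card_congr ((shiftE a).subtypeEquiv fun g => by
    have := EV_shift (a := a) (b := a + ((m:ℤ)+1)) (g := g) a
    have h2 : (a + ((m:ℤ)+1)) - a = (m:ℤ) + 1 := by ring
    simpa [h2] using this)

lemma dv_to_ev {a b : ℤ} {g : Pz} (h : DV a b g) : EV a b g.symm := by
  obtain ⟨h0, hfix, hdisp⟩ := h
  refine ⟨?_, hfix.symm, ?_⟩
  · rw [Equiv.symm_apply_eq]; exact h0.symm
  · intro i hi1 hi2 hne
    set j := g.symm i with hj
    have hgj : g j = i := g.apply_symm_apply i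
    have hjne : j ≠ i := by
      intro he
      rcases eq_or_ne i a with rfl | hia
      · rw [he] at hgj; omega
      · have := (hdisp i (by omega) hi2).ne
        rw [he] at hgj; exact this hgj
    have hjr : a ≤ j ∧ j < b := hfix.symm.range hjne
    have hja : j ≠ a := by
      intro he; rw [he] at hgj; omega
    have := hdisp j (by omega) hjr.2
    unfold Disp at this ⊢
    omega

lemma ev_to_dv {a b : ℤ} {g : Pz} (h : EV a b g) : DV a b g.symm := by
  obtain ⟨h0, hfix, hdisp⟩ := h
  refine ⟨?_, hfix.symm, ?_⟩
  · rw [Equiv.symm_apply_eq]; exact h0.symm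
  · intro i hi1 hi2
    set j := g.symm i with hj
    have hgj : g j = i := g.apply_symm_apply i
    have hjne : j ≠ i := by
      intro he
      rcases eq_or_ne i (a+1) with rfl | hia
      · rw [he] at hgj; omega
      · have := (hdisp i (by omega) hi2 hia).ne
        rw [he] at hgj; exact this hgj
    have hjr : a ≤ j ∧ j < b := hfix.symm.range hjne
    have hja : j ≠ a + 1 := by
      intro he; rw [he] at hgj; omega
    have := hdisp j hjr.1 hjr.2 hja
    unfold Disp at this ⊢
    omega

lemma dA_eq_eA (m : ℕ) : dA m = eA m :=
  Nat.card_congr ((Equiv.inv Pz).subtypeEquiv fun g => by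
    constructor
    · intro h; exact dv_to_ev h
    · intro h
      have := ev_to_dv (g := g⁻¹) h
      rwa [Equiv.Perm.inv_def, Equiv.symm_symm] at this)

/-! ### Link to permutations of `Fin n` -/

def pset (n : ℕ) : ℤ → Prop := fun x => 0 ≤ x ∧ x < (n:ℤ)

instance (n : ℕ) : DecidablePred (pset n) := fun _ => instDecidableAnd

def finIco (n : ℕ) : Fin n ≃ Subtype (pset n) where
  toFun i := ⟨(i:ℤ), ⟨Int.natCast_nonneg _, by exact_mod_cast i.2⟩⟩
  invFun x := ⟨x.1.toNat, by have := x.2; unfold pset at this; omega⟩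
  left_inv i := by ext; simp
  right_inv x := by
    have := x.2
    unfold pset at this
    ext
    simp
    omega

def zOf (n : ℕ) (π : Equiv.Perm (Fin n)) : Pz := π.extendDomain (finIco n)

lemma zOf_at (n : ℕ) (π : Equiv.Perm (Fin n)) (i : Fin n) :
    zOf n π (i : ℤ) = ((π i : ℤ)) :=
  Equiv.Perm.extendDomain_apply_image π (finIco n) i

lemma zOf_not (n : ℕ) (π : Equiv.Perm (Fin n)) {x : ℤ} (hx : ¬ pset n x) :
    zOf n π x = x :=
  Equiv.Perm.extendDomain_apply_not_subtype π (finIco n) hx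

lemma zOf_inj (n : ℕ) : Function.Injective (zOf n) := by
  intro π1 π2 h
  ext i
  have e1 := zOf_at n π1 i
  have e2 := zOf_at n π2 i
  rw [h] at e1
  have h3 : ((π1 i : ℤ)) = ((π2 i : ℤ)) := e1.symm.trans e2
  have : ((π1 i : ℕ)) = ((π2 i : ℕ)) := by exact_mod_cast h3
  exact this

lemma zOf_fix (n : ℕ) (π : Equiv.Perm (Fin n)) : Fix 0 n (zOf n π) := by
  intro i hi
  exact zOf_not n π (by unfold pset; omega)

lemma linkcard (n : ℕ) (Q : ℤ → ℤ → Prop) :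
    Nat.card {g : Pz // Fix 0 n g ∧ ∀ i : ℤ, 0 ≤ i → i < n → Q i (g i)}
      = Nat.card {π : Equiv.Perm (Fin n) // ∀ i : Fin n, Q (i:ℤ) ((π i : ℤ))} := by
  refine (Nat.card_congr (Equiv.ofBijective ?_ ⟨?_, ?_⟩)).symm
  · refine fun π => ⟨zOf n π.1, zOf_fix n π.1, ?_⟩
    intro i h1 h2
    set j : Fin n := ⟨i.toNat, by omega⟩ with hjdef
    have hj : ((j : ℤ)) = i := by simp [hjdef]; omega
    rw [← hj, zOf_at n π.1 j]
    exact π.2 j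
  · intro π1 π2 h
    exact Subtype.ext (zOf_inj n (congrArg Subtype.val h))
  · rintro ⟨g, hfix, hq⟩
    have hp : ∀ x : ℤ, pset n x ↔ pset n (g x) := by
      intro x
      unfold pset
      constructor
      · intro hx
        rcases eq_or_ne (g x) x with he | hne
        · rw [he]; exact hx
        · exact Fix.range hfix hne
      · intro hx
        by_contra hc
        have := hfix x (by omega)
        omega
    set π : Equiv.Perm (Fin n) := Equiv.permCongr (finIco n).symm (g.subtypePerm (fun x => (hp x).symm)) with hπ
    have hπap : ∀ i : Fin n, ((π i : ℤ)) = g (i : ℤ) := by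
      intro i
      have h0 : 0 ≤ g (i:ℤ) := ((hp _).1 ⟨Int.natCast_nonneg _, by exact_mod_cast i.2⟩).1
      simp [hπ, Equiv.permCongr, finIco, Equiv.Perm.subtypePerm]
      omega
    refine ⟨⟨π, ?_⟩, ?_⟩
    · intro i
      rw [hπap i]
      exact hq _ (Int.natCast_nonneg _) (by exact_mod_cast i.2)
    · apply Subtype.ext
      show zOf n π = g
      ext x
      by_cases hx : pset n x
      · have hx' := hx
        unfold pset at hx'
        set j : Fin n := ⟨x.toNat, by omega⟩ with hjdef
        have hj : ((j : ℤ)) = x := by simp [hjdef]; omega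
        rw [← hj, zOf_at n π j, hπap j]
      · rw [zOf_not n π hx]
        exact (hfix x (by unfold pset at hx; omega)).symm

lemma finite_of_fix {a b : ℤ} {P : Pz → Prop} (h : ∀ g, P g → Fix a b g) :
    Finite {g : Pz // P g} := by
  have hfin : (Set.Ico a b).Finite := Set.finite_Ico a b
  haveI := hfin.to_subtype
  have hmem : ∀ (g : {g : Pz // P g}) (i : ↥(Set.Ico a b)), g.1 i.1 ∈ Set.Ico a b := by
    intro g i
    rcases eq_or_ne (g.1 i.1) i.1 with he | hne
    · rw [he]; exact i.2
    · have h2 := (h g.1 g.2).range hne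
      have := i.2
      simp [Set.mem_Ico] at *
      omega
  apply Finite.of_injective
    (fun (g : {g : Pz // P g}) => fun i : ↥(Set.Ico a b) => (⟨g.1 i.1, hmem g i⟩ : ↥(Set.Ico a b)))
  intro g1 g2 hEq
  apply Subtype.ext
  apply Equiv.ext
  intro x
  by_cases hx : x ∈ Set.Ico a b
  · have h1 := congrFun hEq ⟨x, hx⟩
    exact congrArg Subtype.val h1
  · simp [Set.mem_Ico] at hx
    rw [h g1.1 g1.2 x (by omega), h g2.1 g2.2 x (by omega)]


/-! ### identification with Fin-permutation counts -/

lemma fA_link (n : ℕ) : fA n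
    = Nat.card {π : Equiv.Perm (Fin n) //
        ∀ i : Fin n, ((π i : ℤ) - (i : ℤ) = 1 ∨ (π i : ℤ) - (i : ℤ) = 2 ∨
              (π i : ℤ) - (i : ℤ) = -1 ∨ (π i : ℤ) - (i : ℤ) = -2)} := by
  unfold fA
  exact (card_iff (fun g => Iff.rfl)).trans
    (linkcard n (fun i v => v - i = 1 ∨ v - i = 2 ∨ v - i = -1 ∨ v - i = -2))

lemma dA_link (m : ℕ) : dA m
    = Nat.card {π : Equiv.Perm (Fin (m+1)) //
        ∀ i : Fin (m+1), (((i:ℤ) = 0 → (π i : ℤ) = 1) ∧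
          ((i:ℤ) ≠ 0 → ((π i : ℤ) - (i : ℤ) = 1 ∨ (π i : ℤ) - (i : ℤ) = 2 ∨
              (π i : ℤ) - (i : ℤ) = -1 ∨ (π i : ℤ) - (i : ℤ) = -2))) } := by
  unfold dA
  have hc : ((m+1:ℕ):ℤ) = (m:ℤ)+1 := by push_cast; ring
  refine (card_iff (fun g => ?_)).trans
    (linkcard (m+1) (fun i v => (i = 0 → v = 1) ∧ (i ≠ 0 → (v - i = 1 ∨ v - i = 2 ∨ v - i = -1 ∨ v - i = -2))))
  rw [hc]
  constructor
  · rintro ⟨h0, h1, h2⟩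
    refine ⟨h1, fun i hi1 hi2 => ⟨fun hz => by rw [hz]; omega, fun hnz => ?_⟩⟩
    have := h2 i (by omega) (by omega)
    unfold Disp at this
    exact this
  · rintro ⟨h1, h2⟩
    refine ⟨?_, h1, fun i hi1 hi2 => ?_⟩
    · have := (h2 0 (by omega) (by omega)).1 rfl
      omega
    · have := (h2 i (by omega) (by omega)).2 (by omega)
      unfold Disp
      exact this

/-! ### forced-move helpers -/

section forced
variable {b : ℤ} {g : Pz}

lemma FV_g0 (hb : 3 ≤ b) (hfix : Fix 0 b g) (hdisp : ∀ i, 0 ≤ i → i < b → Disp g i) :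
    g 0 = 1 ∨ g 0 = 2 := by
  have hd := hdisp 0 (by omega) (by omega)
  have hr := hfix.range hd.ne
  unfold Disp at hd
  omega

lemma FV_g1 (hb : 4 ≤ b) (hfix : Fix 0 b g) (hdisp : ∀ i, 0 ≤ i → i < b → Disp g i) :
    g 1 = 0 ∨ g 1 = 2 ∨ g 1 = 3 := by
  have hd := hdisp 1 (by omega) (by omega)
  have hr := hfix.range hd.ne
  unfold Disp at hd
  omega

lemma DV_g1 (hb : 4 ≤ b) (hfix : Fix 0 b g) (hdisp : ∀ i, 0 < i → i < b → Disp g i) :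
    g 1 = 0 ∨ g 1 = 2 ∨ g 1 = 3 := by
  have hd := hdisp 1 (by omega) (by omega)
  have hr := hfix.range hd.ne
  unfold Disp at hd
  omega

lemma FV_sym0 (hb : 3 ≤ b) (hfix : Fix 0 b g) (hdisp : ∀ i, 0 ≤ i → i < b → Disp g i) :
    g 1 = 0 ∨ g 2 = 0 := by
  have hgj : g (g.symm 0) = 0 := g.apply_symm_apply 0
  have hne : g.symm 0 ≠ 0 := by
    intro h; rw [h] at hgj; exact (hdisp 0 (by omega) (by omega)).ne hgj
  have hr := (Fix.symm hfix).range hne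
  have hd := hdisp (g.symm 0) hr.1 hr.2
  unfold Disp at hd
  rw [hgj] at hd
  have hj : g.symm 0 = 1 ∨ g.symm 0 = 2 := by omega
  rcases hj with h|h
  · left; rw [← h]; exact hgj
  · right; rw [← h]; exact hgj

lemma FV_sym1 (hb : 5 ≤ b) (hfix : Fix 0 b g) (hdisp : ∀ i, 0 ≤ i → i < b → Disp g i) :
    g 0 = 1 ∨ g 2 = 1 ∨ g 3 = 1 := by
  have hgj : g (g.symm 1) = 1 := g.apply_symm_apply 1
  have hne : g.symm 1 ≠ 1 := by
    intro h; rw [h] at hgj; exact (hdisp 1 (by omega) (by omega)).ne hgj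
  have hr := (Fix.symm hfix).range hne
  have hd := hdisp (g.symm 1) hr.1 hr.2
  unfold Disp at hd
  rw [hgj] at hd
  have hj : g.symm 1 = 0 ∨ g.symm 1 = 2 ∨ g.symm 1 = 3 := by omega
  rcases hj with h|h|h
  · left; rw [← h]; exact hgj
  · right; left; rw [← h]; exact hgj
  · right; right; rw [← h]; exact hgj

lemma DV_sym0 (hb : 3 ≤ b) (h0 : g 0 = 1) (hfix : Fix 0 b g)
    (hdisp : ∀ i, 0 < i → i < b → Disp g i) : g 1 = 0 ∨ g 2 = 0 := by
  have hgj : g (g.symm 0) = 0 := g.apply_symm_apply 0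
  have hne : g.symm 0 ≠ 0 := by
    intro h; rw [h] at hgj; omega
  have hr := (Fix.symm hfix).range hne
  have hd := hdisp (g.symm 0) (by omega) hr.2
  unfold Disp at hd
  rw [hgj] at hd
  have hj : g.symm 0 = 1 ∨ g.symm 0 = 2 := by omega
  rcases hj with h|h
  · left; rw [← h]; exact hgj
  · right; rw [← h]; exact hgj

lemma DV_sym2 (hb : 5 ≤ b) (h0 : g 0 = 1) (hfix : Fix 0 b g)
    (hdisp : ∀ i, 0 < i → i < b → Disp g i) : g 1 = 2 ∨ g 3 = 2 ∨ g 4 = 2 := by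
  have hgj : g (g.symm 2) = 2 := g.apply_symm_apply 2
  have hne : g.symm 2 ≠ 2 := by
    intro h; rw [h] at hgj; exact (hdisp 2 (by omega) (by omega)).ne hgj
  have hr := (Fix.symm hfix).range hne
  have hne0 : g.symm 2 ≠ 0 := by
    intro h; rw [h] at hgj; omega
  have hd := hdisp (g.symm 2) (by omega) hr.2
  unfold Disp at hd
  rw [hgj] at hd
  have hj : g.symm 2 = 1 ∨ g.symm 2 = 3 ∨ g.symm 2 = 4 := by omega
  rcases hj with h|h|h
  · left; rw [← h]; exact hgj
  · right; left; rw [← h]; exact hgj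
  · right; right; rw [← h]; exact hgj

end forced

lemma fA0 : fA 0 = 1 := by rw [fA_link, Nat.card_eq_fintype_card]; decide
lemma fA1 : fA 1 = 0 := by rw [fA_link, Nat.card_eq_fintype_card]; decide
lemma fA2 : fA 2 = 1 := by rw [fA_link, Nat.card_eq_fintype_card]; decide
lemma fA3 : fA 3 = 2 := by rw [fA_link, Nat.card_eq_fintype_card]; decide
lemma fA4 : fA 4 = 4 := by rw [fA_link, Nat.card_eq_fintype_card]; decide
lemma dA1 : dA 1 = 1 := by rw [dA_link, Nat.card_eq_fintype_card]; decide
lemma dA2 : dA 2 = 1 := by rw [dA_link, Nat.card_eq_fintype_card]; decide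
lemma dA3 : dA 3 = 2 := by rw [dA_link, Nat.card_eq_fintype_card]; decide

/-! ### the small permutations -/

def ca : Pz := Equiv.swap 0 1
def c1 : Pz := Equiv.swap 0 1 * Equiv.swap 0 2
def c2 : Pz := Equiv.swap 0 2 * Equiv.swap 0 1
def c3 : Pz := Equiv.swap 0 1 * Equiv.swap 1 3
def c4 : Pz := Equiv.swap 0 2 * Equiv.swap 1 3
def c5 : Pz := Equiv.swap 0 2 * Equiv.swap 2 3 * Equiv.swap 3 1
def c6 : Pz := Equiv.swap 0 2 * Equiv.swap 2 4 * Equiv.swap 4 1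

lemma mulc (g c : Pz) (x : ℤ) : (g * c) x = g (c x) := rfl

lemma ca_0 : ca (0:ℤ) = 1 := by norm_num [ca, Equiv.swap_apply_def]
lemma ca_1 : ca (1:ℤ) = 0 := by norm_num [ca, Equiv.swap_apply_def]
lemma ca_fix (x : ℤ) (h0 : x ≠ 0) (h1 : x ≠ 1) : ca x = x := by
  simp [ca, Equiv.swap_apply_def, h0, h1]
lemma c1_0 : c1 (0:ℤ) = 2 := by norm_num [c1, Equiv.swap_apply_def]
lemma c1_1 : c1 (1:ℤ) = 0 := by norm_num [c1, Equiv.swap_apply_def]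
lemma c1_2 : c1 (2:ℤ) = 1 := by norm_num [c1, Equiv.swap_apply_def]
lemma c1_fix (x : ℤ) (h0 : x ≠ 0) (h1 : x ≠ 1) (h2 : x ≠ 2) : c1 x = x := by
  simp [c1, Equiv.swap_apply_def, h0, h1, h2]
lemma c2_0 : c2 (0:ℤ) = 1 := by norm_num [c2, Equiv.swap_apply_def]
lemma c2_1 : c2 (1:ℤ) = 2 := by norm_num [c2, Equiv.swap_apply_def]
lemma c2_2 : c2 (2:ℤ) = 0 := by norm_num [c2, Equiv.swap_apply_def]
lemma c2_fix (x : ℤ) (h0 : x ≠ 0) (h1 : x ≠ 1) (h2 : x ≠ 2) : c2 x = x := by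
  simp [c2, Equiv.swap_apply_def, h0, h1, h2]
lemma c3_0 : c3 (0:ℤ) = 1 := by norm_num [c3, Equiv.swap_apply_def]
lemma c3_1 : c3 (1:ℤ) = 3 := by norm_num [c3, Equiv.swap_apply_def]
lemma c3_3 : c3 (3:ℤ) = 0 := by norm_num [c3, Equiv.swap_apply_def]
lemma c3_fix (x : ℤ) (h0 : x ≠ 0) (h1 : x ≠ 1) (h3 : x ≠ 3) : c3 x = x := by
  simp [c3, Equiv.swap_apply_def, h0, h1, h3]
lemma c4_0 : c4 (0:ℤ) = 2 := by norm_num [c4, Equiv.swap_apply_def]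
lemma c4_1 : c4 (1:ℤ) = 3 := by norm_num [c4, Equiv.swap_apply_def]
lemma c4_2 : c4 (2:ℤ) = 0 := by norm_num [c4, Equiv.swap_apply_def]
lemma c4_3 : c4 (3:ℤ) = 1 := by norm_num [c4, Equiv.swap_apply_def]
lemma c4_fix (x : ℤ) (h0 : x ≠ 0) (h1 : x ≠ 1) (h2 : x ≠ 2) (h3 : x ≠ 3) : c4 x = x := by
  simp [c4, Equiv.swap_apply_def, h0, h1, h2, h3]
lemma c5_0 : c5 (0:ℤ) = 2 := by norm_num [c5, Equiv.swap_apply_def]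
lemma c5_1 : c5 (1:ℤ) = 0 := by norm_num [c5, Equiv.swap_apply_def]
lemma c5_2 : c5 (2:ℤ) = 3 := by norm_num [c5, Equiv.swap_apply_def]
lemma c5_3 : c5 (3:ℤ) = 1 := by norm_num [c5, Equiv.swap_apply_def]
lemma c5_fix (x : ℤ) (h0 : x ≠ 0) (h1 : x ≠ 1) (h2 : x ≠ 2) (h3 : x ≠ 3) : c5 x = x := by
  simp [c5, Equiv.swap_apply_def, h0, h1, h2, h3]
lemma c6_0 : c6 (0:ℤ) = 2 := by norm_num [c6, Equiv.swap_apply_def]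
lemma c6_1 : c6 (1:ℤ) = 0 := by norm_num [c6, Equiv.swap_apply_def]
lemma c6_2 : c6 (2:ℤ) = 4 := by norm_num [c6, Equiv.swap_apply_def]
lemma c6_4 : c6 (4:ℤ) = 1 := by norm_num [c6, Equiv.swap_apply_def]
lemma c6_fix (x : ℤ) (h0 : x ≠ 0) (h1 : x ≠ 1) (h2 : x ≠ 2) (h4 : x ≠ 4) : c6 x = x := by
  simp [c6, Equiv.swap_apply_def, h0, h1, h2, h4]

lemma disp_mul_of_fix {g c : Pz} {i : ℤ} (hc : c i = i) (hd : Disp g i) : Disp (g * c) i := by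
  unfold Disp at *
  rw [mulc, hc]
  exact hd

lemma disp_of_mul {g c : Pz} {i : ℤ} (hc : c i = i) (hd : Disp (g * c) i) : Disp g i := by
  unfold Disp at *
  rwa [mulc, hc] at hd

/-! ### case bijection lemmas -/

section cases
variable {b : ℤ}

lemma case_a (hb : 5 ≤ b) (g : Pz) :
    ((FV 0 b g ∧ g 1 = 0) ∧ g 0 = 1) ↔ FV 2 b (g * ca) := by
  constructor
  · rintro ⟨⟨⟨hfix, hdisp⟩, h1⟩, h0⟩
    refine ⟨?_, ?_⟩
    · intro i hi
      rcases eq_or_ne i 0 with rfl|hi0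
      · rw [mulc, ca_0, h1]
      rcases eq_or_ne i 1 with rfl|hi1
      · rw [mulc, ca_1, h0]
      · rw [mulc, ca_fix i hi0 hi1]
        exact hfix i (by omega)
    · intro i hi1 hi2
      exact disp_mul_of_fix (ca_fix i (by omega) (by omega)) (hdisp i (by omega) hi2)
  · rintro ⟨hfix2, hdisp2⟩
    have e1 : g 1 = 0 := by have := hfix2 0 (by omega); rwa [mulc, ca_0] at this
    have e0 : g 0 = 1 := by have := hfix2 1 (by omega); rwa [mulc, ca_1] at this
    refine ⟨⟨⟨?_, ?_⟩, e1⟩, e0⟩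
    · intro i hi
      have := hfix2 i (by omega)
      rwa [mulc, ca_fix i (by omega) (by omega)] at this
    · intro i hi1 hi2
      rcases eq_or_ne i 0 with rfl|hi0
      · unfold Disp; omega
      rcases eq_or_ne i 1 with rfl|hi1'
      · unfold Disp; omega
      · exact disp_of_mul (ca_fix i hi0 hi1') (hdisp2 i (by omega) hi2)

lemma case_c1 (hb : 5 ≤ b) (g : Pz) :
    (((FV 0 b g ∧ g 1 = 0) ∧ ¬ g 0 = 1) ∧ g 2 = 1) ↔ FV 3 b (g * c2) := by
  constructor
  · rintro ⟨⟨⟨⟨hfix, hdisp⟩, h1⟩, hn0⟩, h2⟩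
    have h0 : g 0 = 2 := by
      rcases FV_g0 (by omega) hfix hdisp with h|h
      · exact absurd h hn0
      · exact h
    refine ⟨?_, ?_⟩
    · intro i hi
      rcases eq_or_ne i 0 with rfl|hi0
      · rw [mulc, c2_0, h1]
      rcases eq_or_ne i 1 with rfl|hi1
      · rw [mulc, c2_1, h2]
      rcases eq_or_ne i 2 with rfl|hi2
      · rw [mulc, c2_2, h0]
      · rw [mulc, c2_fix i hi0 hi1 hi2]
        exact hfix i (by omega)
    · intro i hi1 hi2
      exact disp_mul_of_fix (c2_fix i (by omega) (by omega) (by omega)) (hdisp i (by omega) hi2)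
  · rintro ⟨hfix2, hdisp2⟩
    have e1 : g 1 = 0 := by have := hfix2 0 (by omega); rwa [mulc, c2_0] at this
    have e2 : g 2 = 1 := by have := hfix2 1 (by omega); rwa [mulc, c2_1] at this
    have e0 : g 0 = 2 := by have := hfix2 2 (by omega); rwa [mulc, c2_2] at this
    refine ⟨⟨⟨⟨?_, ?_⟩, e1⟩, by omega⟩, e2⟩
    · intro i hi
      have := hfix2 i (by omega)
      rwa [mulc, c2_fix i (by omega) (by omega) (by omega)] at this
    · intro i hi1 hi2
      rcases eq_or_ne i 0 with rfl|hi0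
      · unfold Disp; omega
      rcases eq_or_ne i 1 with rfl|hi1'
      · unfold Disp; omega
      rcases eq_or_ne i 2 with rfl|hi2'
      · unfold Disp; omega
      · exact disp_of_mul (c2_fix i hi0 hi1' hi2') (hdisp2 i (by omega) hi2)

lemma case_c2 (hb : 5 ≤ b) (g : Pz) :
    (((FV 0 b g ∧ g 1 = 0) ∧ ¬ g 0 = 1) ∧ ¬ g 2 = 1) ↔ EV 2 b (g * c3) := by
  constructor
  · rintro ⟨⟨⟨⟨hfix, hdisp⟩, h1⟩, hn0⟩, hn2⟩
    have h0 : g 0 = 2 := by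
      rcases FV_g0 (by omega) hfix hdisp with h|h
      · exact absurd h hn0
      · exact h
    have h3 : g 3 = 1 := by
      rcases FV_sym1 (by omega) hfix hdisp with h|h|h
      · omega
      · exact absurd h hn2
      · exact h
    refine ⟨?_, ?_, ?_⟩
    · rw [show (2:ℤ)+1 = 3 by norm_num, mulc, c3_3, h0]
    · intro i hi
      rcases eq_or_ne i 0 with rfl|hi0
      · rw [mulc, c3_0, h1]
      rcases eq_or_ne i 1 with rfl|hi1
      · rw [mulc, c3_1, h3]
      · rw [mulc, c3_fix i hi0 hi1 (by omega)]
        exact hfix i (by omega)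
    · intro i hi1 hi2 hne
      refine disp_mul_of_fix (c3_fix i (by omega) (by omega) ?_) (hdisp i (by omega) hi2)
      intro hc
      rw [hc] at hne
      norm_num at hne
  · rintro ⟨hpt, hfix2, hdisp2⟩
    rw [show (2:ℤ)+1 = 3 by norm_num, mulc, c3_3] at hpt
    have e1 : g 1 = 0 := by have := hfix2 0 (by omega); rwa [mulc, c3_0] at this
    have e3 : g 3 = 1 := by have := hfix2 1 (by omega); rwa [mulc, c3_1] at this
    have hne2 : ¬ g 2 = 1 := by
      intro hc
      have := g.injective (hc.trans e3.symm)
      omega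
    refine ⟨⟨⟨⟨?_, ?_⟩, e1⟩, by omega⟩, hne2⟩
    · intro i hi
      have := hfix2 i (by omega)
      rwa [mulc, c3_fix i (by omega) (by omega) (by omega)] at this
    · intro i hi1 hi2
      rcases eq_or_ne i 0 with rfl|hi0
      · unfold Disp; omega
      rcases eq_or_ne i 1 with rfl|hi1'
      · unfold Disp; omega
      rcases eq_or_ne i 3 with rfl|hi3'
      · unfold Disp; omega
      · exact disp_of_mul (c3_fix i hi0 hi1' hi3') (hdisp2 i (by omega) hi2 hi3')

lemma case_b1 (hb : 5 ≤ b) (g : Pz) :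
    (((FV 0 b g ∧ ¬ g 1 = 0) ∧ g 0 = 1) ∧ g 1 = 2) ↔ FV 3 b (g * c1) := by
  constructor
  · rintro ⟨⟨⟨⟨hfix, hdisp⟩, hn1⟩, h0⟩, h1⟩
    have h2 : g 2 = 0 := by
      rcases FV_sym0 (by omega) hfix hdisp with h|h
      · exact absurd h hn1
      · exact h
    refine ⟨?_, ?_⟩
    · intro i hi
      rcases eq_or_ne i 0 with rfl|hi0
      · rw [mulc, c1_0, h2]
      rcases eq_or_ne i 1 with rfl|hi1
      · rw [mulc, c1_1, h0]
      rcases eq_or_ne i 2 with rfl|hi2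
      · rw [mulc, c1_2, h1]
      · rw [mulc, c1_fix i hi0 hi1 hi2]
        exact hfix i (by omega)
    · intro i hi1 hi2
      exact disp_mul_of_fix (c1_fix i (by omega) (by omega) (by omega)) (hdisp i (by omega) hi2)
  · rintro ⟨hfix2, hdisp2⟩
    have e2 : g 2 = 0 := by have := hfix2 0 (by omega); rwa [mulc, c1_0] at this
    have e0 : g 0 = 1 := by have := hfix2 1 (by omega); rwa [mulc, c1_1] at this
    have e1 : g 1 = 2 := by have := hfix2 2 (by omega); rwa [mulc, c1_2] at this
    refine ⟨⟨⟨⟨?_, ?_⟩, by omega⟩, e0⟩, e1⟩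
    · intro i hi
      have := hfix2 i (by omega)
      rwa [mulc, c1_fix i (by omega) (by omega) (by omega)] at this
    · intro i hi1 hi2
      rcases eq_or_ne i 0 with rfl|hi0
      · unfold Disp; omega
      rcases eq_or_ne i 1 with rfl|hi1'
      · unfold Disp; omega
      rcases eq_or_ne i 2 with rfl|hi2'
      · unfold Disp; omega
      · exact disp_of_mul (c1_fix i hi0 hi1' hi2') (hdisp2 i (by omega) hi2)

lemma case_b2 (hb : 5 ≤ b) (g : Pz) :
    (((FV 0 b g ∧ ¬ g 1 = 0) ∧ g 0 = 1) ∧ ¬ g 1 = 2) ↔ DV 2 b (g * c1) := by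
  constructor
  · rintro ⟨⟨⟨⟨hfix, hdisp⟩, hn1⟩, h0⟩, hn2⟩
    have h2 : g 2 = 0 := by
      rcases FV_sym0 (by omega) hfix hdisp with h|h
      · exact absurd h hn1
      · exact h
    have h1 : g 1 = 3 := by
      rcases FV_g1 (by omega) hfix hdisp with h|h|h
      · exact absurd h hn1
      · exact absurd h hn2
      · exact h
    refine ⟨?_, ?_, ?_⟩
    · rw [mulc, c1_2, h1]; norm_num
    · intro i hi
      rcases eq_or_ne i 0 with rfl|hi0
      · rw [mulc, c1_0, h2]
      rcases eq_or_ne i 1 with rfl|hi1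
      · rw [mulc, c1_1, h0]
      · rw [mulc, c1_fix i hi0 hi1 (by omega)]
        exact hfix i (by omega)
    · intro i hi1 hi2
      exact disp_mul_of_fix (c1_fix i (by omega) (by omega) (by omega)) (hdisp i (by omega) hi2)
  · rintro ⟨hpt, hfix2, hdisp2⟩
    rw [mulc, c1_2] at hpt
    have e2 : g 2 = 0 := by have := hfix2 0 (by omega); rwa [mulc, c1_0] at this
    have e0 : g 0 = 1 := by have := hfix2 1 (by omega); rwa [mulc, c1_1] at this
    refine ⟨⟨⟨⟨?_, ?_⟩, by omega⟩, e0⟩, by omega⟩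
    · intro i hi
      have := hfix2 i (by omega)
      rwa [mulc, c1_fix i (by omega) (by omega) (by omega)] at this
    · intro i hi1 hi2
      rcases eq_or_ne i 0 with rfl|hi0
      · unfold Disp; omega
      rcases eq_or_ne i 1 with rfl|hi1'
      · unfold Disp; omega
      rcases eq_or_ne i 2 with rfl|hi2'
      · unfold Disp; omega
      · exact disp_of_mul (c1_fix i hi0 hi1' hi2') (hdisp2 i (by omega) hi2)

lemma case_d (hb : 5 ≤ b) (g : Pz) :
    ((FV 0 b g ∧ ¬ g 1 = 0) ∧ ¬ g 0 = 1) ↔ FV 4 b (g * c4) := by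
  constructor
  · rintro ⟨⟨⟨hfix, hdisp⟩, hn1⟩, hn0⟩
    have h0 : g 0 = 2 := by
      rcases FV_g0 (by omega) hfix hdisp with h|h
      · exact absurd h hn0
      · exact h
    have h2 : g 2 = 0 := by
      rcases FV_sym0 (by omega) hfix hdisp with h|h
      · exact absurd h hn1
      · exact h
    have h1 : g 1 = 3 := by
      rcases FV_g1 (by omega) hfix hdisp with h|h|h
      · exact absurd h hn1
      · exfalso
        have := g.injective (h.trans h0.symm)
        omega
      · exact h
    have h3 : g 3 = 1 := by
      rcases FV_sym1 (by omega) hfix hdisp with h|h|h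
      · omega
      · omega
      · exact h
    refine ⟨?_, ?_⟩
    · intro i hi
      rcases eq_or_ne i 0 with rfl|hi0
      · rw [mulc, c4_0, h2]
      rcases eq_or_ne i 1 with rfl|hi1
      · rw [mulc, c4_1, h3]
      rcases eq_or_ne i 2 with rfl|hi2
      · rw [mulc, c4_2, h0]
      rcases eq_or_ne i 3 with rfl|hi3
      · rw [mulc, c4_3, h1]
      · rw [mulc, c4_fix i hi0 hi1 hi2 hi3]
        exact hfix i (by omega)
    · intro i hi1 hi2
      exact disp_mul_of_fix (c4_fix i (by omega) (by omega) (by omega) (by omega))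
        (hdisp i (by omega) hi2)
  · rintro ⟨hfix2, hdisp2⟩
    have e2 : g 2 = 0 := by have := hfix2 0 (by omega); rwa [mulc, c4_0] at this
    have e3 : g 3 = 1 := by have := hfix2 1 (by omega); rwa [mulc, c4_1] at this
    have e0 : g 0 = 2 := by have := hfix2 2 (by omega); rwa [mulc, c4_2] at this
    have e1 : g 1 = 3 := by have := hfix2 3 (by omega); rwa [mulc, c4_3] at this
    refine ⟨⟨⟨?_, ?_⟩, by omega⟩, by omega⟩
    · intro i hi
      have := hfix2 i (by omega)
      rwa [mulc, c4_fix i (by omega) (by omega) (by omega) (by omega)] at this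
    · intro i hi1 hi2
      rcases eq_or_ne i 0 with rfl|hi0
      · unfold Disp; omega
      rcases eq_or_ne i 1 with rfl|hi1'
      · unfold Disp; omega
      rcases eq_or_ne i 2 with rfl|hi2'
      · unfold Disp; omega
      rcases eq_or_ne i 3 with rfl|hi3'
      · unfold Disp; omega
      · exact disp_of_mul (c4_fix i hi0 hi1' hi2' hi3') (hdisp2 i (by omega) hi2)

lemma case_i (hb : 5 ≤ b) (g : Pz) :
    (DV 0 b g ∧ g 1 = 0) ↔ FV 2 b (g * ca) := by
  constructor
  · rintro ⟨⟨hpt, hfix, hdisp⟩, h1⟩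
    have h0 : g 0 = 1 := by omega
    refine ⟨?_, ?_⟩
    · intro i hi
      rcases eq_or_ne i 0 with rfl|hi0
      · rw [mulc, ca_0, h1]
      rcases eq_or_ne i 1 with rfl|hi1
      · rw [mulc, ca_1, h0]
      · rw [mulc, ca_fix i hi0 hi1]
        exact hfix i (by omega)
    · intro i hi1 hi2
      exact disp_mul_of_fix (ca_fix i (by omega) (by omega)) (hdisp i (by omega) hi2)
  · rintro ⟨hfix2, hdisp2⟩
    have e1 : g 1 = 0 := by have := hfix2 0 (by omega); rwa [mulc, ca_0] at this
    have e0 : g 0 = 1 := by have := hfix2 1 (by omega); rwa [mulc, ca_1] at this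
    refine ⟨⟨by omega, ?_, ?_⟩, e1⟩
    · intro i hi
      have := hfix2 i (by omega)
      rwa [mulc, ca_fix i (by omega) (by omega)] at this
    · intro i hi1 hi2
      rcases eq_or_ne i 1 with rfl|hi1'
      · unfold Disp; omega
      · exact disp_of_mul (ca_fix i (by omega) hi1') (hdisp2 i (by omega) hi2)

lemma case_iia (hb : 5 ≤ b) (g : Pz) :
    ((DV 0 b g ∧ ¬ g 1 = 0) ∧ g 1 = 2) ↔ FV 3 b (g * c1) := by
  constructor
  · rintro ⟨⟨⟨hpt, hfix, hdisp⟩, hn1⟩, h1⟩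
    have h0 : g 0 = 1 := by omega
    have h2 : g 2 = 0 := by
      rcases DV_sym0 (by omega) h0 hfix hdisp with h|h
      · exact absurd h hn1
      · exact h
    refine ⟨?_, ?_⟩
    · intro i hi
      rcases eq_or_ne i 0 with rfl|hi0
      · rw [mulc, c1_0, h2]
      rcases eq_or_ne i 1 with rfl|hi1
      · rw [mulc, c1_1, h0]
      rcases eq_or_ne i 2 with rfl|hi2
      · rw [mulc, c1_2, h1]
      · rw [mulc, c1_fix i hi0 hi1 hi2]
        exact hfix i (by omega)
    · intro i hi1 hi2
      exact disp_mul_of_fix (c1_fix i (by omega) (by omega) (by omega)) (hdisp i (by omega) hi2)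
  · rintro ⟨hfix2, hdisp2⟩
    have e2 : g 2 = 0 := by have := hfix2 0 (by omega); rwa [mulc, c1_0] at this
    have e0 : g 0 = 1 := by have := hfix2 1 (by omega); rwa [mulc, c1_1] at this
    have e1 : g 1 = 2 := by have := hfix2 2 (by omega); rwa [mulc, c1_2] at this
    refine ⟨⟨⟨by omega, ?_, ?_⟩, by omega⟩, e1⟩
    · intro i hi
      have := hfix2 i (by omega)
      rwa [mulc, c1_fix i (by omega) (by omega) (by omega)] at this
    · intro i hi1 hi2
      rcases eq_or_ne i 1 with rfl|hi1'
      · unfold Disp; omega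
      rcases eq_or_ne i 2 with rfl|hi2'
      · unfold Disp; omega
      · exact disp_of_mul (c1_fix i (by omega) hi1' hi2') (hdisp2 i (by omega) hi2)

lemma case_iib1 (hb : 5 ≤ b) (g : Pz) :
    (((DV 0 b g ∧ ¬ g 1 = 0) ∧ ¬ g 1 = 2) ∧ g 3 = 2) ↔ FV 4 b (g * c5) := by
  constructor
  · rintro ⟨⟨⟨⟨hpt, hfix, hdisp⟩, hn1⟩, hn2⟩, h3⟩
    have h0 : g 0 = 1 := by omega
    have h2 : g 2 = 0 := by
      rcases DV_sym0 (by omega) h0 hfix hdisp with h|h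
      · exact absurd h hn1
      · exact h
    have h1 : g 1 = 3 := by
      rcases DV_g1 (by omega) hfix hdisp with h|h|h
      · exact absurd h hn1
      · exact absurd h hn2
      · exact h
    refine ⟨?_, ?_⟩
    · intro i hi
      rcases eq_or_ne i 0 with rfl|hi0
      · rw [mulc, c5_0, h2]
      rcases eq_or_ne i 1 with rfl|hi1
      · rw [mulc, c5_1, h0]
      rcases eq_or_ne i 2 with rfl|hi2
      · rw [mulc, c5_2, h3]
      rcases eq_or_ne i 3 with rfl|hi3
      · rw [mulc, c5_3, h1]
      · rw [mulc, c5_fix i hi0 hi1 hi2 hi3]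
        exact hfix i (by omega)
    · intro i hi1 hi2
      exact disp_mul_of_fix (c5_fix i (by omega) (by omega) (by omega) (by omega))
        (hdisp i (by omega) hi2)
  · rintro ⟨hfix2, hdisp2⟩
    have e2 : g 2 = 0 := by have := hfix2 0 (by omega); rwa [mulc, c5_0] at this
    have e0 : g 0 = 1 := by have := hfix2 1 (by omega); rwa [mulc, c5_1] at this
    have e3 : g 3 = 2 := by have := hfix2 2 (by omega); rwa [mulc, c5_2] at this
    have e1 : g 1 = 3 := by have := hfix2 3 (by omega); rwa [mulc, c5_3] at this
    refine ⟨⟨⟨⟨by omega, ?_, ?_⟩, by omega⟩, by omega⟩, e3⟩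
    · intro i hi
      have := hfix2 i (by omega)
      rwa [mulc, c5_fix i (by omega) (by omega) (by omega) (by omega)] at this
    · intro i hi1 hi2
      rcases eq_or_ne i 1 with rfl|hi1'
      · unfold Disp; omega
      rcases eq_or_ne i 2 with rfl|hi2'
      · unfold Disp; omega
      rcases eq_or_ne i 3 with rfl|hi3'
      · unfold Disp; omega
      · exact disp_of_mul (c5_fix i (by omega) hi1' hi2' hi3') (hdisp2 i (by omega) hi2)

lemma case_iib2 (hb : 5 ≤ b) (g : Pz) :
    (((DV 0 b g ∧ ¬ g 1 = 0) ∧ ¬ g 1 = 2) ∧ ¬ g 3 = 2) ↔ EV 3 b (g * c6) := by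
  constructor
  · rintro ⟨⟨⟨⟨hpt, hfix, hdisp⟩, hn1⟩, hn2⟩, hn3⟩
    have h0 : g 0 = 1 := by omega
    have h2 : g 2 = 0 := by
      rcases DV_sym0 (by omega) h0 hfix hdisp with h|h
      · exact absurd h hn1
      · exact h
    have h1 : g 1 = 3 := by
      rcases DV_g1 (by omega) hfix hdisp with h|h|h
      · exact absurd h hn1
      · exact absurd h hn2
      · exact h
    have h4 : g 4 = 2 := by
      rcases DV_sym2 (by omega) h0 hfix hdisp with h|h|h
      · exact absurd h hn2
      · exact absurd h hn3
      · exact h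
    refine ⟨?_, ?_, ?_⟩
    · rw [show (3:ℤ)+1 = 4 by norm_num, mulc, c6_4, h1]
    · intro i hi
      rcases eq_or_ne i 0 with rfl|hi0
      · rw [mulc, c6_0, h2]
      rcases eq_or_ne i 1 with rfl|hi1
      · rw [mulc, c6_1, h0]
      rcases eq_or_ne i 2 with rfl|hi2
      · rw [mulc, c6_2, h4]
      · rw [mulc, c6_fix i hi0 hi1 hi2 (by omega)]
        exact hfix i (by omega)
    · intro i hi1 hi2 hne
      refine disp_mul_of_fix (c6_fix i (by omega) (by omega) (by omega) ?_)
        (hdisp i (by omega) hi2)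
      intro hc
      rw [hc] at hne
      norm_num at hne
  · rintro ⟨hpt, hfix2, hdisp2⟩
    rw [show (3:ℤ)+1 = 4 by norm_num, mulc, c6_4] at hpt
    have e2 : g 2 = 0 := by have := hfix2 0 (by omega); rwa [mulc, c6_0] at this
    have e0 : g 0 = 1 := by have := hfix2 1 (by omega); rwa [mulc, c6_1] at this
    have e4 : g 4 = 2 := by have := hfix2 2 (by omega); rwa [mulc, c6_2] at this
    have hne3 : ¬ g 3 = 2 := by
      intro hc
      have := g.injective (hc.trans e4.symm)
      omega
    refine ⟨⟨⟨⟨by omega, ?_, ?_⟩, by omega⟩, by omega⟩, hne3⟩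
    · intro i hi
      have := hfix2 i (by omega)
      rwa [mulc, c6_fix i (by omega) (by omega) (by omega) (by omega)] at this
    · intro i hi1 hi2
      rcases eq_or_ne i 1 with rfl|hi1'
      · unfold Disp; omega
      rcases eq_or_ne i 2 with rfl|hi2'
      · unfold Disp; omega
      rcases eq_or_ne i 4 with rfl|hi4'
      · unfold Disp; omega
      rcases eq_or_ne i 3 with rfl|hi3'
      · exact disp_of_mul (c6_fix 3 (by omega) (by omega) (by omega) (by omega))
          (hdisp2 3 (by omega) hi2 (by omega))
      · exact disp_of_mul (c6_fix i (by omega) hi1' hi2' hi4')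
          (hdisp2 i (by omega) hi2 hi4')

end cases

/-! ### the two recurrences -/

lemma L1 (k : ℕ) : fA (k+5) = fA (k+3) + 2 * fA (k+2) + fA (k+1) + 2 * dA (k+2) := by
  set b : ℤ := ((k+5 : ℕ) : ℤ) with hbdef
  have hb : (5:ℤ) ≤ b := by rw [hbdef]; push_cast; omega
  have hb2 : (2:ℤ) + ((k+3:ℕ):ℤ) = b := by rw [hbdef]; push_cast; ring
  have hb3 : (3:ℤ) + ((k+2:ℕ):ℤ) = b := by rw [hbdef]; push_cast; ring
  have hb4 : (4:ℤ) + ((k+1:ℕ):ℤ) = b := by rw [hbdef]; push_cast; ring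
  have hbd : (2:ℤ) + (((k+2:ℕ):ℤ)+1) = b := by rw [hbdef]; push_cast; ring
  have hfa : fA (k+5) = Nat.card {g : Pz // FV 0 b g} := rfl
  have e0 : Nat.card {g : Pz // FV 0 b g}
      = Nat.card {g : Pz // FV 0 b g ∧ g 1 = 0}
        + Nat.card {g : Pz // FV 0 b g ∧ ¬ g 1 = 0} :=
    card_split' _ _ (finite_of_fix (fun g hg => hg.1))
  have eA' : Nat.card {g : Pz // FV 0 b g ∧ g 1 = 0}
      = Nat.card {g : Pz // (FV 0 b g ∧ g 1 = 0) ∧ g 0 = 1}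
        + Nat.card {g : Pz // (FV 0 b g ∧ g 1 = 0) ∧ ¬ g 0 = 1} :=
    card_split' _ _ (finite_of_fix (fun g hg => hg.1.1))
  have eA2 : Nat.card {g : Pz // (FV 0 b g ∧ g 1 = 0) ∧ ¬ g 0 = 1}
      = Nat.card {g : Pz // ((FV 0 b g ∧ g 1 = 0) ∧ ¬ g 0 = 1) ∧ g 2 = 1}
        + Nat.card {g : Pz // ((FV 0 b g ∧ g 1 = 0) ∧ ¬ g 0 = 1) ∧ ¬ g 2 = 1} :=
    card_split' _ _ (finite_of_fix (fun g hg => hg.1.1.1))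
  have eB : Nat.card {g : Pz // FV 0 b g ∧ ¬ g 1 = 0}
      = Nat.card {g : Pz // (FV 0 b g ∧ ¬ g 1 = 0) ∧ g 0 = 1}
        + Nat.card {g : Pz // (FV 0 b g ∧ ¬ g 1 = 0) ∧ ¬ g 0 = 1} :=
    card_split' _ _ (finite_of_fix (fun g hg => hg.1.1))
  have eB1 : Nat.card {g : Pz // (FV 0 b g ∧ ¬ g 1 = 0) ∧ g 0 = 1}
      = Nat.card {g : Pz // ((FV 0 b g ∧ ¬ g 1 = 0) ∧ g 0 = 1) ∧ g 1 = 2}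
        + Nat.card {g : Pz // ((FV 0 b g ∧ ¬ g 1 = 0) ∧ g 0 = 1) ∧ ¬ g 1 = 2} :=
    card_split' _ _ (finite_of_fix (fun g hg => hg.1.1.1))
  have leafA1 : Nat.card {g : Pz // (FV 0 b g ∧ g 1 = 0) ∧ g 0 = 1} = fA (k+3) := by
    rw [card_mul ca (fun g => case_a hb g)]
    have := card_FV 2 (k+3)
    simp only [hb2] at this
    exact this
  have leafA2a : Nat.card {g : Pz // ((FV 0 b g ∧ g 1 = 0) ∧ ¬ g 0 = 1) ∧ g 2 = 1} = fA (k+2) := by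
    rw [card_mul c2 (fun g => case_c1 hb g)]
    have := card_FV 3 (k+2)
    simp only [hb3] at this
    exact this
  have leafA2b : Nat.card {g : Pz // ((FV 0 b g ∧ g 1 = 0) ∧ ¬ g 0 = 1) ∧ ¬ g 2 = 1} = dA (k+2) := by
    rw [card_mul c3 (fun g => case_c2 hb g)]
    have := card_EV 2 (k+2)
    simp only [hbd] at this
    rw [this, dA_eq_eA]
  have leafB1a : Nat.card {g : Pz // ((FV 0 b g ∧ ¬ g 1 = 0) ∧ g 0 = 1) ∧ g 1 = 2} = fA (k+2) := by
    rw [card_mul c1 (fun g => case_b1 hb g)]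
    have := card_FV 3 (k+2)
    simp only [hb3] at this
    exact this
  have leafB1b : Nat.card {g : Pz // ((FV 0 b g ∧ ¬ g 1 = 0) ∧ g 0 = 1) ∧ ¬ g 1 = 2} = dA (k+2) := by
    rw [card_mul c1 (fun g => case_b2 hb g)]
    have := card_DV 2 (k+2)
    simp only [hbd] at this
    exact this
  have leafB2 : Nat.card {g : Pz // (FV 0 b g ∧ ¬ g 1 = 0) ∧ ¬ g 0 = 1} = fA (k+1) := by
    rw [card_mul c4 (fun g => case_d hb g)]
    have := card_FV 4 (k+1)
    simp only [hb4] at this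
    exact this
  omega

lemma L2 (k : ℕ) : dA (k+4) = fA (k+3) + fA (k+2) + fA (k+1) + dA (k+1) := by
  set b : ℤ := ((k+4 : ℕ) : ℤ) + 1 with hbdef
  have hb : (5:ℤ) ≤ b := by rw [hbdef]; push_cast; omega
  have hb2 : (2:ℤ) + ((k+3:ℕ):ℤ) = b := by rw [hbdef]; push_cast; ring
  have hb3 : (3:ℤ) + ((k+2:ℕ):ℤ) = b := by rw [hbdef]; push_cast; ring
  have hb4 : (4:ℤ) + ((k+1:ℕ):ℤ) = b := by rw [hbdef]; push_cast; ring
  have hbe : (3:ℤ) + (((k+1:ℕ):ℤ)+1) = b := by rw [hbdef]; push_cast; ring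
  have hfa : dA (k+4) = Nat.card {g : Pz // DV 0 b g} := rfl
  have e0 : Nat.card {g : Pz // DV 0 b g}
      = Nat.card {g : Pz // DV 0 b g ∧ g 1 = 0}
        + Nat.card {g : Pz // DV 0 b g ∧ ¬ g 1 = 0} :=
    card_split' _ _ (finite_of_fix (fun g hg => hg.2.1))
  have eB : Nat.card {g : Pz // DV 0 b g ∧ ¬ g 1 = 0}
      = Nat.card {g : Pz // (DV 0 b g ∧ ¬ g 1 = 0) ∧ g 1 = 2}
        + Nat.card {g : Pz // (DV 0 b g ∧ ¬ g 1 = 0) ∧ ¬ g 1 = 2} :=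
    card_split' _ _ (finite_of_fix (fun g hg => hg.1.2.1))
  have eB2 : Nat.card {g : Pz // (DV 0 b g ∧ ¬ g 1 = 0) ∧ ¬ g 1 = 2}
      = Nat.card {g : Pz // ((DV 0 b g ∧ ¬ g 1 = 0) ∧ ¬ g 1 = 2) ∧ g 3 = 2}
        + Nat.card {g : Pz // ((DV 0 b g ∧ ¬ g 1 = 0) ∧ ¬ g 1 = 2) ∧ ¬ g 3 = 2} :=
    card_split' _ _ (finite_of_fix (fun g hg => hg.1.1.2.1))
  have leafI : Nat.card {g : Pz // DV 0 b g ∧ g 1 = 0} = fA (k+3) := by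
    rw [card_mul ca (fun g => case_i hb g)]
    have := card_FV 2 (k+3)
    simp only [hb2] at this
    exact this
  have leafIIa : Nat.card {g : Pz // (DV 0 b g ∧ ¬ g 1 = 0) ∧ g 1 = 2} = fA (k+2) := by
    rw [card_mul c1 (fun g => case_iia hb g)]
    have := card_FV 3 (k+2)
    simp only [hb3] at this
    exact this
  have leafIIb1 : Nat.card {g : Pz // ((DV 0 b g ∧ ¬ g 1 = 0) ∧ ¬ g 1 = 2) ∧ g 3 = 2} = fA (k+1) := by
    rw [card_mul c5 (fun g => case_iib1 hb g)]
    have := card_FV 4 (k+1)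
    simp only [hb4] at this
    exact this
  have leafIIb2 : Nat.card {g : Pz // ((DV 0 b g ∧ ¬ g 1 = 0) ∧ ¬ g 1 = 2) ∧ ¬ g 3 = 2} = dA (k+1) := by
    rw [card_mul c6 (fun g => case_iib2 hb g)]
    have := card_EV 3 (k+1)
    simp only [hbe] at this
    rw [this, dA_eq_eA]
  omega

lemma T5 : ∀ k : ℕ, fA (k+5) + fA k = fA (k+4) + fA (k+3) + fA (k+2) + fA (k+1) := by
  intro k
  induction k using Nat.strong_induction_on with
  | _ k ih =>
    match k, ih with
    | 0, _ =>
      have l1 := L1 0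
      norm_num at l1 ⊢
      have := fA0; have := fA1; have := fA2; have := fA3; have := fA4; have := dA2
      omega
    | 1, _ =>
      have l1 := L1 1
      norm_num at l1 ⊢
      have l0 := L1 0
      norm_num at l0
      have := fA0; have := fA1; have := fA2; have := fA3; have := fA4
      have := dA2; have := dA3
      omega
    | 2, _ =>
      have l1 := L1 2
      norm_num at l1 ⊢
      have l0 := L1 0
      norm_num at l0
      have l1b := L1 1
      norm_num at l1b
      have l2 := L2 0
      norm_num at l2
      have := fA0; have := fA1; have := fA2; have := fA3; have := fA4
      have := dA1; have := dA2; have := dA3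
      omega
    | (j+3), ih =>
      have h1 : fA (j+8) = fA (j+6) + 2 * fA (j+5) + fA (j+4) + 2 * dA (j+5) := by
        have h := L1 (j+3)
        simp only [show j+3+5 = j+8 by ring, show j+3+3 = j+6 by ring,
          show j+3+2 = j+5 by ring, show j+3+1 = j+4 by ring] at h
        exact h
      have h2 : dA (j+5) = fA (j+4) + fA (j+3) + fA (j+2) + dA (j+2) := by
        have h := L2 (j+1)
        simp only [show j+1+4 = j+5 by ring, show j+1+3 = j+4 by ring,
          show j+1+2 = j+3 by ring, show j+1+1 = j+2 by ring] at h
        exact h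
      have h3 : fA (j+5) = fA (j+3) + 2 * fA (j+2) + fA (j+1) + 2 * dA (j+2) := L1 j
      have ih1 : fA (j+6) + fA (j+1) = fA (j+5) + fA (j+4) + fA (j+3) + fA (j+2) := by
        have h := ih (j+1) (by omega)
        simp only [show j+1+5 = j+6 by ring, show j+1+4 = j+5 by ring,
          show j+1+3 = j+4 by ring, show j+1+2 = j+3 by ring, show j+1+1 = j+2 by ring] at h
        exact h
      have ih2 : fA (j+7) + fA (j+2) = fA (j+6) + fA (j+5) + fA (j+4) + fA (j+3) := by
        have h := ih (j+2) (by omega)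
        simp only [show j+2+5 = j+7 by ring, show j+2+4 = j+6 by ring,
          show j+2+3 = j+5 by ring, show j+2+2 = j+4 by ring, show j+2+1 = j+3 by ring] at h
        exact h
      have hg1 : j+3+5 = j+8 := by ring
      have hg2 : j+3+4 = j+7 := by ring
      have hg3 : j+3+3 = j+6 := by ring
      have hg4 : j+3+2 = j+5 := by ring
      have hg5 : j+3+1 = j+4 := by ring
      rw [hg1, hg2, hg3, hg4, hg5]
      omega

end GFD

open PowerSeries in
theorem gf_displacement_one_two
    (f : ℕ → ℕ)
    (hf : ∀ n, f n = Nat.card {π : Equiv.Perm (Fin n) //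
        ∀ i, ((π i : ℤ) - (i : ℤ) = 1 ∨ (π i : ℤ) - (i : ℤ) = 2 ∨
              (π i : ℤ) - (i : ℤ) = -1 ∨ (π i : ℤ) - (i : ℤ) = -2)}) :
    (PowerSeries.mk fun n => (f n : ℚ)) *
        (1 - X - X ^ 2 - X ^ 3 - X ^ 4 + X ^ 5) = 1 - X := by
  have hfa : ∀ n, f n = GFD.fA n := fun n => (hf n).trans (GFD.fA_link n).symm
  have h0 : f 0 = 1 := by rw [hfa 0, GFD.fA0]
  have h1 : f 1 = 0 := by rw [hfa 1, GFD.fA1]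
  have h2 : f 2 = 1 := by rw [hfa 2, GFD.fA2]
  have h3 : f 3 = 2 := by rw [hfa 3, GFD.fA3]
  have h4 : f 4 = 4 := by rw [hfa 4, GFD.fA4]
  have hrec : ∀ k, f (k+5) + f k = f (k+4) + f (k+3) + f (k+2) + f (k+1) := by
    intro k
    rw [hfa, hfa, hfa, hfa, hfa, hfa]
    exact GFD.T5 k
  apply PowerSeries.ext
  intro n
  have expand : (PowerSeries.mk fun n => (f n : ℚ)) *
        (1 - X - X ^ 2 - X ^ 3 - X ^ 4 + X ^ 5)
      = (PowerSeries.mk fun n => (f n : ℚ))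
        - (PowerSeries.mk fun n => (f n : ℚ)) * X ^ 1
        - (PowerSeries.mk fun n => (f n : ℚ)) * X ^ 2
        - (PowerSeries.mk fun n => (f n : ℚ)) * X ^ 3
        - (PowerSeries.mk fun n => (f n : ℚ)) * X ^ 4
        + (PowerSeries.mk fun n => (f n : ℚ)) * X ^ 5 := by ring
  rw [expand, show (1 - X : PowerSeries ℚ) = 1 - X ^ 1 by rw [pow_one]]
  simp only [map_sub, map_add, PowerSeries.coeff_mul_X_pow', PowerSeries.coeff_mk,
    PowerSeries.coeff_one, PowerSeries.coeff_X_pow]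
  rcases Nat.lt_or_ge n 5 with hn | hn
  · interval_cases n <;> norm_num [h0, h1, h2, h3, h4]
  · obtain ⟨k, rfl⟩ : ∃ k, n = k + 5 := ⟨n - 5, by omega⟩
    rw [if_pos (show 1 ≤ k+5 by omega), if_pos (show 2 ≤ k+5 by omega),
      if_pos (show 3 ≤ k+5 by omega), if_pos (show 4 ≤ k+5 by omega),
      if_pos (show 5 ≤ k+5 by omega), if_neg (show ¬(k+5 = 0) by omega),
      if_neg (show ¬(k+5 = 1) by omega)]
    simp only [show k+5-1 = k+4 by omega, show k+5-2 = k+3 by omega,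
      show k+5-3 = k+2 by omega, show k+5-4 = k+1 by omega, show k+5-5 = k by omega]
    have hc : (f (k+5) : ℚ) + (f k : ℚ)
        = (f (k+4) : ℚ) + (f (k+3) : ℚ) + (f (k+2) : ℚ) + (f (k+1) : ℚ) := by
      exact_mod_cast hrec k
    linarith
end
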